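/- arXiv:2107.01386 — 4 statements merged into one kernel-verified Lean document; each statement's English description precedes it below -/
import Mathlib

section
/- There exist constants C > 0 and δ₀ > 0 such that for every 0 < δ < δ₀ and every v ∈ S_δ(Ω), ‖v‖²_{L²(Ω)} ≤ C |v|²_{S_δ(Ω)} (nonlocal Poincaré inequality); in particular |·|_{S_δ(Ω)} is a norm on S_δ(Ω). -/
open MeasureTheory Metric Set Filter
open scoped ENNReal NNReal

set_option maxHeartbeats 2000000

noncomputable section

/-- Euclidean space ℝ^d. -/
abbrev Eu (d : ℕ) : Type := EuclideanSpace ℝ (Fin d)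

/-- The nonlocal boundary collar Ω_δ = {x ∉ Ω : dist(x, ∂Ω) < δ}. -/
def NLcollar (d : ℕ) (Ω : Set (Eu d)) (δ : ℝ) : Set (Eu d) :=
  {x | x ∉ Ω ∧ Metric.infDist x (frontier Ω) < δ}

/-- The extended domain Ω ∪ Ω_δ. -/
def NLdom (d : ℕ) (Ω : Set (Eu d)) (δ : ℝ) : Set (Eu d) := Ω ∪ NLcollar d Ω δ

/-- The rescaled kernel γ_δ(r) = δ^{-(d+2)} γ₁(r/δ). -/
def NLker (d : ℕ) (γ₁ : ℝ → ℝ) (δ r : ℝ) : ℝ := (δ ^ (d + 2))⁻¹ * γ₁ (r / δ)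

/-- The squared nonlocal energy seminorm |u|²_{S_δ(Ω)}. -/
def NLenergySq (d : ℕ) (Ω : Set (Eu d)) (γ₁ : ℝ → ℝ) (δ : ℝ) (u : Eu d → ℝ) : ℝ :=
  ∫ x in NLdom d Ω δ, ∫ y in NLdom d Ω δ, NLker d γ₁ δ (dist y x) * (u y - u x) ^ 2

/-- Membership in the nonlocal energy space S_δ(Ω): u ∈ L²(Ω∪Ω_δ), finite nonlocal
energy, and u = 0 a.e. on the collar Ω_δ. -/
def NLMemS (d : ℕ) (Ω : Set (Eu d)) (γ₁ : ℝ → ℝ) (δ : ℝ) (u : Eu d → ℝ) : Prop :=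
  MemLp u 2 (volume.restrict (NLdom d Ω δ)) ∧
  IntegrableOn
    (fun p : Eu d × Eu d => NLker d γ₁ δ (dist p.2 p.1) * (u p.2 - u p.1) ^ 2)
    (NLdom d Ω δ ×ˢ NLdom d Ω δ) ∧
  ∀ᵐ x ∂(volume.restrict (NLcollar d Ω δ)), u x = 0

/-- The bilinear form T_δ with coefficient A. -/
def NLTform (d : ℕ) (Ω : Set (Eu d)) (γ₁ : ℝ → ℝ) (δ : ℝ)
    (A : Eu d → Eu d → ℝ) (v w : Eu d → ℝ) : ℝ :=
  ∫ x in NLdom d Ω δ, ∫ y in NLdom d Ω δ,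
    A x y * NLker d γ₁ δ (dist x y) * (v y - v x) * (w y - w x)

lemma infDist_frontier_le {E : Type*} [NormedAddCommGroup E] [NormedSpace ℝ E] {Ω : Set E}
    (hop : IsOpen Ω) {x y : E} (hx : x ∈ Ω) (hy : y ∉ Ω) :
    Metric.infDist y (frontier Ω) ≤ dist y x := by
  set f : ℝ → E := fun t => x + t • (y - x) with hf
  have hfc : Continuous f := by fun_prop
  set A : Set ℝ := Icc (0:ℝ) 1 ∩ f ⁻¹' (closure Ω) with hA
  have hA0 : (0:ℝ) ∈ A := by
    constructor
    · exact ⟨le_refl 0, zero_le_one⟩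
    · simp only [mem_preimage, hf]; simpa using subset_closure hx
  have hAcl : IsClosed A := isClosed_Icc.inter (isClosed_closure.preimage hfc)
  have hAbdd : BddAbove A := BddAbove.mono (inter_subset_left) bddAbove_Icc
  set T := sSup A with hT
  have hTA : T ∈ A := hAcl.csSup_mem ⟨0, hA0⟩ hAbdd
  have hT0 : 0 ≤ T := le_csSup hAbdd hA0
  have hT1 : T ≤ 1 := hTA.1.2
  have hfront : f T ∈ frontier Ω := by
    rw [frontier, hop.interior_eq]
    refine ⟨hTA.2, ?_⟩
    intro hmem
    rcases eq_or_lt_of_le hT1 with h1 | h1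
    · apply hy
      have : f T = y := by
        show x + T • (y - x) = y
        rw [h1, one_smul]; abel
      rwa [this] at hmem
    · have hnb : f ⁻¹' Ω ∈ nhds T := hfc.continuousAt.preimage_mem_nhds (hop.mem_nhds hmem)
      rcases Metric.mem_nhds_iff.mp hnb with ⟨ε, hε, hball⟩
      set t := min 1 (T + ε/2) with ht
      have htA : t ∈ A := by
        constructor
        · exact ⟨le_trans hT0 (le_min h1.le (by linarith)), min_le_left _ _⟩
        · refine subset_closure (hball ?_)
          simp only [Metric.mem_ball, Real.dist_eq, ht]
          rw [abs_lt]
          constructor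
          · have : T ≤ min 1 (T + ε/2) := le_min h1.le (by linarith)
            linarith
          · have : min 1 (T + ε/2) ≤ T + ε/2 := min_le_right _ _
            linarith
      have : t ≤ T := le_csSup hAbdd htA
      have h2 : T < t := by
        rw [ht]; exact lt_min h1 (by linarith)
      linarith
  have hd : dist y (f T) ≤ dist y x := by
    have : y - f T = (1 - T) • (y - x) := by
      rw [hf]; simp; module
    rw [dist_eq_norm, this, norm_smul, dist_eq_norm]
    simp only [Real.norm_eq_abs, abs_of_nonneg (by linarith : (0:ℝ) ≤ 1 - T)]
    nlinarith [norm_nonneg (y - x)]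
  exact le_trans (Metric.infDist_le_dist_of_mem hfront) hd

lemma ae_prod_fst {α β : Type*} [MeasurableSpace α] [MeasurableSpace β]
    (μ : Measure α) (ν : Measure β) [SFinite μ] [SFinite ν] {P : α → Prop}
    (h : ∀ᵐ x ∂μ, P x) : ∀ᵐ p ∂(μ.prod ν), P p.1 := by
  rw [ae_iff] at h ⊢
  have hsub : {p : α × β | ¬ P p.1} ⊆ (toMeasurable μ {x | ¬ P x}) ×ˢ (univ : Set β) := by
    intro p hp
    exact ⟨subset_toMeasurable _ _ hp, mem_univ _⟩
  refine measure_mono_null hsub ?_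
  rw [Measure.prod_prod, measure_toMeasurable, h, zero_mul]

lemma ae_prod_snd {α β : Type*} [MeasurableSpace α] [MeasurableSpace β]
    (μ : Measure α) (ν : Measure β) [SFinite μ] [SFinite ν] {P : β → Prop}
    (h : ∀ᵐ y ∂ν, P y) : ∀ᵐ p ∂(μ.prod ν), P p.2 := by
  rw [ae_iff] at h ⊢
  have hsub : {p : α × β | ¬ P p.2} ⊆ (univ : Set α) ×ˢ (toMeasurable ν {y | ¬ P y}) := by
    intro p hp
    exact ⟨mem_univ _, subset_toMeasurable _ _ hp⟩
  refine measure_mono_null hsub ?_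
  rw [Measure.prod_prod, measure_toMeasurable, h, mul_zero]

lemma ae_add_right {G : Type*} [MeasurableSpace G] [AddGroup G] [MeasurableAdd G]
    {μ : Measure G} [μ.IsAddRightInvariant] {P : G → Prop}
    (h : ∀ᵐ x ∂μ, P x) (c : G) : ∀ᵐ x ∂μ, P (x + c) := by
  rw [ae_iff] at h ⊢
  have hsub : {x | ¬ P (x + c)} ⊆ (fun x => x + c) ⁻¹' (toMeasurable μ {x | ¬ P x}) :=
    fun x hx => subset_toMeasurable _ _ hx
  refine measure_mono_null hsub ?_
  rw [measure_preimage_add_right, measure_toMeasurable, h]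


/-- Nonlocal Poincaré inequality: there exist C > 0 and δ₀ > 0 such that for every
0 < δ < δ₀ and every v ∈ S_δ(Ω), ‖v‖²_{L²(Ω)} ≤ C |v|²_{S_δ(Ω)}. -/
theorem nonlocal_poincare
    (d : ℕ) (hd : 1 ≤ d) (Ω : Set (Eu d))
    (hΩopen : IsOpen Ω) (hΩbdd : Bornology.IsBounded Ω) (hΩne : Ω.Nonempty)
    (γ₁ : ℝ → ℝ) (hγ0 : ∀ r, 0 ≤ γ₁ r) (hγmono : AntitoneOn γ₁ (Ici 0))
    (hγsupp : ∀ r, 1 < r → γ₁ r = 0)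
    (hγnorm : (∫ z in ball (0 : Eu d) 1, γ₁ ‖z‖ * ‖z‖ ^ 2) = (d : ℝ)) :
    ∃ C > (0 : ℝ), ∃ δ₀ > (0 : ℝ), ∀ δ : ℝ, 0 < δ → δ < δ₀ →
      ∀ v : Eu d → ℝ, NLMemS d Ω γ₁ δ v →
        (∫ x in Ω, (v x) ^ 2) ≤ C * NLenergySq d Ω γ₁ δ v := by
  haveI : Nonempty (Fin d) := ⟨⟨0, hd⟩⟩
  haveI : Nontrivial (Eu d) := by
    apply nontrivial_of_ne (EuclideanSpace.single (⟨0, hd⟩ : Fin d) (1:ℝ)) 0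
    intro hcon
    have := congrArg (fun f => f ⟨0, hd⟩) hcon
    simp [EuclideanSpace.single_apply] at this
  -- γ₁ is bounded below near 0
  obtain ⟨r₀, hr₀0, hr₀1, hc₀⟩ : ∃ r₀, 0 < r₀ ∧ r₀ ≤ 1 ∧ 0 < γ₁ r₀ := by
    by_contra hcon
    push_neg at hcon
    have hzero : ∀ z : Eu d, γ₁ ‖z‖ * ‖z‖ ^ 2 = 0 := by
      intro z
      rcases eq_or_ne z 0 with rfl | hz
      · simp
      · have h1 : 0 < ‖z‖ := norm_pos_iff.mpr hz
        rcases le_or_gt ‖z‖ 1 with h2 | h2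
        · have h3 := hcon ‖z‖ h1 h2
          have h4 : γ₁ ‖z‖ = 0 := le_antisymm (not_lt.mp (fun hl => absurd hl (not_lt.mpr h3))) (hγ0 _)
          rw [h4]; ring
        · rw [hγsupp _ h2]; ring
    have : (∫ z in ball (0 : Eu d) 1, γ₁ ‖z‖ * ‖z‖ ^ 2) = 0 := by
      simp only [hzero, integral_zero]
    rw [this] at hγnorm
    have : (0:ℝ) < d := by exact_mod_cast hd
    linarith [hγnorm.symm]
  set c₀ := γ₁ r₀ with hc₀def
  have γlow : ∀ r, 0 ≤ r → r ≤ r₀ → c₀ ≤ γ₁ r := fun r h0 h1 =>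
    hγmono (mem_Ici.mpr h0) (mem_Ici.mpr (le_trans h0 h1)) h1
  obtain ⟨R, hR0, hRsub⟩ := hΩbdd.subset_ball_lt 0 0
  set b₁ : ℝ := (volume (ball (0 : Eu d) 1)).toReal with hb₁def
  have hB₁fin : volume (ball (0 : Eu d) 1) ≠ ⊤ := measure_ball_lt_top.ne
  have hB₁pos : (0:ℝ≥0∞) < volume (ball (0 : Eu d) 1) := measure_ball_pos _ _ one_pos
  have hb₁ : 0 < b₁ := ENNReal.toReal_pos hB₁pos.ne' hB₁fin
  set N' : ℝ := 8 * R / r₀ + 2 with hN'def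
  have hN'0 : 0 < N' := by positivity
  set C : ℝ := N' ^ 2 * 4 / c₀ * (4 / r₀) ^ d / b₁ with hCdef
  have hC : 0 < C := by positivity
  refine ⟨C, hC, 1, one_pos, ?_⟩
  intro δ hδ0 hδ1 v hv
  obtain ⟨hvL2, hvInt, hvΓ⟩ := hv
  set S := NLdom d Ω δ with hSdef
  set Γ := NLcollar d Ω δ with hΓdef
  have hΓmeas : MeasurableSet Γ :=
    (hΩopen.measurableSet.compl).inter
      (measurableSet_lt (Metric.continuous_infDist_pt _).measurable measurable_const)
  have hSmeas : MeasurableSet S := hΩopen.measurableSet.union hΓmeas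
  have hΩS : Ω ⊆ S := subset_union_left
  have hΓS : Γ ⊆ S := subset_union_right
  -- the geometric data
  set e : Eu d := EuclideanSpace.single (⟨0, hd⟩ : Fin d) (1:ℝ) with hedef
  have he : ‖e‖ = 1 := by rw [hedef, EuclideanSpace.norm_single]; norm_num
  set h : ℝ := r₀ * δ / 4 with hhdef
  have hh0 : 0 < h := by positivity
  have h2δ : 2 * h < δ := by
    rw [hhdef]; nlinarith
  set N : ℕ := ⌈2 * R / h⌉₊ + 1 with hNdef
  have hNh : 2 * R < N * h := by
    have h1 : 2 * R / h ≤ ⌈2 * R / h⌉₊ := Nat.le_ceil _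
    have h2 : (2 * R / h) * h ≤ (⌈2 * R / h⌉₊ : ℝ) * h := by
      apply mul_le_mul_of_nonneg_right h1 hh0.le
    rw [div_mul_cancel₀ _ hh0.ne'] at h2
    have : (N : ℝ) = (⌈2 * R / h⌉₊ : ℝ) + 1 := by rw [hNdef]; push_cast; ring
    nlinarith
  have hNbound : (N : ℝ) * δ ≤ N' := by
    have h1 : (⌈2 * R / h⌉₊ : ℝ) < 2 * R / h + 1 := Nat.ceil_lt_add_one (by positivity)
    have h2 : (N : ℝ) < 2 * R / h + 2 := by
      have : (N : ℝ) = (⌈2 * R / h⌉₊ : ℝ) + 1 := by rw [hNdef]; push_cast; ring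
      linarith
    have h3 : 2 * R / h = 8 * R / (r₀ * δ) := by
      rw [hhdef]; field_simp; ring
    have h4 : (N : ℝ) * δ < (8 * R / (r₀ * δ)) * δ + 2 * δ := by
      rw [← h3]; nlinarith
    have h5 : (8 * R / (r₀ * δ)) * δ = 8 * R / r₀ := by field_simp
    have h6 : 2 * δ ≤ 2 := by linarith
    rw [hN'def]; linarith
  -- measurable representative, extended by zero
  set w : Eu d → ℝ := S.indicator (hvL2.1.mk v) with hwdef
  have hwmeas : Measurable w := (hvL2.1.stronglyMeasurable_mk.measurable).indicator hSmeas
  have hwS : w =ᵐ[volume.restrict S] v := by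
    refine (indicator_ae_eq_restrict hSmeas).trans hvL2.1.ae_eq_mk.symm
  have hwS' : ∀ᵐ x : Eu d, x ∈ S → w x = v x := (ae_restrict_iff' hSmeas).mp hwS
  have hw0 : ∀ᵐ x : Eu d, w x ≠ 0 → x ∈ Ω := by
    have hΓ0 : ∀ᵐ x ∂(volume.restrict Γ), w x = 0 := by
      have h1 : w =ᵐ[volume.restrict Γ] v :=
        ae_restrict_of_ae_restrict_of_subset hΓS hwS
      exact h1.trans hvΓ
    have hΓ0' : ∀ᵐ x : Eu d, x ∈ Γ → w x = 0 := (ae_restrict_iff' hΓmeas).mp hΓ0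
    filter_upwards [hΓ0'] with x hx hwx
    by_cases hxS : x ∈ S
    · rcases hxS with hxΩ | hxΓ
      · exact hxΩ
      · exact absurd (hx hxΓ) hwx
    · exact absurd (Set.indicator_of_notMem hxS _) hwx
  have hshift : ∀ᵐ x : Eu d, ∀ k : ℕ,
      (w (x + (k:ℝ) • (h • e)) ≠ 0 → x + (k:ℝ) • (h • e) ∈ Ω) :=
    ae_all_iff.mpr fun k => ae_add_right hw0 ((k:ℝ) • (h • e))
  -- Step A : from v to w
  have hvInt2 : Integrable (fun x => v x ^ 2) (volume.restrict Ω) :=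
    (hvL2.integrable_sq).mono_measure (Measure.restrict_mono hΩS le_rfl)
  have stepA : ENNReal.ofReal (∫ x in Ω, v x ^ 2) ≤ ∫⁻ x, ENNReal.ofReal (w x ^ 2) := by
    rw [ofReal_integral_eq_lintegral_ofReal hvInt2 (Eventually.of_forall fun x => sq_nonneg _)]
    have h1 : ∫⁻ x in Ω, ENNReal.ofReal (v x ^ 2) = ∫⁻ x in Ω, ENNReal.ofReal (w x ^ 2) := by
      apply lintegral_congr_ae
      filter_upwards [ae_restrict_of_ae_restrict_of_subset hΩS hwS] with x hx
      rw [hx]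
    rw [h1]
    exact lintegral_mono' Measure.restrict_le_self le_rfl
  -- Step C : telescoping
  set T : ℝ≥0∞ := ∫⁻ x, ENNReal.ofReal ((w (x + h • e) - w x) ^ 2) with hTdef
  have stepC : ∫⁻ x, ENNReal.ofReal (w x ^ 2) ≤ (N : ℝ≥0∞) ^ 2 * T := by
    have hptwise : ∀ᵐ x : Eu d, ENNReal.ofReal (w x ^ 2) ≤
        (N : ℝ≥0∞) * ∑ k ∈ Finset.range N,
          ENNReal.ofReal ((w (x + ((k:ℝ)+1) • (h • e)) - w (x + (k:ℝ) • (h • e))) ^ 2) := by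
      filter_upwards [hshift] with x hx
      by_cases hwx : w x = 0
      · simp [hwx]
      · have hxΩ : x ∈ Ω := by
          have h0 := hx 0
          simp only [Nat.cast_zero, zero_smul, add_zero] at h0
          exact h0 hwx
        set f : ℕ → ℝ := fun k => w (x + (k:ℝ) • (h • e)) with hfdef
        have hf0 : f 0 = w x := by simp [hfdef]
        have hfN : f N = 0 := by
          by_contra hne
          have hmem : x + (N:ℝ) • (h • e) ∈ Ω := hx N hne
          have hx1 : ‖x‖ < R := mem_ball_zero_iff.mp (hRsub hxΩ)
          have hx2 : ‖x + (N:ℝ) • (h • e)‖ < R := mem_ball_zero_iff.mp (hRsub hmem)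
          have hnorm : ‖(N:ℝ) • (h • e)‖ = N * h := by
            rw [norm_smul, norm_smul, he, mul_one, Real.norm_natCast,
              Real.norm_eq_abs, abs_of_pos hh0]
          have htri : ‖(N:ℝ) • (h • e)‖ ≤ ‖x + (N:ℝ) • (h • e)‖ + ‖x‖ := by
            have := norm_add_le (x + (N:ℝ) • (h • e)) (-x)
            simpa using this
          rw [hnorm] at htri
          linarith
        have htel : ∑ k ∈ Finset.range N, (f (k+1) - f k) = f N - f 0 :=
          Finset.sum_range_sub f N
        have hsq : (w x) ^ 2 = (∑ k ∈ Finset.range N, (f (k+1) - f k)) ^ 2 := by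
          rw [htel, hfN, hf0]; ring
        have hCS : (∑ k ∈ Finset.range N, (f (k+1) - f k)) ^ 2 ≤
            (N:ℝ) * ∑ k ∈ Finset.range N, (f (k+1) - f k) ^ 2 := by
          have := sq_sum_le_card_mul_sum_sq (s := Finset.range N)
            (f := fun k => f (k+1) - f k)
          simpa using this
        have hle : (w x) ^ 2 ≤ (N:ℝ) * ∑ k ∈ Finset.range N, (f (k+1) - f k) ^ 2 := by
          rw [hsq]; exact hCS
        calc ENNReal.ofReal (w x ^ 2)
            ≤ ENNReal.ofReal ((N:ℝ) * ∑ k ∈ Finset.range N, (f (k+1) - f k) ^ 2) :=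
              ENNReal.ofReal_le_ofReal hle
          _ = (N : ℝ≥0∞) * ∑ k ∈ Finset.range N, ENNReal.ofReal ((f (k+1) - f k) ^ 2) := by
              rw [ENNReal.ofReal_mul (by positivity), ENNReal.ofReal_natCast,
                ENNReal.ofReal_sum_of_nonneg (fun i _ => sq_nonneg _)]
          _ = (N : ℝ≥0∞) * ∑ k ∈ Finset.range N,
              ENNReal.ofReal ((w (x + ((k:ℝ)+1) • (h • e)) - w (x + (k:ℝ) • (h • e))) ^ 2) := by
              congr 1
              apply Finset.sum_congr rfl
              intro k _
              have : ((k+1 : ℕ) : ℝ) = (k:ℝ) + 1 := by push_cast; ring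
              rw [hfdef]
              simp only [this]
    calc ∫⁻ x, ENNReal.ofReal (w x ^ 2)
        ≤ ∫⁻ x, (N : ℝ≥0∞) * ∑ k ∈ Finset.range N,
            ENNReal.ofReal ((w (x + ((k:ℝ)+1) • (h • e)) - w (x + (k:ℝ) • (h • e))) ^ 2) :=
          lintegral_mono_ae hptwise
      _ = (N : ℝ≥0∞) * ∫⁻ x, ∑ k ∈ Finset.range N,
            ENNReal.ofReal ((w (x + ((k:ℝ)+1) • (h • e)) - w (x + (k:ℝ) • (h • e))) ^ 2) :=
          lintegral_const_mul' _ _ (ENNReal.natCast_ne_top N)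
      _ = (N : ℝ≥0∞) * ∑ k ∈ Finset.range N, ∫⁻ x,
            ENNReal.ofReal ((w (x + ((k:ℝ)+1) • (h • e)) - w (x + (k:ℝ) • (h • e))) ^ 2) := by
          congr 1
          apply lintegral_finset_sum
          intro k _
          exact (((hwmeas.comp (measurable_add_const _)).sub
            (hwmeas.comp (measurable_add_const _))).pow_const 2).ennreal_ofReal
      _ = (N : ℝ≥0∞) * ∑ k ∈ Finset.range N, T := by
          congr 1
          apply Finset.sum_congr rfl
          intro k _
          have heq : ∀ x : Eu d, x + ((k:ℝ)+1) • (h • e) = (x + (k:ℝ) • (h • e)) + h • e := by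
            intro x; rw [add_smul, one_smul, add_assoc]
          simp_rw [heq]
          exact lintegral_add_right_eq_self
            (fun z => ENNReal.ofReal ((w (z + h • e) - w z) ^ 2)) ((k:ℝ) • (h • e))
      _ = (N : ℝ≥0∞) ^ 2 * T := by
          rw [Finset.sum_const, Finset.card_range, nsmul_eq_mul, ← mul_assoc, sq]
  -- Step D : averaging
  set B : ℝ≥0∞ := volume (ball (0 : Eu d) h) with hBdef
  set Dfun : Eu d × Eu d → ℝ≥0∞ := fun p =>
    if dist p.2 p.1 < 2 * h then ENNReal.ofReal ((w p.2 - w p.1) ^ 2) else 0 with hDfundef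
  have hdistmeas : ∀ c : ℝ, MeasurableSet {p : Eu d × Eu d | dist p.2 p.1 < c} := by
    intro c
    exact measurableSet_lt (continuous_snd.dist continuous_fst).measurable measurable_const
  have hw2meas : Measurable fun p : Eu d × Eu d => ENNReal.ofReal ((w p.2 - w p.1) ^ 2) :=
    (((hwmeas.comp measurable_snd).sub (hwmeas.comp measurable_fst)).pow_const 2).ennreal_ofReal
  have hDmeas : Measurable Dfun := Measurable.ite (hdistmeas (2*h)) hw2meas measurable_const
  set DD : ℝ≥0∞ := ∫⁻ p, Dfun p ∂((volume : Measure (Eu d)).prod volume) with hDDdef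
  set G1 : Eu d × Eu d → ℝ≥0∞ := fun p =>
    if dist p.2 p.1 < h then ENNReal.ofReal ((w (p.1 + h • e) - w p.2) ^ 2) else 0 with hG1def
  set G2 : Eu d × Eu d → ℝ≥0∞ := fun p =>
    if dist p.2 p.1 < h then ENNReal.ofReal ((w p.2 - w p.1) ^ 2) else 0 with hG2def
  have hG1meas : Measurable G1 := by
    apply Measurable.ite (hdistmeas h) _ measurable_const
    exact (((hwmeas.comp ((measurable_add_const (h • e)).comp measurable_fst)).sub
      (hwmeas.comp measurable_snd)).pow_const 2).ennreal_ofReal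
  have hG2meas : Measurable G2 := Measurable.ite (hdistmeas h) hw2meas measurable_const
  have stepD : T * B ≤ 4 * DD := by
    have hptD : ∀ x : Eu d, ENNReal.ofReal ((w (x + h • e) - w x) ^ 2) * B ≤
        ∫⁻ y, 2 * (G1 (x, y) + G2 (x, y)) := by
      intro x
      have hconst : ENNReal.ofReal ((w (x + h • e) - w x) ^ 2) * B =
          ∫⁻ y, (if dist y x < h then ENNReal.ofReal ((w (x + h • e) - w x) ^ 2) else 0) := by
        have heqi : (fun y => if dist y x < h then
            ENNReal.ofReal ((w (x + h • e) - w x) ^ 2) else 0) =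
            (ball x h).indicator (fun _ => ENNReal.ofReal ((w (x + h • e) - w x) ^ 2)) := by
          ext y
          by_cases hy : dist y x < h <;>
            simp [Set.indicator_apply, Metric.mem_ball, hy]
        rw [heqi, lintegral_indicator measurableSet_ball, setLIntegral_const,
          Measure.addHaar_ball_center]
      rw [hconst]
      apply lintegral_mono
      intro y
      by_cases hy : dist y x < h
      · simp only [hG1def, hG2def, if_pos hy]
        have hreal : (w (x + h • e) - w x) ^ 2 ≤
            2 * ((w (x + h • e) - w y) ^ 2 + (w y - w x) ^ 2) := by nlinarith [sq_nonneg ((w (x + h • e) - w y) + (w y - w x)), sq_nonneg ((w (x + h • e) - w y) - (w y - w x))]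
        calc ENNReal.ofReal ((w (x + h • e) - w x) ^ 2)
            ≤ ENNReal.ofReal (2 * ((w (x + h • e) - w y) ^ 2 + (w y - w x) ^ 2)) :=
              ENNReal.ofReal_le_ofReal hreal
          _ = 2 * (ENNReal.ofReal ((w (x + h • e) - w y) ^ 2) +
              ENNReal.ofReal ((w y - w x) ^ 2)) := by
              rw [ENNReal.ofReal_mul (by norm_num),
                ENNReal.ofReal_add (sq_nonneg _) (sq_nonneg _)]
              norm_num
      · simp [hG1def, hG2def, if_neg hy]
    have hTB : T * B ≤ ∫⁻ p, 2 * (G1 p + G2 p) ∂((volume : Measure (Eu d)).prod volume) := by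
      have h1 : T * B = ∫⁻ x, ENNReal.ofReal ((w (x + h • e) - w x) ^ 2) * B := by
        rw [hTdef]
        exact (lintegral_mul_const B (((hwmeas.comp (measurable_add_const _)).sub
          hwmeas).pow_const 2).ennreal_ofReal).symm
      rw [h1]
      have h2 : ∫⁻ p, 2 * (G1 p + G2 p) ∂((volume : Measure (Eu d)).prod volume) =
          ∫⁻ x, ∫⁻ y, 2 * (G1 (x, y) + G2 (x, y)) := by
        apply lintegral_prod
        exact ((hG1meas.add hG2meas).const_mul 2).aemeasurable
      rw [h2]
      exact lintegral_mono hptD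
    have hsplit : ∫⁻ p, 2 * (G1 p + G2 p) ∂((volume : Measure (Eu d)).prod volume) =
        2 * ((∫⁻ p, G1 p ∂((volume : Measure (Eu d)).prod volume)) +
          ∫⁻ p, G2 p ∂((volume : Measure (Eu d)).prod volume)) := by
      rw [lintegral_const_mul' _ _ (by norm_num : (2:ℝ≥0∞) ≠ ⊤),
        lintegral_add_left hG1meas]
    have hG2D : ∫⁻ p, G2 p ∂((volume : Measure (Eu d)).prod volume) ≤ DD := by
      apply lintegral_mono
      intro p
      by_cases hp : dist p.2 p.1 < h
      · have hp2 : dist p.2 p.1 < 2 * h := by linarith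
        simp only [hG2def, hDfundef, if_pos hp, if_pos hp2]
        exact le_refl _
      · simp [hG2def, if_neg hp]
    have hG1D : ∫⁻ p, G1 p ∂((volume : Measure (Eu d)).prod volume) ≤ DD := by
      have hΦ : MeasurePreserving (fun p : Eu d × Eu d => (p.1 + (-(h • e)), p.2))
          ((volume : Measure (Eu d)).prod volume) ((volume : Measure (Eu d)).prod volume) :=
        (measurePreserving_add_right volume (-(h • e))).prod (MeasurePreserving.id _)
      have h3 : ∫⁻ p, G1 p ∂((volume : Measure (Eu d)).prod volume) =
          ∫⁻ p, G1 (p.1 + (-(h • e)), p.2) ∂((volume : Measure (Eu d)).prod volume) :=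
        (hΦ.lintegral_comp hG1meas).symm
      rw [h3]
      apply lintegral_mono
      intro p
      by_cases hp : dist p.2 (p.1 + (-(h • e))) < h
      · have hd2 : dist p.2 p.1 < 2 * h := by
          have htri : dist p.2 p.1 ≤ dist p.2 (p.1 + (-(h • e))) + dist (p.1 + (-(h • e))) p.1 :=
            dist_triangle _ _ _
          have hdd : dist (p.1 + (-(h • e))) p.1 = h := by
            rw [dist_eq_norm]
            simp only [add_sub_cancel_left, norm_neg]
            rw [norm_smul, he, mul_one, Real.norm_eq_abs, abs_of_pos hh0]
          rw [hdd] at htri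
          linarith
        simp only [hG1def, hDfundef, if_pos hp, if_pos hd2]
        have : p.1 + (-(h • e)) + h • e = p.1 := by abel
        rw [this]
        apply ENNReal.ofReal_le_ofReal
        have : (w p.1 - w p.2) ^ 2 = (w p.2 - w p.1) ^ 2 := by ring
        rw [this]
      · simp [hG1def, if_neg hp]
    calc T * B ≤ ∫⁻ p, 2 * (G1 p + G2 p) ∂((volume : Measure (Eu d)).prod volume) := hTB
      _ = 2 * ((∫⁻ p, G1 p ∂((volume : Measure (Eu d)).prod volume)) +
          ∫⁻ p, G2 p ∂((volume : Measure (Eu d)).prod volume)) := hsplit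
      _ ≤ 2 * (DD + DD) := by
          apply mul_le_mul_right (add_le_add hG1D hG2D)
      _ = 4 * DD := by ring
  -- Step E/F : kernel lower bound and identification with the energy
  set KK : ℝ≥0∞ := ENNReal.ofReal (c₀⁻¹ * δ ^ (d + 2)) with hKKdef
  set Kw : Eu d × Eu d → ℝ≥0∞ := (S ×ˢ S).indicator
    (fun p => ENNReal.ofReal (NLker d γ₁ δ (dist p.2 p.1) * (w p.2 - w p.1) ^ 2)) with hKwdef
  set Kv : Eu d × Eu d → ℝ≥0∞ := (S ×ˢ S).indicator
    (fun p => ENNReal.ofReal (NLker d γ₁ δ (dist p.2 p.1) * (v p.2 - v p.1) ^ 2)) with hKvdef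
  have hδpow : (0:ℝ) < δ ^ (d + 2) := pow_pos hδ0 _
  have hKwKv : Kw =ᵐ[((volume : Measure (Eu d)).prod volume)] Kv := by
    filter_upwards [ae_prod_fst (volume : Measure (Eu d)) (volume : Measure (Eu d)) hwS',
      ae_prod_snd (volume : Measure (Eu d)) (volume : Measure (Eu d)) hwS'] with p h1 h2
    by_cases hp : p ∈ S ×ˢ S
    · rw [hKwdef, hKvdef, Set.indicator_of_mem hp, Set.indicator_of_mem hp,
        h1 hp.1, h2 hp.2]
    · rw [hKwdef, hKvdef, Set.indicator_of_notMem hp, Set.indicator_of_notMem hp]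
  have stepE : DD ≤ KK * ∫⁻ p, Kw p ∂((volume : Measure (Eu d)).prod volume) := by
    have hptwise : ∀ᵐ p ∂((volume : Measure (Eu d)).prod volume), Dfun p ≤ KK * Kw p := by
      filter_upwards [ae_prod_fst (volume : Measure (Eu d)) (volume : Measure (Eu d)) hw0,
        ae_prod_snd (volume : Measure (Eu d)) (volume : Measure (Eu d)) hw0] with p h1 h2
      by_cases hp : dist p.2 p.1 < 2 * h
      · by_cases hww : w p.2 = w p.1
        · simp only [hDfundef, if_pos hp, hww, sub_self]
          simp
        · have hmem : p ∈ S ×ˢ S := by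
            have hone : p.1 ∈ Ω ∨ p.2 ∈ Ω := by
              by_cases hz1 : w p.1 = 0
              · have hz2 : w p.2 ≠ 0 := by rw [hz1] at hww; exact hww
                exact Or.inr (h2 hz2)
              · exact Or.inl (h1 hz1)
            constructor
            · rcases hone with hΩ1 | hΩ2
              · exact hΩS hΩ1
              · by_cases hp1 : p.1 ∈ Ω
                · exact hΩS hp1
                · refine hΓS ⟨hp1, ?_⟩
                  have := infDist_frontier_le hΩopen hΩ2 hp1
                  rw [dist_comm] at hp
                  calc Metric.infDist p.1 (frontier Ω) ≤ dist p.1 p.2 := this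
                    _ < 2 * h := hp
                    _ < δ := h2δ
            · rcases hone with hΩ1 | hΩ2
              · by_cases hp2 : p.2 ∈ Ω
                · exact hΩS hp2
                · refine hΓS ⟨hp2, ?_⟩
                  have := infDist_frontier_le hΩopen hΩ1 hp2
                  calc Metric.infDist p.2 (frontier Ω) ≤ dist p.2 p.1 := this
                    _ < 2 * h := hp
                    _ < δ := h2δ
              · exact hΩS hΩ2
          have hklow : (δ ^ (d + 2))⁻¹ * c₀ ≤ NLker d γ₁ δ (dist p.2 p.1) := by
            have hdr : dist p.2 p.1 / δ ≤ r₀ := by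
              rw [div_le_iff₀ hδ0]
              have : 2 * h ≤ r₀ * δ := by rw [hhdef]; nlinarith
              linarith
            have hγ : c₀ ≤ γ₁ (dist p.2 p.1 / δ) :=
              γlow _ (div_nonneg dist_nonneg hδ0.le) hdr
            unfold NLker
            apply mul_le_mul_of_nonneg_left hγ (by positivity)
          have hreal : (w p.2 - w p.1) ^ 2 ≤
              (c₀⁻¹ * δ ^ (d + 2)) * (NLker d γ₁ δ (dist p.2 p.1) * (w p.2 - w p.1) ^ 2) := by
            have hsq : (0:ℝ) ≤ (w p.2 - w p.1) ^ 2 := sq_nonneg _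
            have h4 : (δ ^ (d + 2))⁻¹ * c₀ * (w p.2 - w p.1) ^ 2 ≤
                NLker d γ₁ δ (dist p.2 p.1) * (w p.2 - w p.1) ^ 2 :=
              mul_le_mul_of_nonneg_right hklow hsq
            have h5 : (c₀⁻¹ * δ ^ (d + 2)) * ((δ ^ (d + 2))⁻¹ * c₀ * (w p.2 - w p.1) ^ 2) =
                (w p.2 - w p.1) ^ 2 := by
              field_simp
            calc (w p.2 - w p.1) ^ 2
                = (c₀⁻¹ * δ ^ (d + 2)) * ((δ ^ (d + 2))⁻¹ * c₀ * (w p.2 - w p.1) ^ 2) := h5.symm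
              _ ≤ (c₀⁻¹ * δ ^ (d + 2)) * (NLker d γ₁ δ (dist p.2 p.1) * (w p.2 - w p.1) ^ 2) :=
                  mul_le_mul_of_nonneg_left h4 (by positivity)
          calc Dfun p = ENNReal.ofReal ((w p.2 - w p.1) ^ 2) := by
                simp only [hDfundef, if_pos hp]
            _ ≤ ENNReal.ofReal ((c₀⁻¹ * δ ^ (d + 2)) *
                (NLker d γ₁ δ (dist p.2 p.1) * (w p.2 - w p.1) ^ 2)) :=
                ENNReal.ofReal_le_ofReal hreal
            _ = KK * ENNReal.ofReal (NLker d γ₁ δ (dist p.2 p.1) * (w p.2 - w p.1) ^ 2) := by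
                rw [hKKdef, ENNReal.ofReal_mul (by positivity)]
            _ = KK * Kw p := by rw [hKwdef, Set.indicator_of_mem hmem]
      · simp only [hDfundef, if_neg hp]
        exact zero_le
    calc DD ≤ ∫⁻ p, KK * Kw p ∂((volume : Measure (Eu d)).prod volume) :=
        lintegral_mono_ae hptwise
      _ = KK * ∫⁻ p, Kw p ∂((volume : Measure (Eu d)).prod volume) :=
        lintegral_const_mul' _ _ ENNReal.ofReal_ne_top
  have hEnonneg0 : ∀ p : Eu d × Eu d, 0 ≤ NLker d γ₁ δ (dist p.2 p.1) * (v p.2 - v p.1) ^ 2 := by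
    intro p
    apply mul_nonneg _ (sq_nonneg _)
    unfold NLker
    exact mul_nonneg (by positivity) (hγ0 _)
  have hvInt' : Integrable (fun p : Eu d × Eu d =>
      NLker d γ₁ δ (dist p.2 p.1) * (v p.2 - v p.1) ^ 2)
      (((volume : Measure (Eu d)).restrict S).prod ((volume : Measure (Eu d)).restrict S)) := by
    have := hvInt
    unfold IntegrableOn at this
    rw [Measure.volume_eq_prod, ← Measure.prod_restrict] at this
    exact this
  have stepF : ∫⁻ p, Kv p ∂((volume : Measure (Eu d)).prod volume) =
      ENNReal.ofReal (NLenergySq d Ω γ₁ δ v) := by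
    rw [hKvdef, lintegral_indicator (hSmeas.prod hSmeas), ← Measure.prod_restrict]
    rw [← ofReal_integral_eq_lintegral_ofReal hvInt'
      (Eventually.of_forall hEnonneg0)]
    congr 1
    rw [MeasureTheory.integral_prod _ hvInt']
    rfl
  have stepG : 0 ≤ NLenergySq d Ω γ₁ δ v := by
    have h1 : NLenergySq d Ω γ₁ δ v = ∫ p, (NLker d γ₁ δ (dist p.2 p.1) * (v p.2 - v p.1) ^ 2)
        ∂(((volume : Measure (Eu d)).restrict S).prod ((volume : Measure (Eu d)).restrict S)) := by
      rw [MeasureTheory.integral_prod _ hvInt']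
      rfl
    rw [h1]
    exact integral_nonneg hEnonneg0
  -- final assembly
  have hEnn : ∫⁻ p, Kw p ∂((volume : Measure (Eu d)).prod volume) =
      ENNReal.ofReal (NLenergySq d Ω γ₁ δ v) := by
    rw [lintegral_congr_ae hKwKv, stepF]
  have hBfin : B ≠ ⊤ := measure_ball_lt_top.ne
  have hB0 : B ≠ 0 := (measure_ball_pos _ _ hh0).ne'
  have hBeq : B = ENNReal.ofReal (h ^ d * b₁) := by
    rw [hBdef, Measure.addHaar_ball (volume : Measure (Eu d)) (0 : Eu d) hh0.le, finrank_euclideanSpace_fin,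
      ENNReal.ofReal_mul (by positivity)]
    congr 1
    exact (ENNReal.ofReal_toReal hB₁fin).symm
  have hkey : (N : ℝ≥0∞) ^ 2 * 4 * KK ≤ ENNReal.ofReal (C * (h ^ d * b₁)) := by
    have h4 : ENNReal.ofReal ((N : ℝ) ^ 2 * 4) = (N : ℝ≥0∞) ^ 2 * 4 := by
      rw [ENNReal.ofReal_mul (by positivity), ENNReal.ofReal_pow (by positivity),
        ENNReal.ofReal_natCast, ENNReal.ofReal_ofNat]
    have hLHS : (N : ℝ≥0∞) ^ 2 * 4 * KK =
        ENNReal.ofReal ((N : ℝ) ^ 2 * 4 * (c₀⁻¹ * δ ^ (d + 2))) := by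
      rw [hKKdef, ← h4, ← ENNReal.ofReal_mul (by positivity)]
    rw [hLHS]
    apply ENNReal.ofReal_le_ofReal
    have e2 : C * (h ^ d * b₁) = N' ^ 2 * 4 * (c₀⁻¹ * δ ^ d) := by
      rw [hCdef, hhdef, show (r₀ * δ / 4 : ℝ) = (r₀ / 4) * δ from by ring, mul_pow]
      field_simp
      ring_nf
      rw [← mul_pow, ← mul_pow, ← mul_pow, mul_inv_cancel₀ hr₀0.ne']; norm_num
    have e1 : (N : ℝ) ^ 2 * 4 * (c₀⁻¹ * δ ^ (d + 2)) =
        ((N : ℝ) * δ) ^ 2 * (4 * (c₀⁻¹ * δ ^ d)) := by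
      rw [pow_add]; ring
    rw [e1, e2]
    have h1 : ((N : ℝ) * δ) ^ 2 ≤ N' ^ 2 :=
      pow_le_pow_left₀ (by positivity) hNbound 2
    calc ((N : ℝ) * δ) ^ 2 * (4 * (c₀⁻¹ * δ ^ d))
        ≤ N' ^ 2 * (4 * (c₀⁻¹ * δ ^ d)) :=
          mul_le_mul_of_nonneg_right h1 (by positivity)
      _ = N' ^ 2 * 4 * (c₀⁻¹ * δ ^ d) := by ring
  have hmain : ENNReal.ofReal (∫ x in Ω, v x ^ 2) * B ≤
      ENNReal.ofReal (C * NLenergySq d Ω γ₁ δ v) * B := by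
    have stepE' : DD ≤ KK * ENNReal.ofReal (NLenergySq d Ω γ₁ δ v) := by
      rw [← hEnn]; exact stepE
    calc ENNReal.ofReal (∫ x in Ω, v x ^ 2) * B
        ≤ ((N : ℝ≥0∞) ^ 2 * T) * B := mul_le_mul_left (stepA.trans stepC) B
      _ = (N : ℝ≥0∞) ^ 2 * (T * B) := by ring
      _ ≤ (N : ℝ≥0∞) ^ 2 * (4 * DD) := mul_le_mul_right stepD _
      _ ≤ (N : ℝ≥0∞) ^ 2 * (4 * (KK * ENNReal.ofReal (NLenergySq d Ω γ₁ δ v))) :=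
          mul_le_mul_right (mul_le_mul_right stepE' 4) _
      _ = ((N : ℝ≥0∞) ^ 2 * 4 * KK) * ENNReal.ofReal (NLenergySq d Ω γ₁ δ v) := by ring
      _ ≤ ENNReal.ofReal (C * (h ^ d * b₁)) * ENNReal.ofReal (NLenergySq d Ω γ₁ δ v) :=
          mul_le_mul_left hkey _
      _ = ENNReal.ofReal (C * NLenergySq d Ω γ₁ δ v) * ENNReal.ofReal (h ^ d * b₁) := by
          rw [← ENNReal.ofReal_mul (by positivity),
            show C * (h ^ d * b₁) * NLenergySq d Ω γ₁ δ v =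
              C * NLenergySq d Ω γ₁ δ v * (h ^ d * b₁) from by ring,
            ENNReal.ofReal_mul (mul_nonneg hC.le stepG)]
      _ = ENNReal.ofReal (C * NLenergySq d Ω γ₁ δ v) * B := by rw [hBeq]
  have hfin : ENNReal.ofReal (∫ x in Ω, v x ^ 2) ≤
      ENNReal.ofReal (C * NLenergySq d Ω γ₁ δ v) :=
    (ENNReal.mul_le_mul_iff_left hB0 hBfin).mp hmain
  exact (ENNReal.ofReal_le_ofReal_iff (mul_nonneg hC.le stepG)).mp hfin
end
end

section
/- Let A and Ã be two measurable symmetric coefficients on (Ω∪Ω_δ)² both satisfying 0 < r ≤ A, Ã ≤ R < ∞ a.e., and let T_δ^A and T_δ^Ã be the corresponding bilinear forms. Let f be a linear functional on S_δ(Ω) with |⟨f, v⟩| ≤ M |v|_{S_δ(Ω)} for all v ∈ S_δ(Ω). If u, ũ ∈ S_δ(Ω) satisfy T_δ^A[u, v] = ⟨f, v⟩ and T_δ^Ã[ũ, v] = ⟨f, v⟩ for all v ∈ S_δ(Ω), then |u − ũ|_{S_δ(Ω)} ≤ ‖A − Ã‖_{L^∞((Ω∪Ω_δ)²)} · M / r²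 (stability of the solution with respect to the diffusion coefficient). -/
open MeasureTheory Metric Set Filter

noncomputable section

private lemma NLker_nonneg {d : ℕ} {γ₁ : ℝ → ℝ} {δ : ℝ} (hγ0 : ∀ r, 0 ≤ γ₁ r) (hδ : 0 < δ)
    (t : ℝ) : 0 ≤ NLker d γ₁ δ t :=
  mul_nonneg (inv_nonneg.2 (by positivity)) (hγ0 _)

private lemma NLker_meas {d : ℕ} {γ₁ : ℝ → ℝ} {δ : ℝ} (hγmono : AntitoneOn γ₁ (Ici 0))
    (hδ : 0 < δ) :
    Measurable fun p : Eu d × Eu d => NLker d γ₁ δ (dist p.2 p.1) := by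
  have hanti : Antitone fun t : ℝ => γ₁ (max t 0) := fun a b hab =>
    hγmono (Set.mem_Ici.2 (le_max_right a 0)) (Set.mem_Ici.2 (le_max_right b 0))
      (max_le_max hab le_rfl)
  have heq : (fun p : Eu d × Eu d => NLker d γ₁ δ (dist p.2 p.1))
      = fun p => (δ ^ (d + 2) : ℝ)⁻¹ * γ₁ (max (dist p.2 p.1 / δ) 0) := by
    funext p
    rw [NLker, max_eq_left (div_nonneg dist_nonneg hδ.le)]
  rw [heq]
  exact (hanti.measurable.comp
    (((continuous_snd.dist continuous_fst).measurable).div_const δ)).const_mul _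

private lemma NLenergySq_nonneg {d : ℕ} {Ω : Set (Eu d)} {γ₁ : ℝ → ℝ} {δ : ℝ}
    (hγ0 : ∀ r, 0 ≤ γ₁ r) (hδ : 0 < δ) (v : Eu d → ℝ) : 0 ≤ NLenergySq d Ω γ₁ δ v :=
  integral_nonneg fun _ => integral_nonneg fun _ =>
    mul_nonneg (NLker_nonneg hγ0 hδ _) (sq_nonneg _)

private lemma NLTform_eq_prod {d : ℕ} {Ω : Set (Eu d)} {γ₁ : ℝ → ℝ} {δ : ℝ}
    (B : Eu d → Eu d → ℝ) (v w : Eu d → ℝ)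
    (hI : Integrable
      (fun p : Eu d × Eu d =>
        B p.1 p.2 * NLker d γ₁ δ (dist p.2 p.1) * (v p.2 - v p.1) * (w p.2 - w p.1))
      ((volume.restrict (NLdom d Ω δ)).prod (volume.restrict (NLdom d Ω δ)))) :
    NLTform d Ω γ₁ δ B v w =
      ∫ p, B p.1 p.2 * NLker d γ₁ δ (dist p.2 p.1) * (v p.2 - v p.1) * (w p.2 - w p.1)
        ∂((volume.restrict (NLdom d Ω δ)).prod (volume.restrict (NLdom d Ω δ))) := by
  simp only [NLTform]
  have h1 : (∫ x in NLdom d Ω δ, ∫ y in NLdom d Ω δ,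
        B x y * NLker d γ₁ δ (dist x y) * (v y - v x) * (w y - w x))
      = ∫ x in NLdom d Ω δ, ∫ y in NLdom d Ω δ,
        B x y * NLker d γ₁ δ (dist y x) * (v y - v x) * (w y - w x) := by
    refine integral_congr_ae (Eventually.of_forall fun x => ?_)
    refine integral_congr_ae (Eventually.of_forall fun y => ?_)
    simp only [dist_comm x y]
  rw [h1]
  exact integral_integral hI

private lemma NLenergySq_eq_prod {d : ℕ} {Ω : Set (Eu d)} {γ₁ : ℝ → ℝ} {δ : ℝ}
    (v : Eu d → ℝ)
    (hI : Integrable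
      (fun p : Eu d × Eu d => NLker d γ₁ δ (dist p.2 p.1) * (v p.2 - v p.1) ^ 2)
      ((volume.restrict (NLdom d Ω δ)).prod (volume.restrict (NLdom d Ω δ)))) :
    NLenergySq d Ω γ₁ δ v =
      ∫ p, NLker d γ₁ δ (dist p.2 p.1) * (v p.2 - v p.1) ^ 2
        ∂((volume.restrict (NLdom d Ω δ)).prod (volume.restrict (NLdom d Ω δ))) := by
  simp only [NLenergySq]
  exact integral_integral hI

set_option maxHeartbeats 1600000

/-- Stability of the nonlocal solution with respect to the diffusion coefficient:
if u and ũ solve the nonlocal problem with the same right-hand side f and coefficients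
A and Ã respectively, then |u − ũ|_{S_δ(Ω)} ≤ ‖A − Ã‖_{L^∞} M / r². -/
theorem nonlocal_stability
    (d : ℕ) (hd : 1 ≤ d) (Ω : Set (Eu d))
    (hΩopen : IsOpen Ω) (hΩbdd : Bornology.IsBounded Ω) (hΩne : Ω.Nonempty)
    (γ₁ : ℝ → ℝ) (hγ0 : ∀ r, 0 ≤ γ₁ r) (hγmono : AntitoneOn γ₁ (Ici 0))
    (hγsupp : ∀ r, 1 < r → γ₁ r = 0)
    (hγnorm : (∫ z in ball (0 : Eu d) 1, γ₁ ‖z‖ * ‖z‖ ^ 2) = (d : ℝ))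
    (δ : ℝ) (hδ : 0 < δ)
    (A A' : Eu d → Eu d → ℝ)
    (hAmeas : Measurable fun p : Eu d × Eu d => A p.1 p.2)
    (hA'meas : Measurable fun p : Eu d × Eu d => A' p.1 p.2)
    (hAsym : ∀ x y, A x y = A y x) (hA'sym : ∀ x y, A' x y = A' y x)
    (r R : ℝ) (hr : 0 < r)
    (hAbd : ∀ᵐ p ∂(volume.restrict (NLdom d Ω δ ×ˢ NLdom d Ω δ)),
      (r ≤ A p.1 p.2 ∧ A p.1 p.2 ≤ R) ∧ (r ≤ A' p.1 p.2 ∧ A' p.1 p.2 ≤ R))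
    (F : (Eu d → ℝ) → ℝ)
    (hFadd : ∀ v w : Eu d → ℝ, F (v + w) = F v + F w)
    (hFsmul : ∀ (c : ℝ) (v : Eu d → ℝ), F (c • v) = c * F v)
    (M : ℝ) (hM0 : 0 ≤ M)
    (hFbd : ∀ v : Eu d → ℝ, NLMemS d Ω γ₁ δ v →
      |F v| ≤ M * Real.sqrt (NLenergySq d Ω γ₁ δ v))
    (u u' : Eu d → ℝ) (huS : NLMemS d Ω γ₁ δ u) (hu'S : NLMemS d Ω γ₁ δ u')
    (hsol : ∀ v : Eu d → ℝ, NLMemS d Ω γ₁ δ v → NLTform d Ω γ₁ δ A u v = F v)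
    (hsol' : ∀ v : Eu d → ℝ, NLMemS d Ω γ₁ δ v → NLTform d Ω γ₁ δ A' u' v = F v) :
    Real.sqrt (NLenergySq d Ω γ₁ δ (fun x => u x - u' x)) ≤
      (eLpNorm (fun p : Eu d × Eu d => A p.1 p.2 - A' p.1 p.2) ⊤
        (volume.restrict (NLdom d Ω δ ×ˢ NLdom d Ω δ))).toReal * M / r ^ 2 := by
  classical
  have hrestr : (volume : Measure (Eu d × Eu d)).restrict (NLdom d Ω δ ×ˢ NLdom d Ω δ)
      = (volume.restrict (NLdom d Ω δ)).prod (volume.restrict (NLdom d Ω δ)) := by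
    rw [Measure.prod_restrict, ← Measure.volume_eq_prod]
  rw [hrestr] at hAbd ⊢
  set P : Measure (Eu d × Eu d) :=
    (volume.restrict (NLdom d Ω δ)).prod (volume.restrict (NLdom d Ω δ)) with hP
  set w : Eu d → ℝ := fun x => u x - u' x with hwdef
  set K : Eu d × Eu d → ℝ := fun p => NLker d γ₁ δ (dist p.2 p.1) with hK
  have hk0 : ∀ p : Eu d × Eu d, 0 ≤ K p := fun p => NLker_nonneg hγ0 hδ _
  have hkm : Measurable K := NLker_meas hγmono hδ
  -- a.e. strong measurability of the difference quotients
  have hmu : AEStronglyMeasurable u (volume.restrict (NLdom d Ω δ)) :=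
    huS.1.aestronglyMeasurable
  have hmu' : AEStronglyMeasurable u' (volume.restrict (NLdom d Ω δ)) :=
    hu'S.1.aestronglyMeasurable
  have hDu : AEStronglyMeasurable (fun p : Eu d × Eu d => u p.2 - u p.1) P :=
    hmu.comp_snd.sub hmu.comp_fst
  have hDu' : AEStronglyMeasurable (fun p : Eu d × Eu d => u' p.2 - u' p.1) P :=
    hmu'.comp_snd.sub hmu'.comp_fst
  have hDw : AEStronglyMeasurable (fun p : Eu d × Eu d => w p.2 - w p.1) P :=
    (hmu.sub hmu').comp_snd.sub ((hmu.sub hmu').comp_fst)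
  -- integrability of the three energies
  have huI : Integrable (fun p : Eu d × Eu d => K p * (u p.2 - u p.1) ^ 2) P := by
    have h := huS.2.1
    rwa [IntegrableOn, hrestr] at h
  have hu'I : Integrable (fun p : Eu d × Eu d => K p * (u' p.2 - u' p.1) ^ 2) P := by
    have h := hu'S.2.1
    rwa [IntegrableOn, hrestr] at h
  have hwI : Integrable (fun p : Eu d × Eu d => K p * (w p.2 - w p.1) ^ 2) P := by
    refine Integrable.mono' ((huI.const_mul 2).add (hu'I.const_mul 2))
      (hkm.aestronglyMeasurable.mul (hDw.pow 2)) (Eventually.of_forall fun p => ?_)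
    have h2 : (w p.2 - w p.1) ^ 2 ≤ 2 * (u p.2 - u p.1) ^ 2 + 2 * (u' p.2 - u' p.1) ^ 2 := by
      have he : w p.2 - w p.1 = (u p.2 - u p.1) - (u' p.2 - u' p.1) := by
        simp only [hwdef]; ring
      rw [he]; nlinarith [sq_nonneg ((u p.2 - u p.1) + (u' p.2 - u' p.1))]
    rw [Real.norm_eq_abs, abs_of_nonneg (mul_nonneg (hk0 p) (sq_nonneg _))]
    calc K p * (w p.2 - w p.1) ^ 2
        ≤ K p * (2 * (u p.2 - u p.1) ^ 2 + 2 * (u' p.2 - u' p.1) ^ 2) :=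
          mul_le_mul_of_nonneg_left h2 (hk0 p)
      _ = 2 * (K p * (u p.2 - u p.1) ^ 2) + 2 * (K p * (u' p.2 - u' p.1) ^ 2) := by ring
  -- w belongs to the energy space
  have hwS : NLMemS d Ω γ₁ δ w := by
    refine ⟨huS.1.sub hu'S.1, ?_, ?_⟩
    · rw [IntegrableOn, hrestr]; exact hwI
    · filter_upwards [huS.2.2, hu'S.2.2] with x h1 h2
      simp only [hwdef, h1, h2, sub_zero]
  -- energies as product integrals
  have hEu' : NLenergySq d Ω γ₁ δ u'
      = ∫ p, K p * (u' p.2 - u' p.1) ^ 2 ∂P := NLenergySq_eq_prod u' hu'I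
  have hEw : NLenergySq d Ω γ₁ δ w
      = ∫ p, K p * (w p.2 - w p.1) ^ 2 ∂P := NLenergySq_eq_prod w hwI
  have hE'0 : 0 ≤ NLenergySq d Ω γ₁ δ u' := NLenergySq_nonneg hγ0 hδ u'
  have hEw0 : 0 ≤ NLenergySq d Ω γ₁ δ w := NLenergySq_nonneg hγ0 hδ w
  -- integrability of form integrands
  have hformI : ∀ (B : Eu d → Eu d → ℝ) (C : ℝ),
      AEStronglyMeasurable (fun p : Eu d × Eu d => B p.1 p.2) P →
      (∀ᵐ p ∂P, |B p.1 p.2| ≤ C) →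
      ∀ (v v' : Eu d → ℝ),
        AEStronglyMeasurable (fun p : Eu d × Eu d => v p.2 - v p.1) P →
        AEStronglyMeasurable (fun p : Eu d × Eu d => v' p.2 - v' p.1) P →
        Integrable (fun p : Eu d × Eu d => K p * (v p.2 - v p.1) ^ 2) P →
        Integrable (fun p : Eu d × Eu d => K p * (v' p.2 - v' p.1) ^ 2) P →
        Integrable
          (fun p : Eu d × Eu d => B p.1 p.2 * K p * (v p.2 - v p.1) * (v' p.2 - v' p.1)) P := by
    intro B C hBm hBbd v v' hv hv' hvI hv'I
    refine Integrable.mono' ((hvI.const_mul (|C| / 2)).add (hv'I.const_mul (|C| / 2)))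
      (((hBm.mul hkm.aestronglyMeasurable).mul hv).mul hv') ?_
    filter_upwards [hBbd] with p hBp
    have hk := hk0 p
    have h1 : |B p.1 p.2 * K p * (v p.2 - v p.1) * (v' p.2 - v' p.1)|
        = |B p.1 p.2| * (K p * (|v p.2 - v p.1| * |v' p.2 - v' p.1|)) := by
      rw [abs_mul, abs_mul, abs_mul, abs_of_nonneg hk]; ring
    have h3 : |B p.1 p.2| ≤ |C| := hBp.trans (le_abs_self C)
    have h4 : 0 ≤ K p * (|v p.2 - v p.1| * |v' p.2 - v' p.1|) :=
      mul_nonneg hk (mul_nonneg (abs_nonneg _) (abs_nonneg _))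
    rw [Real.norm_eq_abs, h1]
    have h2 : K p * (|v p.2 - v p.1| * |v' p.2 - v' p.1|) * 2
        ≤ K p * (v p.2 - v p.1) ^ 2 + K p * (v' p.2 - v' p.1) ^ 2 := by
      nlinarith [mul_nonneg hk (sq_nonneg (|v p.2 - v p.1| - |v' p.2 - v' p.1|)),
        sq_abs (v p.2 - v p.1), sq_abs (v' p.2 - v' p.1)]
    calc |B p.1 p.2| * (K p * (|v p.2 - v p.1| * |v' p.2 - v' p.1|))
        ≤ |C| * (K p * (|v p.2 - v p.1| * |v' p.2 - v' p.1|)) :=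
          mul_le_mul_of_nonneg_right h3 h4
      _ ≤ |C| / 2 * (K p * (v p.2 - v p.1) ^ 2) + |C| / 2 * (K p * (v' p.2 - v' p.1) ^ 2) := by
          nlinarith [mul_le_mul_of_nonneg_left h2 (abs_nonneg C)]
  -- a.e. bounds on the coefficients
  have hAabs : ∀ᵐ p ∂P, |A p.1 p.2| ≤ R := by
    filter_upwards [hAbd] with p hp
    rw [abs_of_nonneg (le_trans hr.le hp.1.1)]; exact hp.1.2
  have hA'abs : ∀ᵐ p ∂P, |A' p.1 p.2| ≤ R := by
    filter_upwards [hAbd] with p hp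
    rw [abs_of_nonneg (le_trans hr.le hp.2.1)]; exact hp.2.2
  -- integrable form integrands
  have hI_Auw := hformI A R hAmeas.aestronglyMeasurable hAabs u w hDu hDw huI hwI
  have hI_Au'w := hformI A R hAmeas.aestronglyMeasurable hAabs u' w hDu' hDw hu'I hwI
  have hI_A'u'w := hformI A' R hA'meas.aestronglyMeasurable hA'abs u' w hDu' hDw hu'I hwI
  have hI_A'u'u' := hformI A' R hA'meas.aestronglyMeasurable hA'abs u' u' hDu' hDu' hu'I hu'I
  have hI_Aww := hformI A R hAmeas.aestronglyMeasurable hAabs w w hDw hDw hwI hwI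
  have hI_diff : Integrable
      (fun p : Eu d × Eu d =>
        (A' p.1 p.2 - A p.1 p.2) * K p * (u' p.2 - u' p.1) * (w p.2 - w p.1)) P :=
    hformI (fun x y => A' x y - A x y) (2 * R)
      (hA'meas.aestronglyMeasurable.sub hAmeas.aestronglyMeasurable)
      (by filter_upwards [hAbd] with p hp
          have := hp.1.1; have := hp.1.2; have := hp.2.1; have := hp.2.2
          rw [abs_sub_le_iff]; constructor <;> nlinarith)
      u' w hDu' hDw hu'I hwI
  -- the L^∞ norm of the coefficient difference
  set G : Eu d × Eu d → ℝ := fun p => A p.1 p.2 - A' p.1 p.2 with hGdef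
  set ε : ℝ := (eLpNorm G ⊤ P).toReal with hε
  have hε0 : 0 ≤ ε := ENNReal.toReal_nonneg
  have hGbd : ∀ᵐ p ∂P, ‖G p‖ ≤ R - r := by
    filter_upwards [hAbd] with p hp
    have := hp.1.1; have := hp.1.2; have := hp.2.1; have := hp.2.2
    rw [Real.norm_eq_abs, hGdef, abs_sub_le_iff]; constructor <;> linarith
  have hGfin : eLpNormEssSup G P ≠ ⊤ := (eLpNormEssSup_lt_top_of_ae_bound hGbd).ne
  have hεbd : ∀ᵐ p ∂P, |G p| ≤ ε := by
    filter_upwards [enorm_ae_le_eLpNormEssSup G P] with p hp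
    have h := ENNReal.toReal_mono hGfin hp
    rw [enorm_eq_nnnorm, ENNReal.coe_toReal, coe_nnnorm, Real.norm_eq_abs] at h
    rw [hε, eLpNorm_exponent_top]
    exact h
  -- coercivity for u' : r * E(u') ≤ T^{A'}[u',u']
  have hcoer' : r * NLenergySq d Ω γ₁ δ u'
      ≤ ∫ p, A' p.1 p.2 * K p * (u' p.2 - u' p.1) * (u' p.2 - u' p.1) ∂P := by
    rw [hEu', ← integral_const_mul]
    refine integral_mono_ae (hu'I.const_mul r) hI_A'u'u' ?_
    filter_upwards [hAbd] with p hp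
    have h5 : A' p.1 p.2 * K p * (u' p.2 - u' p.1) * (u' p.2 - u' p.1)
        = A' p.1 p.2 * (K p * (u' p.2 - u' p.1) ^ 2) := by ring
    rw [h5]
    exact mul_le_mul_of_nonneg_right hp.2.1 (mul_nonneg (hk0 p) (sq_nonneg _))
  -- |u'| ≤ M / r
  have hsqrtE' : Real.sqrt (NLenergySq d Ω γ₁ δ u') ≤ M / r := by
    have hval : (∫ p, A' p.1 p.2 * K p * (u' p.2 - u' p.1) * (u' p.2 - u' p.1) ∂P) = F u' := by
      rw [← NLTform_eq_prod A' u' u' hI_A'u'u']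
      exact hsol' u' hu'S
    have hFu' := hFbd u' hu'S
    have hcomb : r * NLenergySq d Ω γ₁ δ u'
        ≤ M * Real.sqrt (NLenergySq d Ω γ₁ δ u') := by
      calc r * NLenergySq d Ω γ₁ δ u' ≤ F u' := by rw [← hval]; exact hcoer'
        _ ≤ |F u'| := le_abs_self _
        _ ≤ M * Real.sqrt (NLenergySq d Ω γ₁ δ u') := hFu'
    set a := Real.sqrt (NLenergySq d Ω γ₁ δ u') with ha
    have ha0 : 0 ≤ a := Real.sqrt_nonneg _
    have ha2 : a ^ 2 = NLenergySq d Ω γ₁ δ u' := Real.sq_sqrt hE'0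
    rcases eq_or_lt_of_le ha0 with h | h
    · rw [← h]; positivity
    · rw [le_div_iff₀ hr]
      have h6 : r * a ^ 2 ≤ M * a := by rw [ha2]; exact hcomb
      nlinarith
  -- coercivity for w
  have hcoerw : r * NLenergySq d Ω γ₁ δ w
      ≤ ∫ p, A p.1 p.2 * K p * (w p.2 - w p.1) * (w p.2 - w p.1) ∂P := by
    rw [hEw, ← integral_const_mul]
    refine integral_mono_ae (hwI.const_mul r) hI_Aww ?_
    filter_upwards [hAbd] with p hp
    have h5 : A p.1 p.2 * K p * (w p.2 - w p.1) * (w p.2 - w p.1)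
        = A p.1 p.2 * (K p * (w p.2 - w p.1) ^ 2) := by ring
    rw [h5]
    exact mul_le_mul_of_nonneg_right hp.1.1 (mul_nonneg (hk0 p) (sq_nonneg _))
  -- T^A[w,w] = ∫ (A'-A) K du' dw
  have hkey : (∫ p, A p.1 p.2 * K p * (w p.2 - w p.1) * (w p.2 - w p.1) ∂P)
      = ∫ p, (A' p.1 p.2 - A p.1 p.2) * K p * (u' p.2 - u' p.1) * (w p.2 - w p.1) ∂P := by
    have e1 : (∫ p, A p.1 p.2 * K p * (w p.2 - w p.1) * (w p.2 - w p.1) ∂P)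
        = (∫ p, A p.1 p.2 * K p * (u p.2 - u p.1) * (w p.2 - w p.1) ∂P)
          - ∫ p, A p.1 p.2 * K p * (u' p.2 - u' p.1) * (w p.2 - w p.1) ∂P := by
      rw [← integral_sub hI_Auw hI_Au'w]
      refine integral_congr_ae (Eventually.of_forall fun p => ?_)
      simp only [hwdef]; ring
    have e2 : (∫ p, A p.1 p.2 * K p * (u p.2 - u p.1) * (w p.2 - w p.1) ∂P)
        = ∫ p, A' p.1 p.2 * K p * (u' p.2 - u' p.1) * (w p.2 - w p.1) ∂P := by
      rw [← NLTform_eq_prod A u w hI_Auw, ← NLTform_eq_prod A' u' w hI_A'u'w,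
        hsol w hwS, hsol' w hwS]
    rw [e1, e2, ← integral_sub hI_A'u'w hI_Au'w]
    refine integral_congr_ae (Eventually.of_forall fun p => ?_)
    ring
  -- Cauchy–Schwarz bound
  have hmixI : Integrable (fun p : Eu d × Eu d =>
      K p * (|u' p.2 - u' p.1| * |w p.2 - w p.1|)) P := by
    refine Integrable.mono' ((hu'I.const_mul (1 / 2)).add (hwI.const_mul (1 / 2)))
      (hkm.aestronglyMeasurable.mul ((hDu'.norm).mul (hDw.norm))) ?_
    refine Eventually.of_forall fun p => ?_
    have h3 : ∀ kk a b : ℝ, 0 ≤ kk →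
        ‖kk * (|a| * |b|)‖ ≤ 1 / 2 * (kk * a ^ 2) + 1 / 2 * (kk * b ^ 2) := by
      intro kk a b hkk
      rw [Real.norm_eq_abs,
        abs_of_nonneg (mul_nonneg hkk (mul_nonneg (abs_nonneg _) (abs_nonneg _)))]
      have h4 : 2 * |a| * |b| ≤ a ^ 2 + b ^ 2 := by
        have h5 := two_mul_le_add_sq |a| |b|
        rwa [sq_abs, sq_abs] at h5
      nlinarith [mul_le_mul_of_nonneg_left h4 hkk]
    exact h3 (K p) _ _ (hk0 p)
  have hCS : (∫ p, K p * (|u' p.2 - u' p.1| * |w p.2 - w p.1|) ∂P)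
      ≤ Real.sqrt (NLenergySq d Ω γ₁ δ u') * Real.sqrt (NLenergySq d Ω γ₁ δ w) := by
    set f : Eu d × Eu d → ℝ := fun p => Real.sqrt (K p) * |u' p.2 - u' p.1| with hf
    set g : Eu d × Eu d → ℝ := fun p => Real.sqrt (K p) * |w p.2 - w p.1| with hg
    have hfm : AEStronglyMeasurable f P :=
      ((Real.continuous_sqrt.measurable.comp hkm).aestronglyMeasurable).mul hDu'.norm
    have hgm : AEStronglyMeasurable g P :=
      ((Real.continuous_sqrt.measurable.comp hkm).aestronglyMeasurable).mul hDw.norm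
    have hf2 : (fun p => f p ^ 2) = fun p : Eu d × Eu d => K p * (u' p.2 - u' p.1) ^ 2 := by
      funext p; rw [hf]; rw [mul_pow, Real.sq_sqrt (hk0 p), sq_abs]
    have hg2 : (fun p => g p ^ 2) = fun p : Eu d × Eu d => K p * (w p.2 - w p.1) ^ 2 := by
      funext p; rw [hg]; rw [mul_pow, Real.sq_sqrt (hk0 p), sq_abs]
    have hfL2 : MemLp f (ENNReal.ofReal 2) P := by
      rw [show ENNReal.ofReal (2 : ℝ) = 2 by norm_num]
      exact (memLp_two_iff_integrable_sq hfm).2 (hf2 ▸ hu'I)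
    have hgL2 : MemLp g (ENNReal.ofReal 2) P := by
      rw [show ENNReal.ofReal (2 : ℝ) = 2 by norm_num]
      exact (memLp_two_iff_integrable_sq hgm).2 (hg2 ▸ hwI)
    have hpq : Real.HolderConjugate 2 2 := Real.holderConjugate_iff.2 ⟨one_lt_two, by norm_num⟩
    have hH := integral_mul_le_Lp_mul_Lq_of_nonneg hpq
      (Eventually.of_forall fun p => mul_nonneg (Real.sqrt_nonneg _) (abs_nonneg _))
      (Eventually.of_forall fun p => mul_nonneg (Real.sqrt_nonneg _) (abs_nonneg _))
      hfL2 hgL2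
    have hfg : (fun p => f p * g p)
        = fun p : Eu d × Eu d => K p * (|u' p.2 - u' p.1| * |w p.2 - w p.1|) := by
      funext p
      simp only [hf, hg]
      calc Real.sqrt (K p) * |u' p.2 - u' p.1| * (Real.sqrt (K p) * |w p.2 - w p.1|)
          = Real.sqrt (K p) * Real.sqrt (K p) * (|u' p.2 - u' p.1| * |w p.2 - w p.1|) := by ring
        _ = K p * (|u' p.2 - u' p.1| * |w p.2 - w p.1|) := by
            rw [Real.mul_self_sqrt (hk0 p)]
    have hrw : ∀ h : Eu d × Eu d → ℝ,
        (∫ p, h p ^ (2 : ℝ) ∂P) = ∫ p, h p ^ 2 ∂P := by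
      intro h
      refine integral_congr_ae (Eventually.of_forall fun p => ?_)
      simp only [Real.rpow_two]
    rw [hfg] at hH
    rw [hrw f, hrw g, hf2, hg2] at hH
    calc (∫ p, K p * (|u' p.2 - u' p.1| * |w p.2 - w p.1|) ∂P)
        ≤ (∫ p, K p * (u' p.2 - u' p.1) ^ 2 ∂P) ^ (1 / (2 : ℝ))
          * (∫ p, K p * (w p.2 - w p.1) ^ 2 ∂P) ^ (1 / (2 : ℝ)) := hH
      _ = Real.sqrt (NLenergySq d Ω γ₁ δ u') * Real.sqrt (NLenergySq d Ω γ₁ δ w) := by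
          rw [hEu', hEw, Real.sqrt_eq_rpow, Real.sqrt_eq_rpow]
  -- bound the right-hand side
  have hmain : r * NLenergySq d Ω γ₁ δ w
      ≤ ε * (Real.sqrt (NLenergySq d Ω γ₁ δ u') * Real.sqrt (NLenergySq d Ω γ₁ δ w)) := by
    calc r * NLenergySq d Ω γ₁ δ w
        ≤ ∫ p, A p.1 p.2 * K p * (w p.2 - w p.1) * (w p.2 - w p.1) ∂P := hcoerw
      _ = ∫ p, (A' p.1 p.2 - A p.1 p.2) * K p * (u' p.2 - u' p.1) * (w p.2 - w p.1) ∂P := hkey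
      _ ≤ ∫ p, ε * (K p * (|u' p.2 - u' p.1| * |w p.2 - w p.1|)) ∂P := by
          refine integral_mono_ae hI_diff (hmixI.const_mul ε) ?_
          filter_upwards [hεbd] with p hp
          have habs : |A' p.1 p.2 - A p.1 p.2| ≤ ε := by
            rw [abs_sub_comm]; exact hp
          calc (A' p.1 p.2 - A p.1 p.2) * K p * (u' p.2 - u' p.1) * (w p.2 - w p.1)
              ≤ |(A' p.1 p.2 - A p.1 p.2) * K p * (u' p.2 - u' p.1) * (w p.2 - w p.1)| :=
                le_abs_self _
            _ = |A' p.1 p.2 - A p.1 p.2| * (K p * (|u' p.2 - u' p.1| * |w p.2 - w p.1|)) := by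
                rw [abs_mul, abs_mul, abs_mul, abs_of_nonneg (hk0 p)]; ring
            _ ≤ ε * (K p * (|u' p.2 - u' p.1| * |w p.2 - w p.1|)) :=
                mul_le_mul_of_nonneg_right habs
                  (mul_nonneg (hk0 p) (mul_nonneg (abs_nonneg _) (abs_nonneg _)))
      _ = ε * ∫ p, K p * (|u' p.2 - u' p.1| * |w p.2 - w p.1|) ∂P := integral_const_mul ε _
      _ ≤ ε * (Real.sqrt (NLenergySq d Ω γ₁ δ u') * Real.sqrt (NLenergySq d Ω γ₁ δ w)) := by
          refine mul_le_mul_of_nonneg_left hCS hε0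
  -- conclude
  have hsE' := hsqrtE'
  set b := Real.sqrt (NLenergySq d Ω γ₁ δ w) with hb
  have hb0 : 0 ≤ b := Real.sqrt_nonneg _
  have hb2 : b ^ 2 = NLenergySq d Ω γ₁ δ w := Real.sq_sqrt hEw0
  have hfinal : r * b ^ 2 ≤ ε * (M / r) * b := by
    rw [hb2]
    calc r * NLenergySq d Ω γ₁ δ w
        ≤ ε * (Real.sqrt (NLenergySq d Ω γ₁ δ u') * b) := hmain
      _ ≤ ε * ((M / r) * b) := by
          refine mul_le_mul_of_nonneg_left ?_ hε0
          exact mul_le_mul_of_nonneg_right hsE' hb0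
      _ = ε * (M / r) * b := by ring
  show b ≤ ε * M / r ^ 2
  rcases eq_or_lt_of_le hb0 with h | h
  · rw [← h]
    exact div_nonneg (mul_nonneg hε0 hM0) (by positivity)
  · rw [le_div_iff₀ (by positivity : (0:ℝ) < r ^ 2)]
    have h7 : r * b ≤ ε * (M / r) := by nlinarith
    have h8 : ε * (M / r) * r = ε * M := by field_simp
    nlinarith [mul_le_mul_of_nonneg_right h7 hr.le]
end
end

section
/- Let A and Ã be two measurable complex-valued coefficients on (Ω∪Ω_δ)² with Re A(x,y) ≥ r_c > 0 and Re Ã(x,y) ≥ r_c > 0 and |A|, |Ã| bounded a.e. Let f be a linear functional on S_δ(Ω;ℂ) with |⟨f, v⟩| ≤ M |v|_{S_δ(Ω;ℂ)} for all v ∈ S_δ(Ω;ℂ). If u, ũ ∈ S_δ(Ω;ℂ) satisfy T_δ^A[u, v] = ⟨f, v⟩ and T_δ^Ã[ũ, v] = ⟨f, v⟩ for all v ∈ S_δ(Ω;ℂ), then |u − ũ|_{S_δ(Ω;ℂ)} ≤ ‖A − Ã‖_{L^∞((Ω∪Ω_δ)²)} · M / r_c² (stability estimate for complex coefficients). -/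
open MeasureTheory Metric Set Filter

noncomputable section

/-- Cauchy–Schwarz for weighted integrals. -/
lemma nl_cs_aux {α : Type*} [MeasurableSpace α] {μ : Measure α} {k f g : α → ℝ}
    (hk0 : ∀ a, 0 ≤ k a) (hf0 : ∀ a, 0 ≤ f a) (hg0 : ∀ a, 0 ≤ g a)
    (hkm : AEStronglyMeasurable k μ) (hfm : AEStronglyMeasurable f μ)
    (hgm : AEStronglyMeasurable g μ)
    (hf2 : Integrable (fun a => k a * f a ^ 2) μ)
    (hg2 : Integrable (fun a => k a * g a ^ 2) μ) :
    ∫ a, k a * (f a * g a) ∂μ ≤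
      Real.sqrt (∫ a, k a * f a ^ 2 ∂μ) * Real.sqrt (∫ a, k a * g a ^ 2 ∂μ) := by
  set F := fun a => Real.sqrt (k a) * f a with hF
  set G := fun a => Real.sqrt (k a) * g a with hG
  have hF2 : ∀ a, F a ^ 2 = k a * f a ^ 2 := fun a => by
    simp [hF, mul_pow, Real.sq_sqrt (hk0 a)]
  have hG2 : ∀ a, G a ^ 2 = k a * g a ^ 2 := fun a => by
    simp [hG, mul_pow, Real.sq_sqrt (hk0 a)]
  have hFG : ∀ a, F a * G a = k a * (f a * g a) := fun a => by
    simp only [hF, hG]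
    rw [show Real.sqrt (k a) * f a * (Real.sqrt (k a) * g a)
        = (Real.sqrt (k a) * Real.sqrt (k a)) * (f a * g a) by ring,
      Real.mul_self_sqrt (hk0 a)]
  have hFm : AEStronglyMeasurable F μ :=
    (Real.continuous_sqrt.comp_aestronglyMeasurable hkm).mul hfm
  have hGm : AEStronglyMeasurable G μ :=
    (Real.continuous_sqrt.comp_aestronglyMeasurable hkm).mul hgm
  have hFL : MemLp F 2 μ := (memLp_two_iff_integrable_sq hFm).2 (by
    simpa only [funext hF2] using hf2)
  have hGL : MemLp G 2 μ := (memLp_two_iff_integrable_sq hGm).2 (by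
    simpa only [funext hG2] using hg2)
  have hpq : Real.HolderConjugate 2 2 := ⟨by norm_num, by norm_num, by norm_num⟩
  have hFnn : 0 ≤ᵐ[μ] F := Filter.Eventually.of_forall fun a =>
    mul_nonneg (Real.sqrt_nonneg _) (hf0 a)
  have hGnn : 0 ≤ᵐ[μ] G := Filter.Eventually.of_forall fun a =>
    mul_nonneg (Real.sqrt_nonneg _) (hg0 a)
  have h2 : ENNReal.ofReal (2:ℝ) = 2 := by norm_num
  have := MeasureTheory.integral_mul_le_Lp_mul_Lq_of_nonneg hpq hFnn hGnn
    (h2 ▸ hFL) (h2 ▸ hGL)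
  calc ∫ a, k a * (f a * g a) ∂μ = ∫ a, F a * G a ∂μ := by
        simp only [funext hFG]
    _ ≤ (∫ a, F a ^ (2:ℝ) ∂μ) ^ (1/(2:ℝ)) * (∫ a, G a ^ (2:ℝ) ∂μ) ^ (1/(2:ℝ)) := this
    _ = Real.sqrt (∫ a, k a * f a ^ 2 ∂μ) * Real.sqrt (∫ a, k a * g a ^ 2 ∂μ) := by
        rw [← Real.sqrt_eq_rpow, ← Real.sqrt_eq_rpow]
        congr 2
        · exact integral_congr_ae (Filter.Eventually.of_forall fun a => by
            simpa [Real.rpow_two] using hF2 a)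
        · exact integral_congr_ae (Filter.Eventually.of_forall fun a => by
            simpa [Real.rpow_two] using hG2 a)

lemma nl_mulconj (z : ℂ) : z * (starRingEnd ℂ) z = ((‖z‖^2 : ℝ) : ℂ) := by
  rw [Complex.mul_conj]
  norm_cast
  rw [Complex.normSq_eq_norm_sq]


lemma nlker_nonneg (d : ℕ) {γ₁ : ℝ → ℝ} (hγ0 : ∀ r, 0 ≤ γ₁ r) {δ : ℝ} (hδ : 0 < δ)
    (r : ℝ) : 0 ≤ NLker d γ₁ δ r := by
  unfold NLker
  have : (0:ℝ) ≤ (δ ^ (d + 2))⁻¹ := by positivity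
  exact mul_nonneg this (hγ0 _)

lemma nlker_measurable (d : ℕ) {γ₁ : ℝ → ℝ} (hγmono : AntitoneOn γ₁ (Ici 0))
    {δ : ℝ} (hδ : 0 < δ) :
    Measurable fun p : Eu d × Eu d => NLker d γ₁ δ (dist p.1 p.2) := by
  have hg : Antitone fun r : ℝ => γ₁ (max r 0) := fun r s h =>
    hγmono (mem_Ici.2 (le_max_right _ _)) (mem_Ici.2 (le_max_right _ _))
      (max_le_max h le_rfl)
  have hmg : Measurable fun r : ℝ => γ₁ (max r 0) := hg.measurable
  have heq : ∀ p : Eu d × Eu d,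
      NLker d γ₁ δ (dist p.1 p.2) = (δ ^ (d + 2))⁻¹ * γ₁ (max (dist p.1 p.2 / δ) 0) := by
    intro p
    unfold NLker
    rw [max_eq_left (by positivity)]
  simp only [heq]
  exact (hmg.comp ((continuous_dist.measurable).div_const δ)).const_mul _

/-- The squared complex nonlocal energy seminorm |u|²_{S_δ(Ω;ℂ)}. -/
def NLenergySqC (d : ℕ) (Ω : Set (Eu d)) (γ₁ : ℝ → ℝ) (δ : ℝ) (u : Eu d → ℂ) : ℝ :=
  ∫ x in NLdom d Ω δ, ∫ y in NLdom d Ω δ, NLker d γ₁ δ (dist y x) * ‖u y - u x‖ ^ 2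

/-- Membership in the complex nonlocal energy space S_δ(Ω;ℂ). -/
def NLMemSC (d : ℕ) (Ω : Set (Eu d)) (γ₁ : ℝ → ℝ) (δ : ℝ) (u : Eu d → ℂ) : Prop :=
  MemLp u 2 (volume.restrict (NLdom d Ω δ)) ∧
  IntegrableOn
    (fun p : Eu d × Eu d => NLker d γ₁ δ (dist p.2 p.1) * ‖u p.2 - u p.1‖ ^ 2)
    (NLdom d Ω δ ×ˢ NLdom d Ω δ) ∧
  ∀ᵐ x ∂(volume.restrict (NLcollar d Ω δ)), u x = 0

/-- The sesquilinear form T_δ with complex coefficient B. -/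
def NLTformC (d : ℕ) (Ω : Set (Eu d)) (γ₁ : ℝ → ℝ) (δ : ℝ)
    (B : Eu d → Eu d → ℂ) (v w : Eu d → ℂ) : ℂ :=
  ∫ x in NLdom d Ω δ, ∫ y in NLdom d Ω δ,
    B x y * (NLker d γ₁ δ (dist x y) : ℂ) * (v y - v x) * (starRingEnd ℂ) (w y - w x)

set_option maxHeartbeats 2000000 in
/-- Stability estimate for complex coefficients: if u and ũ solve the complex nonlocal
problems with coefficients A and Ã whose real parts are bounded below by r_c > 0 and
which are bounded a.e., against the same bounded linear functional f, then
|u − ũ|_{S_δ(Ω;ℂ)} ≤ ‖A − Ã‖_{L^∞} M / r_c². -/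
theorem nonlocal_stability_complex
    (d : ℕ) (hd : 1 ≤ d) (Ω : Set (Eu d))
    (hΩopen : IsOpen Ω) (hΩbdd : Bornology.IsBounded Ω) (hΩne : Ω.Nonempty)
    (γ₁ : ℝ → ℝ) (hγ0 : ∀ r, 0 ≤ γ₁ r) (hγmono : AntitoneOn γ₁ (Ici 0))
    (hγsupp : ∀ r, 1 < r → γ₁ r = 0)
    (hγnorm : (∫ z in ball (0 : Eu d) 1, γ₁ ‖z‖ * ‖z‖ ^ 2) = (d : ℝ))
    (δ : ℝ) (hδ : 0 < δ)
    (A A' : Eu d → Eu d → ℂ)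
    (hAmeas : Measurable fun p : Eu d × Eu d => A p.1 p.2)
    (hA'meas : Measurable fun p : Eu d × Eu d => A' p.1 p.2)
    (rc : ℝ) (hrc : 0 < rc)
    (hre : ∀ᵐ p ∂(volume.restrict (NLdom d Ω δ ×ˢ NLdom d Ω δ)),
      rc ≤ (A p.1 p.2).re ∧ rc ≤ (A' p.1 p.2).re)
    (hbdd : ∃ Rc : ℝ, ∀ᵐ p ∂(volume.restrict (NLdom d Ω δ ×ˢ NLdom d Ω δ)),
      ‖A p.1 p.2‖ ≤ Rc ∧ ‖A' p.1 p.2‖ ≤ Rc)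
    (F : (Eu d → ℂ) → ℂ)
    (hFadd : ∀ v w : Eu d → ℂ, F (v + w) = F v + F w)
    (hFsmul : ∀ (c : ℂ) (v : Eu d → ℂ), F (c • v) = c * F v)
    (M : ℝ) (hM0 : 0 ≤ M)
    (hFbd : ∀ v : Eu d → ℂ, NLMemSC d Ω γ₁ δ v →
      ‖F v‖ ≤ M * Real.sqrt (NLenergySqC d Ω γ₁ δ v))
    (u u' : Eu d → ℂ) (huS : NLMemSC d Ω γ₁ δ u) (hu'S : NLMemSC d Ω γ₁ δ u')
    (hsol : ∀ v : Eu d → ℂ, NLMemSC d Ω γ₁ δ v → NLTformC d Ω γ₁ δ A u v = F v)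
    (hsol' : ∀ v : Eu d → ℂ, NLMemSC d Ω γ₁ δ v → NLTformC d Ω γ₁ δ A' u' v = F v) :
    Real.sqrt (NLenergySqC d Ω γ₁ δ (fun x => u x - u' x)) ≤
      (eLpNorm (fun p : Eu d × Eu d => A p.1 p.2 - A' p.1 p.2) ⊤
        (volume.restrict (NLdom d Ω δ ×ˢ NLdom d Ω δ))).toReal * M / rc ^ 2 := by
  classical
  set S : Set (Eu d) := NLdom d Ω δ with hSdef
  set ν : Measure (Eu d) := volume.restrict S with hνdef
  set μ2 : Measure (Eu d × Eu d) := ν.prod ν with hμ2def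
  have hμ2 : μ2 = volume.restrict (S ×ˢ S) := by
    rw [hμ2def, hνdef, Measure.prod_restrict, ← Measure.volume_eq_prod]
  -- kernel
  set κ : Eu d × Eu d → ℝ := fun p => NLker d γ₁ δ (dist p.1 p.2) with hκdef
  have hκ0 : ∀ p, 0 ≤ κ p := fun p => nlker_nonneg d hγ0 hδ _
  have hκm : Measurable κ := nlker_measurable d hγmono hδ
  have hker_comm : ∀ p : Eu d × Eu d, NLker d γ₁ δ (dist p.2 p.1) = κ p := fun p => by
    rw [hκdef, dist_comm]
  -- basic facts about members of S_δ
  have memE : ∀ v, NLMemSC d Ω γ₁ δ v →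
      Integrable (fun p : Eu d × Eu d => κ p * ‖v p.2 - v p.1‖ ^ 2) μ2 := by
    intro v hv
    have h1 : Integrable
        (fun p : Eu d × Eu d => NLker d γ₁ δ (dist p.2 p.1) * ‖v p.2 - v p.1‖ ^ 2)
        (volume.restrict (S ×ˢ S)) := hv.2.1
    rw [← hμ2] at h1
    simpa only [hker_comm] using h1
  have memSM : ∀ v, NLMemSC d Ω γ₁ δ v →
      AEStronglyMeasurable (fun p : Eu d × Eu d => v p.2 - v p.1) μ2 := by
    intro v hv
    exact (hv.1.aestronglyMeasurable.comp_snd).sub (hv.1.aestronglyMeasurable.comp_fst)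
  have energy_eq : ∀ v, NLMemSC d Ω γ₁ δ v →
      NLenergySqC d Ω γ₁ δ v = ∫ p, κ p * ‖v p.2 - v p.1‖ ^ 2 ∂μ2 := by
    intro v hv
    have h1 : Integrable
        (Function.uncurry fun x y : Eu d => NLker d γ₁ δ (dist y x) * ‖v y - v x‖ ^ 2)
        (ν.prod ν) := by
      have := memE v hv
      refine this.congr ?_
      filter_upwards with p
      simp [Function.uncurry, hker_comm p]
    rw [NLenergySqC]
    rw [MeasureTheory.integral_integral h1]
    exact integral_congr_ae (Filter.Eventually.of_forall fun p => by
      simp [hker_comm p])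
  -- bounds
  obtain ⟨Rc, hRc⟩ := hbdd
  rw [← hμ2] at hRc hre
  have haeA : ∀ᵐ p ∂μ2, ‖A p.1 p.2‖ ≤ Rc := hRc.mono fun p h => h.1
  have haeA' : ∀ᵐ p ∂μ2, ‖A' p.1 p.2‖ ≤ Rc := hRc.mono fun p h => h.2
  -- integrability of form integrands
  have formInt : ∀ (B : Eu d → Eu d → ℂ),
      Measurable (fun p : Eu d × Eu d => B p.1 p.2) →
      ∀ (C : ℝ), (∀ᵐ p ∂μ2, ‖B p.1 p.2‖ ≤ C) →
      ∀ v w, NLMemSC d Ω γ₁ δ v → NLMemSC d Ω γ₁ δ w →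
      Integrable (fun p : Eu d × Eu d =>
        B p.1 p.2 * (κ p : ℂ) * (v p.2 - v p.1) * (starRingEnd ℂ) (w p.2 - w p.1)) μ2 := by
    intro B hBm C hC v w hv hw
    have hsm : AEStronglyMeasurable (fun p : Eu d × Eu d =>
        B p.1 p.2 * (κ p : ℂ) * (v p.2 - v p.1) * (starRingEnd ℂ) (w p.2 - w p.1)) μ2 := by
      refine (((hBm.aestronglyMeasurable).mul
        ((Complex.measurable_ofReal.comp hκm).aestronglyMeasurable)).mul
        (memSM v hv)).mul ?_
      simpa only [starRingEnd_apply] using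
        (continuous_star.comp_aestronglyMeasurable (memSM w hw))
    refine Integrable.mono'
      (g := fun p => C * ((κ p * ‖v p.2 - v p.1‖ ^ 2 + κ p * ‖w p.2 - w p.1‖ ^ 2) / 2))
      ((((memE v hv).add (memE w hw)).div_const 2).const_mul C) hsm ?_
    filter_upwards [hC] with p hp
    have h1 : ‖B p.1 p.2 * (κ p : ℂ) * (v p.2 - v p.1) * (starRingEnd ℂ) (w p.2 - w p.1)‖
        = ‖B p.1 p.2‖ * (κ p * (‖v p.2 - v p.1‖ * ‖w p.2 - w p.1‖)) := by
      simp only [norm_mul, Complex.norm_real, RCLike.norm_conj,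
        Real.norm_of_nonneg (hκ0 p)]
      ring
    rw [h1]
    have hB0 : (0:ℝ) ≤ ‖B p.1 p.2‖ := norm_nonneg _
    have key : κ p * (‖v p.2 - v p.1‖ * ‖w p.2 - w p.1‖)
        ≤ (κ p * ‖v p.2 - v p.1‖ ^ 2 + κ p * ‖w p.2 - w p.1‖ ^ 2) / 2 := by
      nlinarith [sq_nonneg (‖v p.2 - v p.1‖ - ‖w p.2 - w p.1‖), hκ0 p,
        mul_nonneg (hκ0 p) (sq_nonneg (‖v p.2 - v p.1‖ - ‖w p.2 - w p.1‖))]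
    calc ‖B p.1 p.2‖ * (κ p * (‖v p.2 - v p.1‖ * ‖w p.2 - w p.1‖))
        ≤ C * (κ p * (‖v p.2 - v p.1‖ * ‖w p.2 - w p.1‖)) :=
          mul_le_mul_of_nonneg_right hp
            (mul_nonneg (hκ0 p) (mul_nonneg (norm_nonneg _) (norm_nonneg _)))
      _ ≤ C * ((κ p * ‖v p.2 - v p.1‖ ^ 2 + κ p * ‖w p.2 - w p.1‖ ^ 2) / 2) :=
          mul_le_mul_of_nonneg_left key (hB0.trans hp)
  -- the form as a product integral
  have form_eq : ∀ (B : Eu d → Eu d → ℂ),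
      Measurable (fun p : Eu d × Eu d => B p.1 p.2) →
      ∀ (C : ℝ), (∀ᵐ p ∂μ2, ‖B p.1 p.2‖ ≤ C) →
      ∀ v w, NLMemSC d Ω γ₁ δ v → NLMemSC d Ω γ₁ δ w →
      NLTformC d Ω γ₁ δ B v w = ∫ p, B p.1 p.2 * (κ p : ℂ) * (v p.2 - v p.1) *
        (starRingEnd ℂ) (w p.2 - w p.1) ∂μ2 := by
    intro B hBm C hC v w hv hw
    have h1 : Integrable
        (Function.uncurry fun x y : Eu d => B x y * (NLker d γ₁ δ (dist x y) : ℂ) *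
          (v y - v x) * (starRingEnd ℂ) (w y - w x)) (ν.prod ν) := by
      refine (formInt B hBm C hC v w hv hw).congr ?_
      filter_upwards with p
      simp [Function.uncurry, hκdef]
    rw [NLTformC]
    rw [MeasureTheory.integral_integral h1]
  -- the difference e := u - u'
  set e : Eu d → ℂ := fun x => u x - u' x with hedef
  have hem : AEStronglyMeasurable e ν :=
    huS.1.aestronglyMeasurable.sub hu'S.1.aestronglyMeasurable
  have hDe_eq : ∀ p : Eu d × Eu d,
      e p.2 - e p.1 = (u p.2 - u p.1) - (u' p.2 - u' p.1) := fun p => by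
    simp only [hedef]; ring
  have hDem : AEStronglyMeasurable (fun p : Eu d × Eu d => e p.2 - e p.1) μ2 :=
    hem.comp_snd.sub hem.comp_fst
  have heS : NLMemSC d Ω γ₁ δ e := by
    refine ⟨huS.1.sub hu'S.1, ?_, ?_⟩
    · have hi : Integrable (fun p : Eu d × Eu d => κ p * ‖e p.2 - e p.1‖ ^ 2) μ2 := by
        refine Integrable.mono'
          (g := fun p => 2 * (κ p * ‖u p.2 - u p.1‖ ^ 2) + 2 * (κ p * ‖u' p.2 - u' p.1‖ ^ 2))
          (((memE u huS).const_mul 2).add ((memE u' hu'S).const_mul 2))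
          ((hκm.aestronglyMeasurable).mul ((hDem.norm).pow 2)) ?_
        · filter_upwards with p
          have h1 : ‖e p.2 - e p.1‖ ≤ ‖u p.2 - u p.1‖ + ‖u' p.2 - u' p.1‖ := by
            rw [hDe_eq p]; exact norm_sub_le _ _
          have h2 : ‖κ p * ‖e p.2 - e p.1‖ ^ 2‖ = κ p * ‖e p.2 - e p.1‖ ^ 2 := by
            rw [Real.norm_of_nonneg (mul_nonneg (hκ0 p) (sq_nonneg _))]
          rw [h2]
          nlinarith [hκ0 p, sq_nonneg (‖u p.2 - u p.1‖ - ‖u' p.2 - u' p.1‖),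
            norm_nonneg (e p.2 - e p.1), norm_nonneg (u p.2 - u p.1),
            norm_nonneg (u' p.2 - u' p.1),
            mul_le_mul_of_nonneg_left
              (mul_self_le_mul_self (norm_nonneg (e p.2 - e p.1)) h1) (hκ0 p)]
      rw [hμ2] at hi
      exact hi.congr (Filter.Eventually.of_forall fun p => by simp only [hker_comm])
    · filter_upwards [huS.2.2, hu'S.2.2] with x h1 h2
      simp [hedef, h1, h2]
  -- notation for the integrands
  have hIAee := formInt A hAmeas Rc haeA e e heS heS
  have hIAu'e := formInt A hAmeas Rc haeA u' e hu'S heS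
  have hIA'u'e := formInt A' hA'meas Rc haeA' u' e hu'S heS
  have hIA'u'u' := formInt A' hA'meas Rc haeA' u' u' hu'S hu'S
  have haediff : ∀ᵐ p ∂μ2, ‖A' p.1 p.2 - A p.1 p.2‖ ≤ Rc + Rc := by
    filter_upwards [hRc] with p hp
    exact (norm_sub_le _ _).trans (add_le_add hp.2 hp.1)
  have hIdiff := formInt (fun x y => A' x y - A x y)
    (hA'meas.sub hAmeas) (Rc + Rc) haediff u' e hu'S heS
  -- the two weak formulations tested against e
  have hTu : (∫ p, A p.1 p.2 * (κ p : ℂ) * (u p.2 - u p.1) *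
      (starRingEnd ℂ) (e p.2 - e p.1) ∂μ2) = F e := by
    rw [← form_eq A hAmeas Rc haeA u e huS heS]; exact hsol e heS
  have hTu' : (∫ p, A' p.1 p.2 * (κ p : ℂ) * (u' p.2 - u' p.1) *
      (starRingEnd ℂ) (e p.2 - e p.1) ∂μ2) = F e := by
    rw [← form_eq A' hA'meas Rc haeA' u' e hu'S heS]; exact hsol' e heS
  have hsplit : (∫ p, A p.1 p.2 * (κ p : ℂ) * (u p.2 - u p.1) *
      (starRingEnd ℂ) (e p.2 - e p.1) ∂μ2)
      = (∫ p, A p.1 p.2 * (κ p : ℂ) * (e p.2 - e p.1) *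
          (starRingEnd ℂ) (e p.2 - e p.1) ∂μ2)
        + ∫ p, A p.1 p.2 * (κ p : ℂ) * (u' p.2 - u' p.1) *
          (starRingEnd ℂ) (e p.2 - e p.1) ∂μ2 := by
    rw [← integral_add hIAee hIAu'e]
    refine integral_congr_ae (Filter.Eventually.of_forall fun p => ?_)
    have h3 : u p.2 - u p.1 = (e p.2 - e p.1) + (u' p.2 - u' p.1) := by
      rw [hDe_eq p]; ring
    beta_reduce
    rw [h3]; ring
  have hsub : (∫ p, (A' p.1 p.2 - A p.1 p.2) * (κ p : ℂ) * (u' p.2 - u' p.1) *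
      (starRingEnd ℂ) (e p.2 - e p.1) ∂μ2)
      = (∫ p, A' p.1 p.2 * (κ p : ℂ) * (u' p.2 - u' p.1) *
          (starRingEnd ℂ) (e p.2 - e p.1) ∂μ2)
        - ∫ p, A p.1 p.2 * (κ p : ℂ) * (u' p.2 - u' p.1) *
          (starRingEnd ℂ) (e p.2 - e p.1) ∂μ2 := by
    rw [← integral_sub hIA'u'e hIAu'e]
    exact integral_congr_ae (Filter.Eventually.of_forall fun p => by beta_reduce; ring)
  have hJ : (∫ p, A p.1 p.2 * (κ p : ℂ) * (e p.2 - e p.1) *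
      (starRingEnd ℂ) (e p.2 - e p.1) ∂μ2)
      = ∫ p, (A' p.1 p.2 - A p.1 p.2) * (κ p : ℂ) * (u' p.2 - u' p.1) *
          (starRingEnd ℂ) (e p.2 - e p.1) ∂μ2 := by
    rw [hsub, hTu']
    have h4 := hsplit
    rw [hTu] at h4
    linear_combination -h4
  -- energies
  set Ee : ℝ := ∫ p, κ p * ‖e p.2 - e p.1‖ ^ 2 ∂μ2 with hEedef
  set Eu' : ℝ := ∫ p, κ p * ‖u' p.2 - u' p.1‖ ^ 2 ∂μ2 with hEu'def
  have hEe0 : 0 ≤ Ee :=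
    integral_nonneg fun p => mul_nonneg (hκ0 p) (sq_nonneg _)
  have hEu'0 : 0 ≤ Eu' :=
    integral_nonneg fun p => mul_nonneg (hκ0 p) (sq_nonneg _)
  -- coercivity
  have coer : ∀ (B : Eu d → Eu d → ℂ), (∀ᵐ p ∂μ2, rc ≤ (B p.1 p.2).re) →
      ∀ v, NLMemSC d Ω γ₁ δ v →
      Integrable (fun p : Eu d × Eu d => B p.1 p.2 * (κ p : ℂ) * (v p.2 - v p.1) *
        (starRingEnd ℂ) (v p.2 - v p.1)) μ2 →
      rc * (∫ p, κ p * ‖v p.2 - v p.1‖ ^ 2 ∂μ2) ≤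
        (∫ p, B p.1 p.2 * (κ p : ℂ) * (v p.2 - v p.1) *
          (starRingEnd ℂ) (v p.2 - v p.1) ∂μ2).re := by
    intro B hB v hv hint
    have hre_pt : ∀ p : Eu d × Eu d,
        (B p.1 p.2 * (κ p : ℂ) * (v p.2 - v p.1) * (starRingEnd ℂ) (v p.2 - v p.1)).re
        = (B p.1 p.2).re * (κ p * ‖v p.2 - v p.1‖ ^ 2) := by
      intro p
      have h1 : B p.1 p.2 * (κ p : ℂ) * (v p.2 - v p.1) * (starRingEnd ℂ) (v p.2 - v p.1)
          = B p.1 p.2 * ((κ p * ‖v p.2 - v p.1‖ ^ 2 : ℝ) : ℂ) := by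
        rw [show B p.1 p.2 * (κ p : ℂ) * (v p.2 - v p.1) * (starRingEnd ℂ) (v p.2 - v p.1)
            = B p.1 p.2 * ((κ p : ℂ) * ((v p.2 - v p.1) * (starRingEnd ℂ) (v p.2 - v p.1)))
          from by ring, nl_mulconj, ← Complex.ofReal_mul]
      rw [h1, Complex.mul_re, Complex.ofReal_re, Complex.ofReal_im, mul_zero, sub_zero]
    have h5 := integral_re hint
    simp only [RCLike.re_to_complex] at h5
    rw [← h5]
    calc rc * ∫ p, κ p * ‖v p.2 - v p.1‖ ^ 2 ∂μ2
        = ∫ p, rc * (κ p * ‖v p.2 - v p.1‖ ^ 2) ∂μ2 := (integral_const_mul _ _).symm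
      _ ≤ ∫ p, (B p.1 p.2).re * (κ p * ‖v p.2 - v p.1‖ ^ 2) ∂μ2 := by
          refine integral_mono_ae ((memE v hv).const_mul rc) ?_ ?_
          · exact (hint.re).congr (Filter.Eventually.of_forall fun p => hre_pt p)
          · filter_upwards [hB] with p hp
            exact mul_le_mul_of_nonneg_right hp (mul_nonneg (hκ0 p) (sq_nonneg _))
      _ = ∫ p, (B p.1 p.2 * (κ p : ℂ) * (v p.2 - v p.1) *
            (starRingEnd ℂ) (v p.2 - v p.1)).re ∂μ2 :=
          integral_congr_ae (Filter.Eventually.of_forall fun p => (hre_pt p).symm)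
  have hcoerE : rc * Ee ≤ (∫ p, A p.1 p.2 * (κ p : ℂ) * (e p.2 - e p.1) *
      (starRingEnd ℂ) (e p.2 - e p.1) ∂μ2).re :=
    coer A (hre.mono fun p h => h.1) e heS hIAee
  have hcoerU : rc * Eu' ≤ (∫ p, A' p.1 p.2 * (κ p : ℂ) * (u' p.2 - u' p.1) *
      (starRingEnd ℂ) (u' p.2 - u' p.1) ∂μ2).re :=
    coer A' (hre.mono fun p h => h.2) u' hu'S hIA'u'u'
  have hFu' : (∫ p, A' p.1 p.2 * (κ p : ℂ) * (u' p.2 - u' p.1) *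
      (starRingEnd ℂ) (u' p.2 - u' p.1) ∂μ2) = F u' := by
    rw [← form_eq A' hA'meas Rc haeA' u' u' hu'S hu'S]; exact hsol' u' hu'S
  have hbM : rc * Eu' ≤ M * Real.sqrt Eu' := by
    calc rc * Eu' ≤ (F u').re := by rw [← hFu']; exact hcoerU
      _ ≤ ‖F u'‖ := Complex.re_le_norm _
      _ ≤ M * Real.sqrt (NLenergySqC d Ω γ₁ δ u') := hFbd u' hu'S
      _ = M * Real.sqrt Eu' := by rw [energy_eq u' hu'S]
  -- the essential supremum bound
  set Cess : ℝ := (eLpNorm (fun p : Eu d × Eu d => A p.1 p.2 - A' p.1 p.2) ⊤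
    (volume.restrict (S ×ˢ S))).toReal with hCessdef
  have hCess0 : 0 ≤ Cess := ENNReal.toReal_nonneg
  have hfin : eLpNorm (fun p : Eu d × Eu d => A p.1 p.2 - A' p.1 p.2) ⊤
      (volume.restrict (S ×ˢ S)) ≠ ⊤ := by
    have hb2 : ∀ᵐ p ∂(volume.restrict (S ×ˢ S)), ‖A p.1 p.2 - A' p.1 p.2‖ ≤ Rc + Rc := by
      rw [← hμ2]
      filter_upwards [hRc] with p hp
      exact (norm_sub_le _ _).trans (add_le_add hp.1 hp.2)
    refine ne_of_lt (lt_of_le_of_lt (eLpNorm_le_of_ae_bound hb2) ?_)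
    simp only [ENNReal.toReal_top, inv_zero, ENNReal.rpow_zero, one_mul]
    exact (ENNReal.ofReal_lt_top : ENNReal.ofReal (Rc + Rc) < ⊤)
  have hCessae : ∀ᵐ p ∂μ2, ‖A' p.1 p.2 - A p.1 p.2‖ ≤ Cess := by
    have h := enorm_ae_le_eLpNormEssSup
      (fun p : Eu d × Eu d => A p.1 p.2 - A' p.1 p.2) (volume.restrict (S ×ˢ S))
    have hfin2 : eLpNormEssSup (fun p : Eu d × Eu d => A p.1 p.2 - A' p.1 p.2)
        (volume.restrict (S ×ˢ S)) ≠ ⊤ := by rwa [eLpNorm_exponent_top] at hfin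
    rw [hμ2]
    filter_upwards [h] with p hp
    have h6 := ENNReal.toReal_mono hfin2 hp
    rw [norm_sub_rev]
    simpa [hCessdef, eLpNorm_exponent_top] using h6
  -- Cauchy-Schwarz bound on the right-hand side
  have hmixint : Integrable
      (fun p : Eu d × Eu d => κ p * (‖u' p.2 - u' p.1‖ * ‖e p.2 - e p.1‖)) μ2 := by
    refine Integrable.mono'
      (g := fun p => (κ p * ‖u' p.2 - u' p.1‖ ^ 2 + κ p * ‖e p.2 - e p.1‖ ^ 2) / 2)
      (((memE u' hu'S).add (memE e heS)).div_const 2)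
      ((hκm.aestronglyMeasurable).mul (((memSM u' hu'S).norm).mul (hDem.norm))) ?_
    filter_upwards with p
    rw [Real.norm_of_nonneg (mul_nonneg (hκ0 p)
      (mul_nonneg (norm_nonneg _) (norm_nonneg _)))]
    nlinarith [hκ0 p, sq_nonneg (‖u' p.2 - u' p.1‖ - ‖e p.2 - e p.1‖),
      mul_nonneg (hκ0 p) (sq_nonneg (‖u' p.2 - u' p.1‖ - ‖e p.2 - e p.1‖))]
  have hJ2bd : ‖∫ p, (A' p.1 p.2 - A p.1 p.2) * (κ p : ℂ) * (u' p.2 - u' p.1) *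
      (starRingEnd ℂ) (e p.2 - e p.1) ∂μ2‖
      ≤ Cess * (Real.sqrt Eu' * Real.sqrt Ee) := by
    have hnormpt : ∀ p : Eu d × Eu d,
        ‖(A' p.1 p.2 - A p.1 p.2) * (κ p : ℂ) * (u' p.2 - u' p.1) *
          (starRingEnd ℂ) (e p.2 - e p.1)‖
        = ‖A' p.1 p.2 - A p.1 p.2‖ * (κ p * (‖u' p.2 - u' p.1‖ * ‖e p.2 - e p.1‖)) := by
      intro p
      simp only [norm_mul, Complex.norm_real, RCLike.norm_conj,
        Real.norm_of_nonneg (hκ0 p)]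
      ring
    calc ‖∫ p, (A' p.1 p.2 - A p.1 p.2) * (κ p : ℂ) * (u' p.2 - u' p.1) *
          (starRingEnd ℂ) (e p.2 - e p.1) ∂μ2‖
        ≤ ∫ p, ‖(A' p.1 p.2 - A p.1 p.2) * (κ p : ℂ) * (u' p.2 - u' p.1) *
          (starRingEnd ℂ) (e p.2 - e p.1)‖ ∂μ2 := norm_integral_le_integral_norm _
      _ ≤ ∫ p, Cess * (κ p * (‖u' p.2 - u' p.1‖ * ‖e p.2 - e p.1‖)) ∂μ2 := by
          refine integral_mono_ae
            (hIdiff.norm) (hmixint.const_mul Cess) ?_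
          filter_upwards [hCessae] with p hp
          rw [hnormpt p]
          exact mul_le_mul_of_nonneg_right hp (mul_nonneg (hκ0 p)
            (mul_nonneg (norm_nonneg _) (norm_nonneg _)))
      _ = Cess * ∫ p, κ p * (‖u' p.2 - u' p.1‖ * ‖e p.2 - e p.1‖) ∂μ2 :=
          integral_const_mul _ _
      _ ≤ Cess * (Real.sqrt Eu' * Real.sqrt Ee) := by
          refine mul_le_mul_of_nonneg_left ?_ hCess0
          exact nl_cs_aux hκ0 (fun p => norm_nonneg _) (fun p => norm_nonneg _)
            hκm.aestronglyMeasurable ((memSM u' hu'S).norm) (hDem.norm)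
            (by simpa using memE u' hu'S) (by simpa using memE e heS)
  -- the key chain of inequalities
  have hchain : rc * Ee ≤ Cess * (Real.sqrt Eu' * Real.sqrt Ee) := by
    calc rc * Ee ≤ (∫ p, A p.1 p.2 * (κ p : ℂ) * (e p.2 - e p.1) *
          (starRingEnd ℂ) (e p.2 - e p.1) ∂μ2).re := hcoerE
      _ ≤ ‖∫ p, A p.1 p.2 * (κ p : ℂ) * (e p.2 - e p.1) *
          (starRingEnd ℂ) (e p.2 - e p.1) ∂μ2‖ :=
          Complex.re_le_norm _
      _ = ‖∫ p, (A' p.1 p.2 - A p.1 p.2) * (κ p : ℂ) * (u' p.2 - u' p.1) *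
          (starRingEnd ℂ) (e p.2 - e p.1) ∂μ2‖ := by rw [hJ]
      _ ≤ Cess * (Real.sqrt Eu' * Real.sqrt Ee) := hJ2bd
  -- final arithmetic
  rw [energy_eq e heS, ← hEedef]
  set a : ℝ := Real.sqrt Ee with hadef
  set b : ℝ := Real.sqrt Eu' with hbdef
  have ha0 : 0 ≤ a := Real.sqrt_nonneg _
  have hb0 : 0 ≤ b := Real.sqrt_nonneg _
  have hEea : Ee = a ^ 2 := (Real.sq_sqrt hEe0).symm
  have hEub : Eu' = b ^ 2 := (Real.sq_sqrt hEu'0).symm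
  rw [hEea] at hchain
  rw [hEub] at hbM
  rcases eq_or_lt_of_le ha0 with haz | haz
  · rw [← haz]
    positivity
  rcases eq_or_lt_of_le hb0 with hbz | hbz
  · exfalso
    rw [← hbz] at hchain
    nlinarith [mul_pos hrc (mul_pos haz haz)]
  have h2 : rc * b ≤ M := by nlinarith
  have h3 : rc * a ≤ Cess * b := by nlinarith
  rw [le_div_iff₀ (by positivity)]
  calc a * rc ^ 2 = rc * a * rc := by ring
    _ ≤ Cess * b * rc := mul_le_mul_of_nonneg_right h3 hrc.le
    _ = Cess * (rc * b) := by ring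
    _ ≤ Cess * M := mul_le_mul_of_nonneg_left h2 hCess0
end
end

section
/- Let A(x,y,ξ̂) := Ā(x,y) + Σ_{i=1}^N ξ̂_i ψ_i(x,y), where Ā, ψ₁, …, ψ_N ∈ L^∞((Ω∪Ω_δ)²) are real-valued and ξ̂ ∈ ℂ^N. Let 𝒜 ⊂ ℂ^N be an open set on which r_c/2 < Re A(x,y,ξ̂) and |A(x,y,ξ̂)| < 2R_c a.e. for some 0 < r_c ≤ R_c < ∞. Let f be a linear functional on S_δ(Ω;ℂ) with |⟨f,v⟩| ≤ M |v|_{S_δ(Ω;ℂ)} for all v, and for each ξ̂ ∈ 𝒜 let u(ξ̂) ∈ S_δ(Ω;ℂ) be the unique solution of T_δ^{A(·,·,ξ̂)}[u(ξ̂), v] = ⟨f, v⟩ for all v ∈ S_δ(Ω;ℂ). Then for every ξ̂ ∈ 𝒜 and every i ∈ {1,…,N}, the map ξ̂ ↦ u(ξ̂) admits a complex partial derivative in direction e_i: there exists w ∈ S_δ(Ω;ℂ) such that |(u(ξ̂ + ĥ e_i) − u(ξ̂))/ĥ − w|_{S_δ(Ω;ℂ)} → 0 as ĥ → 0 in ℂ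 \ {0}; in particular ξ̂ ↦ u(ξ̂) is holomorphic on 𝒜. -/
open MeasureTheory Metric Set Filter

noncomputable section

/-- The affine complex coefficient A(x,y,ξ̂) = Ā(x,y) + Σᵢ ξ̂ᵢ ψᵢ(x,y). -/
def Acoef {d : ℕ} (N : ℕ) (Abar : Eu d → Eu d → ℝ) (ψ : Fin N → Eu d → Eu d → ℝ)
    (ξ : Fin N → ℂ) (x y : Eu d) : ℂ :=
  (Abar x y : ℂ) + ∑ i, ξ i * (ψ i x y : ℂ)

namespace NLaux

open scoped ENNReal ComplexConjugate

variable {d : ℕ} {Ω : Set (Eu d)} {γ₁ : ℝ → ℝ} {δ : ℝ}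

/-- The product measure on `(Ω ∪ Ω_δ) × (Ω ∪ Ω_δ)`. -/
def pi (d : ℕ) (Ω : Set (Eu d)) (δ : ℝ) : Measure (Eu d × Eu d) :=
  (volume.restrict (NLdom d Ω δ)).prod (volume.restrict (NLdom d Ω δ))

/-- The "nonlocal gradient" map `v ↦ √γ_δ(|y-x|) (v y - v x)`. -/
def Dm (d : ℕ) (γ₁ : ℝ → ℝ) (δ : ℝ) (v : Eu d → ℂ) : Eu d × Eu d → ℂ :=
  fun p => ((Real.sqrt (NLker d γ₁ δ (dist p.2 p.1)) : ℝ) : ℂ) * (v p.2 - v p.1)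

lemma pi_eq : pi d Ω δ
    = (volume : Measure (Eu d × Eu d)).restrict (NLdom d Ω δ ×ˢ NLdom d Ω δ) := by
  rw [pi, Measure.prod_restrict, Measure.volume_eq_prod]

lemma ker_nonneg (hγ0 : ∀ r, 0 ≤ γ₁ r) (hδ : 0 < δ) (r : ℝ) : 0 ≤ NLker d γ₁ δ r :=
  mul_nonneg (inv_nonneg.mpr (pow_nonneg hδ.le _)) (hγ0 _)

lemma ker_meas (hγmono : AntitoneOn γ₁ (Ici 0)) (hδ : 0 < δ) :
    Measurable (fun p : Eu d × Eu d => NLker d γ₁ δ (dist p.2 p.1)) := by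
  have hg : Antitone (fun t => γ₁ (max t 0)) := fun a b hab =>
    hγmono (le_max_right a 0) (le_max_right b 0) (max_le_max hab le_rfl)
  have hgm : Measurable (fun t => γ₁ (max t 0)) := hg.measurable
  have hdist : Measurable (fun p : Eu d × Eu d => dist p.2 p.1) :=
    measurable_snd.dist measurable_fst
  have heq : (fun p : Eu d × Eu d => NLker d γ₁ δ (dist p.2 p.1)) =
      fun p => (δ ^ (d + 2))⁻¹ * (fun t => γ₁ (max t 0)) (dist p.2 p.1 / δ) := by
    funext p
    simp only [NLker]
    rw [max_eq_left (div_nonneg dist_nonneg hδ.le)]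
  rw [heq]
  exact ((hgm.comp (hdist.div_const δ)).const_mul _)

lemma Dm_sq (hγ0 : ∀ r, 0 ≤ γ₁ r) (hδ : 0 < δ) (v : Eu d → ℂ) (p : Eu d × Eu d) :
    ‖Dm d γ₁ δ v p‖ ^ 2 = NLker d γ₁ δ (dist p.2 p.1) * ‖v p.2 - v p.1‖ ^ 2 := by
  have hk0 : 0 ≤ NLker d γ₁ δ (dist p.2 p.1) := ker_nonneg hγ0 hδ _
  rw [Dm, norm_mul, mul_pow, Complex.norm_real, Real.norm_eq_abs,
    abs_of_nonneg (Real.sqrt_nonneg _), Real.sq_sqrt hk0]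

lemma Dm_sub (v w : Eu d → ℂ) :
    Dm d γ₁ δ (fun x => v x - w x) = fun p => Dm d γ₁ δ v p - Dm d γ₁ δ w p := by
  funext p; simp only [Dm]; ring

lemma Dm_div (v : Eu d → ℂ) (c : ℂ) :
    Dm d γ₁ δ (fun x => v x / c) = fun p => Dm d γ₁ δ v p / c := by
  funext p; simp only [Dm]; ring

lemma Dm_aesm (hγmono : AntitoneOn γ₁ (Ici 0)) (hδ : 0 < δ) {v : Eu d → ℂ}
    (hv : AEStronglyMeasurable v (volume.restrict (NLdom d Ω δ))) :
    AEStronglyMeasurable (Dm d γ₁ δ v) (pi d Ω δ) := by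
  have hk : Measurable fun p : Eu d × Eu d =>
      ((Real.sqrt (NLker d γ₁ δ (dist p.2 p.1)) : ℝ) : ℂ) :=
    Complex.measurable_ofReal.comp
      (Real.continuous_sqrt.measurable.comp (ker_meas hγmono hδ))
  have hs : AEStronglyMeasurable (fun p : Eu d × Eu d => v p.2 - v p.1) (pi d Ω δ) :=
    hv.comp_snd.sub hv.comp_fst
  exact hk.aestronglyMeasurable.mul hs

lemma memS_memLp_Dm (hγ0 : ∀ r, 0 ≤ γ₁ r) (hγmono : AntitoneOn γ₁ (Ici 0)) (hδ : 0 < δ)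
    {v : Eu d → ℂ} (hv : NLMemSC d Ω γ₁ δ v) : MemLp (Dm d γ₁ δ v) 2 (pi d Ω δ) := by
  have ha := Dm_aesm (Ω := Ω) hγmono hδ hv.1.aestronglyMeasurable
  rw [memLp_two_iff_integrable_sq_norm ha]
  have h2 := hv.2.1
  rw [IntegrableOn, ← pi_eq] at h2
  exact h2.congr (ae_of_all _ fun p => (Dm_sq hγ0 hδ v p).symm)

lemma memS_of (hγ0 : ∀ r, 0 ≤ γ₁ r) (hγmono : AntitoneOn γ₁ (Ici 0)) (hδ : 0 < δ)
    {v : Eu d → ℂ} (h1 : MemLp v 2 (volume.restrict (NLdom d Ω δ)))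
    (h2 : MemLp (Dm d γ₁ δ v) 2 (pi d Ω δ))
    (h3 : ∀ᵐ x ∂(volume.restrict (NLcollar d Ω δ)), v x = 0) : NLMemSC d Ω γ₁ δ v := by
  refine ⟨h1, ?_, h3⟩
  have h4 := (memLp_two_iff_integrable_sq_norm h2.aestronglyMeasurable).mp h2
  rw [IntegrableOn, ← pi_eq]
  exact h4.congr (ae_of_all _ fun p => Dm_sq hγ0 hδ v p)

/-- The energy written as an integral over the product measure. -/
def en (d : ℕ) (Ω : Set (Eu d)) (γ₁ : ℝ → ℝ) (δ : ℝ) (v : Eu d → ℂ) : ℝ :=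
  ∫ p, ‖Dm d γ₁ δ v p‖ ^ 2 ∂(pi d Ω δ)

lemma en_nonneg (v : Eu d → ℂ) : 0 ≤ en d Ω γ₁ δ v :=
  integral_nonneg fun p => sq_nonneg _

lemma energy_eq (hγ0 : ∀ r, 0 ≤ γ₁ r) (hγmono : AntitoneOn γ₁ (Ici 0)) (hδ : 0 < δ)
    {v : Eu d → ℂ} (hv : NLMemSC d Ω γ₁ δ v) :
    NLenergySqC d Ω γ₁ δ v = en d Ω γ₁ δ v := by
  have h2 : Integrable
      (Function.uncurry fun x y : Eu d => NLker d γ₁ δ (dist y x) * ‖v y - v x‖ ^ 2)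
      ((volume.restrict (NLdom d Ω δ)).prod (volume.restrict (NLdom d Ω δ))) := by
    have h := hv.2.1
    rw [IntegrableOn, ← pi_eq] at h
    exact h
  rw [NLenergySqC, MeasureTheory.integral_integral h2, en, pi]
  exact integral_congr_ae (ae_of_all _ fun p => (Dm_sq hγ0 hδ v p).symm)


lemma toReal_eLpNorm_eq_sqrt {α : Type*} [MeasurableSpace α] {μ : Measure α} {f : α → ℂ}
    (hf : MemLp f 2 μ) :
    (eLpNorm f 2 μ).toReal = Real.sqrt (∫ a, ‖f a‖ ^ 2 ∂μ) := by
  have hint : Integrable (fun a => ‖f a‖ ^ 2) μ :=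
    (memLp_two_iff_integrable_sq_norm hf.aestronglyMeasurable).mp hf
  have h1 : eLpNorm f 2 μ = (∫⁻ a, ((‖f a‖₊ : ℝ≥0∞)) ^ (2:ℝ) ∂μ) ^ (1/2 : ℝ) := by
    rw [eLpNorm_eq_lintegral_rpow_enorm_toReal (by norm_num) (by norm_num)]
    norm_num
    rfl
  have h2 : (∫⁻ a, ((‖f a‖₊ : ℝ≥0∞)) ^ (2:ℝ) ∂μ) = ENNReal.ofReal (∫ a, ‖f a‖ ^ 2 ∂μ) := by
    rw [ofReal_integral_eq_lintegral_ofReal hint (ae_of_all _ fun a => sq_nonneg _)]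
    refine lintegral_congr fun a => ?_
    rw [ENNReal.ofReal_pow (norm_nonneg _), ofReal_norm,
      show ((2:ℝ)) = ((2:ℕ):ℝ) by norm_num, ENNReal.rpow_natCast]
    rfl
  rw [h1, h2, ← ENNReal.toReal_rpow,
    ENNReal.toReal_ofReal (integral_nonneg fun a => sq_nonneg _), Real.sqrt_eq_rpow]

/-- The sesquilinear pairing over the product measure. -/
def J (d : ℕ) (Ω : Set (Eu d)) (δ : ℝ) (Bt f g : Eu d × Eu d → ℂ) : ℂ :=
  ∫ p, Bt p * (f p * conj (g p)) ∂(pi d Ω δ)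

lemma integrable_pair {f g : Eu d × Eu d → ℂ} (hf : MemLp f 2 (pi d Ω δ))
    (hg : MemLp g 2 (pi d Ω δ)) :
    Integrable (fun p => f p * conj (g p)) (pi d Ω δ) := by
  have h1 : Integrable (fun p => ‖f p‖ ^ 2 + ‖g p‖ ^ 2) (pi d Ω δ) :=
    ((memLp_two_iff_integrable_sq_norm hf.aestronglyMeasurable).mp hf).add
      ((memLp_two_iff_integrable_sq_norm hg.aestronglyMeasurable).mp hg)
  have hgc : AEStronglyMeasurable (fun p => conj (g p)) (pi d Ω δ) :=
    continuous_star.comp_aestronglyMeasurable hg.aestronglyMeasurable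
  refine h1.mono' (hf.aestronglyMeasurable.mul hgc) (ae_of_all _ fun p => ?_)
  show ‖f p * conj (g p)‖ ≤ ‖f p‖ ^ 2 + ‖g p‖ ^ 2
  rw [norm_mul, RCLike.norm_conj]
  nlinarith [norm_nonneg (f p), norm_nonneg (g p), sq_nonneg (‖f p‖ - ‖g p‖)]

lemma integrable_BFG {Bt f g : Eu d × Eu d → ℂ} (hB : AEStronglyMeasurable Bt (pi d Ω δ))
    {K : ℝ} (hK : ∀ᵐ p ∂(pi d Ω δ), ‖Bt p‖ ≤ K)
    (hf : MemLp f 2 (pi d Ω δ)) (hg : MemLp g 2 (pi d Ω δ)) :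
    Integrable (fun p => Bt p * (f p * conj (g p))) (pi d Ω δ) :=
  (integrable_pair hf hg).bdd_mul hB hK

lemma Tform_eq (hγ0 : ∀ r, 0 ≤ γ₁ r) (hγmono : AntitoneOn γ₁ (Ici 0)) (hδ : 0 < δ)
    {B : Eu d → Eu d → ℂ}
    (hB : AEStronglyMeasurable (fun p : Eu d × Eu d => B p.1 p.2) (pi d Ω δ))
    {K : ℝ} (hK : ∀ᵐ p ∂(pi d Ω δ), ‖B p.1 p.2‖ ≤ K)
    {v w : Eu d → ℂ} (hv : NLMemSC d Ω γ₁ δ v) (hw : NLMemSC d Ω γ₁ δ w) :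
    NLTformC d Ω γ₁ δ B v w
      = J d Ω δ (fun p => B p.1 p.2) (Dm d γ₁ δ v) (Dm d γ₁ δ w) := by
  have hint := integrable_BFG hB hK (memS_memLp_Dm hγ0 hγmono hδ hv)
    (memS_memLp_Dm hγ0 hγmono hδ hw)
  have hptw : ∀ p : Eu d × Eu d,
      B p.1 p.2 * ((NLker d γ₁ δ (dist p.1 p.2) : ℝ) : ℂ) * (v p.2 - v p.1)
          * conj (w p.2 - w p.1)
        = B p.1 p.2 * (Dm d γ₁ δ v p * conj (Dm d γ₁ δ w p)) := by
    intro p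
    have hk0 : 0 ≤ NLker d γ₁ δ (dist p.2 p.1) := ker_nonneg hγ0 hδ _
    have hss : ((Real.sqrt (NLker d γ₁ δ (dist p.2 p.1)) : ℝ) : ℂ)
        * ((Real.sqrt (NLker d γ₁ δ (dist p.2 p.1)) : ℝ) : ℂ)
        = ((NLker d γ₁ δ (dist p.2 p.1) : ℝ) : ℂ) := by
      rw [← Complex.ofReal_mul, Real.mul_self_sqrt hk0]
    rw [dist_comm p.1 p.2]
    simp only [Dm, map_mul, Complex.conj_ofReal]
    linear_combination
      (B p.1 p.2 * (v p.2 - v p.1) * conj (w p.2 - w p.1)) * hss.symm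
  have hunc : Integrable
      (Function.uncurry fun x y : Eu d =>
        B x y * ((NLker d γ₁ δ (dist x y) : ℝ) : ℂ) * (v y - v x) * conj (w y - w x))
      ((volume.restrict (NLdom d Ω δ)).prod (volume.restrict (NLdom d Ω δ))) := by
    exact (hint.congr (ae_of_all _ fun p => (hptw p).symm))
  rw [NLTformC, MeasureTheory.integral_integral hunc, J, pi]
  exact integral_congr_ae (ae_of_all _ fun p => hptw p)

lemma sq_integrable {f : Eu d × Eu d → ℂ} (hf : MemLp f 2 (pi d Ω δ)) :
    Integrable (fun p => ‖f p‖ ^ 2) (pi d Ω δ) :=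
  (memLp_two_iff_integrable_sq_norm hf.aestronglyMeasurable).mp hf

lemma J_norm_le {Bt f g : Eu d × Eu d → ℂ} (hB : AEStronglyMeasurable Bt (pi d Ω δ))
    {K : ℝ} (hK0 : 0 ≤ K) (hK : ∀ᵐ p ∂(pi d Ω δ), ‖Bt p‖ ≤ K)
    (hf : MemLp f 2 (pi d Ω δ)) (hg : MemLp g 2 (pi d Ω δ)) :
    ‖J d Ω δ Bt f g‖ ≤ K * (Real.sqrt (∫ p, ‖f p‖ ^ 2 ∂(pi d Ω δ))
      * Real.sqrt (∫ p, ‖g p‖ ^ 2 ∂(pi d Ω δ))) := by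
  have hpair := integrable_pair hf hg
  have hprod : Integrable (fun p => ‖f p‖ * ‖g p‖) (pi d Ω δ) := by
    refine hpair.norm.congr (ae_of_all _ fun p => ?_)
    show ‖f p * conj (g p)‖ = ‖f p‖ * ‖g p‖
    rw [norm_mul, RCLike.norm_conj]
  have h1 : ‖J d Ω δ Bt f g‖ ≤ ∫ p, K * (‖f p‖ * ‖g p‖) ∂(pi d Ω δ) := by
    refine (norm_integral_le_integral_norm _).trans ?_
    refine integral_mono_ae (integrable_BFG hB hK hf hg).norm (hprod.const_mul K) ?_
    filter_upwards [hK] with p hp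
    show ‖Bt p * (f p * conj (g p))‖ ≤ K * (‖f p‖ * ‖g p‖)
    rw [norm_mul, norm_mul, RCLike.norm_conj]
    exact mul_le_mul_of_nonneg_right hp (by positivity)
  have hconj : (2:ℝ).HolderConjugate 2 := Real.HolderConjugate.two_two
  have hfn : MemLp (fun p => ‖f p‖) (ENNReal.ofReal 2) (pi d Ω δ) := by
    rw [show ENNReal.ofReal 2 = 2 by norm_num]; exact hf.norm
  have hgn : MemLp (fun p => ‖g p‖) (ENNReal.ofReal 2) (pi d Ω δ) := by
    rw [show ENNReal.ofReal 2 = 2 by norm_num]; exact hg.norm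
  have h2 := integral_mul_le_Lp_mul_Lq_of_nonneg hconj
    (ae_of_all _ fun p => norm_nonneg (f p)) (ae_of_all _ fun p => norm_nonneg (g p)) hfn hgn
  have hre : ∀ h : Eu d × Eu d → ℂ, (∫ p, ‖h p‖ ^ (2:ℝ) ∂(pi d Ω δ))
      = ∫ p, ‖h p‖ ^ (2:ℕ) ∂(pi d Ω δ) := by
    intro h
    refine integral_congr_ae (ae_of_all _ fun p => ?_)
    show ‖h p‖ ^ (2:ℝ) = ‖h p‖ ^ (2:ℕ)
    rw [show ((2:ℝ)) = ((2:ℕ):ℝ) by norm_num, Real.rpow_natCast]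
  rw [hre f, hre g] at h2
  have hsq : ∀ h : Eu d × Eu d → ℂ, (∫ p, ‖h p‖ ^ (2:ℕ) ∂(pi d Ω δ)) ^ (1/2 : ℝ)
      = Real.sqrt (∫ p, ‖h p‖ ^ (2:ℕ) ∂(pi d Ω δ)) := by
    intro h; rw [Real.sqrt_eq_rpow]
  rw [hsq f, hsq g] at h2
  rw [J]
  calc ‖∫ p, Bt p * (f p * conj (g p)) ∂(pi d Ω δ)‖
      ≤ ∫ p, K * (‖f p‖ * ‖g p‖) ∂(pi d Ω δ) := h1
    _ = K * ∫ p, ‖f p‖ * ‖g p‖ ∂(pi d Ω δ) := integral_const_mul K _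
    _ ≤ K * (Real.sqrt (∫ p, ‖f p‖ ^ 2 ∂(pi d Ω δ))
        * Real.sqrt (∫ p, ‖g p‖ ^ 2 ∂(pi d Ω δ))) := mul_le_mul_of_nonneg_left h2 hK0

lemma J_coercive {Bt : Eu d × Eu d → ℂ} (hB : AEStronglyMeasurable Bt (pi d Ω δ))
    {K : ℝ} (hK : ∀ᵐ p ∂(pi d Ω δ), ‖Bt p‖ ≤ K) {c : ℝ}
    (hc : ∀ᵐ p ∂(pi d Ω δ), c ≤ (Bt p).re)
    {f : Eu d × Eu d → ℂ} (hf : MemLp f 2 (pi d Ω δ)) :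
    c * ∫ p, ‖f p‖ ^ 2 ∂(pi d Ω δ) ≤ (J d Ω δ Bt f f).re := by
  have hint := integrable_BFG hB hK hf hf
  have hre := integral_re hint
  simp only [RCLike.re_to_complex] at hre
  have hintre := hint.re
  simp only [RCLike.re_to_complex] at hintre
  rw [J, ← hre, ← integral_const_mul]
  refine integral_mono_ae ((sq_integrable hf).const_mul c) hintre ?_
  filter_upwards [hc] with p hp
  show c * ‖f p‖ ^ 2 ≤ (Bt p * (f p * conj (f p))).re
  have hcc : Bt p * (f p * conj (f p)) = Bt p * ((‖f p‖ ^ 2 : ℝ) : ℂ) := by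
    rw [Complex.mul_conj, Complex.normSq_eq_norm_sq]
  rw [hcc]
  simp only [Complex.mul_re, Complex.ofReal_re, Complex.ofReal_im, mul_zero, sub_zero]
  exact mul_le_mul_of_nonneg_right hp (sq_nonneg _)

lemma eu_nontrivial (hd : 1 ≤ d) : Nontrivial (Eu d) := by
  refine ⟨⟨EuclideanSpace.single ⟨0, hd⟩ (1:ℝ), 0, ?_⟩⟩
  intro h
  have := congrArg (fun v => v ⟨0, hd⟩) h
  simp [EuclideanSpace.single_apply] at this

lemma exists_frontier_seg (hΩopen : IsOpen Ω) {x y : Eu d} (hx : x ∈ Ω) (hy : y ∉ Ω) :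
    ∃ z ∈ frontier Ω, dist z y ≤ dist x y := by
  set f : ℝ → Eu d := fun t => x + t • (y - x) with hf_def
  have hf : Continuous f := continuous_const.add (continuous_id.smul continuous_const)
  set A := {t : ℝ | t ∈ Icc (0:ℝ) 1 ∧ f t ∈ Ω} with hA_def
  have hf0 : f 0 = x := by simp [hf_def]
  have hf1 : f 1 = y := by simp [hf_def]
  have h0A : (0:ℝ) ∈ A := ⟨⟨le_rfl, zero_le_one⟩, by rw [hf0]; exact hx⟩
  have hbdd : BddAbove A := ⟨1, fun t ht => ht.1.2⟩
  set T := sSup A with hT_def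
  have hT0 : 0 ≤ T := le_csSup hbdd h0A
  have hT1 : T ≤ 1 := csSup_le ⟨0, h0A⟩ fun t ht => ht.1.2
  have hTc : f T ∈ closure Ω := by
    have h1 : T ∈ closure A := csSup_mem_closure ⟨0, h0A⟩ hbdd
    have h2 : f T ∈ f '' closure A := ⟨T, h1, rfl⟩
    have h3 : f '' closure A ⊆ closure (f '' A) := image_closure_subset_closure_image hf
    refine closure_mono ?_ (h3 h2)
    rintro - ⟨t, ht, rfl⟩
    exact ht.2
  have hTnot : f T ∉ Ω := by
    intro hmem
    have hTlt : T < 1 := by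
      rcases lt_or_eq_of_le hT1 with h | h
      · exact h
      · rw [h, hf1] at hmem; exact absurd hmem hy
    have hop : IsOpen (f ⁻¹' Ω) := hΩopen.preimage hf
    rcases Metric.isOpen_iff.mp hop T hmem with ⟨ε, hε, hball⟩
    set t' := min (T + ε/2) 1 with ht'_def
    have ht'T : T < t' := lt_min (by linarith) hTlt
    have ht'mem : t' ∈ Metric.ball T ε := by
      rw [Metric.mem_ball, Real.dist_eq, abs_of_nonneg (by linarith)]
      have : t' ≤ T + ε/2 := min_le_left _ _
      linarith
    have ht'A : t' ∈ A := ⟨⟨by linarith, min_le_right _ _⟩, hball ht'mem⟩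
    exact absurd (le_csSup hbdd ht'A) (not_le.mpr ht'T)
  refine ⟨f T, ?_, ?_⟩
  · rw [hΩopen.frontier_eq]
    exact ⟨hTc, hTnot⟩
  · have heq : f T - y = (1 - T) • (x - y) := by
      simp only [hf_def]
      module
    rw [dist_eq_norm, dist_eq_norm, heq, norm_smul, Real.norm_eq_abs,
      abs_of_nonneg (by linarith)]
    nlinarith [norm_nonneg (x - y)]

lemma ball_subset_NLdom (hΩopen : IsOpen Ω) {x : Eu d} (hx : x ∈ Ω) {y : Eu d}
    (hyd : dist y x < δ) : y ∈ NLdom d Ω δ := by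
  by_cases hy : y ∈ Ω
  · exact Or.inl hy
  · refine Or.inr ⟨hy, ?_⟩
    rcases exists_frontier_seg hΩopen hx hy with ⟨z, hz, hdz⟩
    calc Metric.infDist y (frontier Ω) ≤ dist y z := Metric.infDist_le_dist_of_mem hz
      _ = dist z y := dist_comm _ _
      _ ≤ dist x y := hdz
      _ = dist y x := dist_comm _ _
      _ < δ := hyd

lemma exists_r0 (hd : 1 ≤ d) (hγ0 : ∀ r, 0 ≤ γ₁ r)
    (hγnorm : (∫ z in Metric.ball (0 : Eu d) 1, γ₁ ‖z‖ * ‖z‖ ^ 2) = (d : ℝ)) :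
    ∃ r₀ : ℝ, 0 < r₀ ∧ r₀ < 1 ∧ 0 < γ₁ r₀ := by
  by_contra hcon
  push_neg at hcon
  have hzero : ∀ r : ℝ, 0 < r → r < 1 → γ₁ r = 0 := fun r h1 h2 =>
    le_antisymm (hcon r h1 h2) (hγ0 r)
  haveI : Nontrivial (Eu d) := eu_nontrivial hd
  have hne : ∀ᵐ z ∂(volume : Measure (Eu d)), z ≠ 0 := by
    rw [MeasureTheory.ae_iff]
    have : {z : Eu d | ¬ z ≠ 0} = {(0 : Eu d)} := by ext z; simp
    rw [this]
    exact measure_singleton 0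
  have hae : ∀ᵐ z ∂(volume.restrict (Metric.ball (0 : Eu d) 1)), γ₁ ‖z‖ * ‖z‖ ^ 2 = 0 := by
    rw [ae_restrict_iff' measurableSet_ball]
    filter_upwards [hne] with z hz hzball
    have h0 : 0 < ‖z‖ := norm_pos_iff.mpr hz
    have h1 : ‖z‖ < 1 := by simpa [Metric.mem_ball] using hzball
    rw [hzero _ h0 h1, zero_mul]
  have : (∫ z in Metric.ball (0 : Eu d) 1, γ₁ ‖z‖ * ‖z‖ ^ 2) = 0 :=
    integral_eq_zero_of_ae hae
  rw [hγnorm] at this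
  have : (1:ℝ) ≤ 0 := by
    calc (1:ℝ) ≤ (d : ℝ) := by exact_mod_cast hd
      _ = 0 := this
  linarith

lemma coord_abs_le_norm (x : Eu d) (i : Fin d) : |x i| ≤ ‖x‖ := by
  rw [EuclideanSpace.norm_eq]
  rw [show |x i| = Real.sqrt (x i ^ 2) by rw [Real.sqrt_sq_eq_abs]]
  refine Real.sqrt_le_sqrt ?_
  have : ∀ j ∈ Finset.univ, (0:ℝ) ≤ ‖x j‖ ^ 2 := fun j _ => sq_nonneg _
  calc x i ^ 2 = ‖x i‖ ^ 2 := by rw [Real.norm_eq_abs, sq_abs]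
    _ ≤ ∑ j, ‖x j‖ ^ 2 := Finset.single_le_sum this (Finset.mem_univ i)

lemma enorm_sq (z : ℂ) : (‖z‖₊ : ℝ≥0∞) ^ 2 = ENNReal.ofReal (‖z‖ ^ 2) := by
  rw [ENNReal.ofReal_pow (norm_nonneg _), ofReal_norm]
  rfl

lemma nnorm_sq_triangle (a b : ℂ) :
    (‖a‖₊ : ℝ≥0∞) ^ 2 ≤ 2 * (‖b - a‖₊ : ℝ≥0∞) ^ 2 + 2 * (‖b‖₊ : ℝ≥0∞) ^ 2 := by
  have h1 : ‖a‖ ≤ ‖b - a‖ + ‖b‖ := by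
    calc ‖a‖ = ‖b - (b - a)‖ := by rw [sub_sub_cancel]
      _ ≤ ‖b‖ + ‖b - a‖ := norm_sub_le _ _
      _ = ‖b - a‖ + ‖b‖ := by ring
  have hr : ‖a‖ ^ 2 ≤ 2 * ‖b - a‖ ^ 2 + 2 * ‖b‖ ^ 2 := by
    nlinarith [norm_nonneg (b - a), norm_nonneg b, norm_nonneg a, sq_nonneg (‖b - a‖ - ‖b‖)]
  rw [enorm_sq, enorm_sq, enorm_sq, show ((2:ℝ≥0∞)) = ENNReal.ofReal 2 by norm_num,
    ← ENNReal.ofReal_mul (by norm_num), ← ENNReal.ofReal_mul (by norm_num),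
    ← ENNReal.ofReal_add (by positivity) (by positivity)]
  exact ENNReal.ofReal_le_ofReal hr

/-- The weighted nonlocal energy in `ℝ≥0∞`. -/
def EPT (d : ℕ) (Ω : Set (Eu d)) (γ₁ : ℝ → ℝ) (δ : ℝ) (v : Eu d → ℂ) : ℝ≥0∞ :=
  ∫⁻ p, ENNReal.ofReal (NLker d γ₁ δ (dist p.2 p.1))
    * (‖v p.2 - v p.1‖₊ : ℝ≥0∞) ^ 2 ∂(pi d Ω δ)

lemma EPT_eq (hγ0 : ∀ r, 0 ≤ γ₁ r) (hδ : 0 < δ) (v : Eu d → ℂ) :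
    EPT d Ω γ₁ δ v = ∫⁻ p, (‖Dm d γ₁ δ v p‖₊ : ℝ≥0∞) ^ 2 ∂(pi d Ω δ) := by
  unfold EPT
  refine lintegral_congr fun p => ?_
  rw [enorm_sq (v p.2 - v p.1), ← ENNReal.ofReal_mul (ker_nonneg hγ0 hδ _),
    ← Dm_sq hγ0 hδ v p, enorm_sq]

/-- The nonlocal Poincaré inequality with volumetric boundary constraint. -/
lemma poincare (hd : 1 ≤ d) (hΩopen : IsOpen Ω) (hΩbdd : Bornology.IsBounded Ω)
    (hγmono : AntitoneOn γ₁ (Ici 0)) (hδ : 0 < δ)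
    {ρ c₀ : ℝ} (hρ : 0 < ρ) (hρδ : 2 * ρ < δ) (hc₀ : 0 < c₀)
    (hker : ∀ r : ℝ, 0 ≤ r → r ≤ 2 * ρ → c₀ ≤ NLker d γ₁ δ r) :
    ∃ C : ℝ≥0∞, C ≠ ⊤ ∧ ∀ v : Eu d → ℂ,
      AEStronglyMeasurable v (volume.restrict (NLdom d Ω δ)) →
      (∀ᵐ x ∂(volume.restrict (NLcollar d Ω δ)), v x = 0) →
      (∫⁻ x in NLdom d Ω δ, (‖v x‖₊ : ℝ≥0∞) ^ 2 ∂volume)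
        ≤ C * EPT d Ω γ₁ δ v := by
  classical
  obtain ⟨R0, hR0⟩ := isBounded_iff_forall_norm_le.mp hΩbdd
  set R : ℝ := max R0 0 with hR_def
  have hR : ∀ x ∈ Ω, ‖x‖ ≤ R := fun x hx => (hR0 x hx).trans (le_max_left _ _)
  set i₀ : Fin d := ⟨0, hd⟩
  set e : Eu d := EuclideanSpace.single i₀ (1:ℝ) with he_def
  have he_norm : ‖e‖ = 1 := by rw [he_def, EuclideanSpace.norm_single]; norm_num
  have he_i : e i₀ = 1 := by rw [he_def]; simp [EuclideanSpace.single_apply]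
  set ρ' : ℝ := ρ / 2 with hρ'_def
  have hρ'0 : 0 < ρ' := by positivity
  set ω := volume (Metric.ball (0 : Eu d) ρ') with hω_def
  have hω0 : ω ≠ 0 := (measure_ball_pos volume 0 hρ'0).ne'
  have hωt : ω ≠ ⊤ := measure_ball_lt_top.ne
  set VΩ := volume Ω with hVΩ_def
  have hVt : VΩ ≠ ⊤ := hΩbdd.measure_lt_top.ne
  set ce := ENNReal.ofReal c₀ with hce_def
  have hce0 : ce ≠ 0 := by
    rw [hce_def, Ne, ENNReal.ofReal_eq_zero, not_le]; exact hc₀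
  set D := NLdom d Ω δ with hD_def
  set Γ := NLcollar d Ω δ with hΓ_def
  set L : ℕ → Set (Eu d) := fun k => Ω ∩ {x : Eu d | R - k * ρ' < x i₀} with hL_def
  have hLmeas : ∀ k, MeasurableSet (L k) := by
    intro k
    refine hΩopen.measurableSet.inter ?_
    have hcont : Continuous fun x : Eu d => x i₀ := by
      exact (EuclideanSpace.proj (𝕜 := ℝ) i₀).continuous
    exact measurableSet_lt measurable_const hcont.measurable
  -- the Tonelli identity
  have htonelli : ∀ v : Eu d → ℂ, AEStronglyMeasurable v (volume.restrict D) →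
      (∫⁻ x in D, ∫⁻ y in D, ENNReal.ofReal (NLker d γ₁ δ (dist y x))
        * (‖v y - v x‖₊ : ℝ≥0∞) ^ 2 ∂volume ∂volume) = EPT d Ω γ₁ δ v := by
    intro v hv
    have hker' : Measurable fun p : Eu d × Eu d =>
        ENNReal.ofReal (NLker d γ₁ δ (dist p.2 p.1)) :=
      ENNReal.measurable_ofReal.comp (ker_meas hγmono hδ)
    have hmeas : AEMeasurable (fun p : Eu d × Eu d =>
        ENNReal.ofReal (NLker d γ₁ δ (dist p.2 p.1)) * (‖v p.2 - v p.1‖₊ : ℝ≥0∞) ^ 2)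
        ((volume.restrict D).prod (volume.restrict D)) :=
      hker'.aemeasurable.mul ((hv.comp_snd.sub hv.comp_fst).enorm.pow_const 2)
    unfold EPT pi
    exact (MeasureTheory.lintegral_prod _ hmeas).symm
  -- the induction over slabs
  have hmain : ∀ k : ℕ, ∃ C : ℝ≥0∞, C ≠ ⊤ ∧ ∀ v : Eu d → ℂ,
      AEStronglyMeasurable v (volume.restrict D) →
      (∀ᵐ x ∂(volume.restrict Γ), v x = 0) →
      (∫⁻ x in L k, (‖v x‖₊ : ℝ≥0∞) ^ 2 ∂volume) ≤ C * EPT d Ω γ₁ δ v := by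
    intro k
    induction k with
    | zero =>
      refine ⟨1, ENNReal.one_ne_top, fun v hv hvΓ => ?_⟩
      have hempty : L 0 = ∅ := by
        rw [hL_def]
        ext x
        simp only [Set.mem_inter_iff, Set.mem_setOf_eq, Set.mem_empty_iff_false, iff_false,
          not_and, not_lt, Nat.cast_zero, zero_mul, sub_zero]
        intro hx
        exact (coord_abs_le_norm x i₀).trans (hR x hx) |>.trans' (le_abs_self _)
      rw [hempty]
      simp
    | succ k ih =>
      obtain ⟨C, hCt, hC⟩ := ih
      refine ⟨ω⁻¹ * (2 * ce⁻¹ + 2 * C * VΩ), ?_, ?_⟩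
      · refine ENNReal.mul_ne_top (ENNReal.inv_ne_top.mpr hω0) ?_
        refine ENNReal.add_ne_top.mpr ⟨?_, ?_⟩
        · exact ENNReal.mul_ne_top (by norm_num) (ENNReal.inv_ne_top.mpr hce0)
        · exact ENNReal.mul_ne_top (ENNReal.mul_ne_top (by norm_num) hCt) hVt
      intro v hv hvΓ
      set g : Eu d → ℝ≥0∞ := fun x => ∫⁻ y in D, ENNReal.ofReal (NLker d γ₁ δ (dist y x))
          * (‖v y - v x‖₊ : ℝ≥0∞) ^ 2 ∂volume with hg_def
      have hΓ0 : (∫⁻ y in Γ, (‖v y‖₊ : ℝ≥0∞) ^ 2 ∂volume) = 0 := by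
        have hae : ∀ᵐ y ∂(volume.restrict Γ), (‖v y‖₊ : ℝ≥0∞) ^ 2 = 0 := by
          filter_upwards [hvΓ] with y hy
          rw [hy]; simp
        rw [lintegral_congr_ae hae, lintegral_zero]
      -- pointwise estimate
      have hpoint : ∀ x ∈ L (k+1),
          ω * (‖v x‖₊ : ℝ≥0∞) ^ 2 ≤ 2 * ce⁻¹ * g x + 2 * (C * EPT d Ω γ₁ δ v) := by
        rintro x ⟨hxΩ, hxcoord⟩
        set S := Metric.ball (x + ρ • e) ρ' with hS_def
        have hdistS : ∀ y ∈ S, dist y x < ρ' + ρ := by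
          intro y hy
          have h1 : dist y (x + ρ • e) < ρ' := Metric.mem_ball.mp hy
          have h2 : dist (x + ρ • e) x = ρ := by
            rw [dist_eq_norm, add_sub_cancel_left, norm_smul, Real.norm_eq_abs,
              abs_of_pos hρ, he_norm, mul_one]
          calc dist y x ≤ dist y (x + ρ • e) + dist (x + ρ • e) x := dist_triangle _ _ _
            _ < ρ' + ρ := by rw [h2]; linarith
        have hSD : S ⊆ D := by
          intro y hy
          refine ball_subset_NLdom hΩopen hxΩ ?_
          calc dist y x < ρ' + ρ := hdistS y hy
            _ < δ := by rw [hρ'_def]; linarith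
        have hSk : ∀ y ∈ S, y ∈ Ω → y ∈ L k := by
          intro y hy hyΩ
          refine ⟨hyΩ, ?_⟩
          have h1 : |(y - (x + ρ • e)) i₀| ≤ ‖y - (x + ρ • e)‖ :=
            coord_abs_le_norm _ _
          have h2 : ‖y - (x + ρ • e)‖ < ρ' := by
            rw [← dist_eq_norm]; exact Metric.mem_ball.mp hy
          have h3 : (y - (x + ρ • e)) i₀ = y i₀ - x i₀ - ρ := by
            simp [PiLp.sub_apply, PiLp.add_apply, PiLp.smul_apply, he_i, smul_eq_mul]
            ring
          have h4 : |y i₀ - x i₀ - ρ| < ρ' := by rw [← h3]; exact h1.trans_lt h2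
          have h5 : y i₀ > x i₀ + ρ - ρ' := by
            rcases abs_lt.mp h4 with ⟨ha, _⟩
            linarith
          simp only [Set.mem_setOf_eq]
          simp only [Set.mem_setOf_eq] at hxcoord
          have hexp : ((k:ℝ) + 1) * ρ' = (k:ℝ) * ρ' + ρ' := by ring
          push_cast
          push_cast at hxcoord
          have hhalf : ρ - ρ' = ρ' := by rw [hρ'_def]; ring
          linarith
        have hωS : volume S = ω := by
          rw [hS_def, hω_def, Measure.addHaar_ball_center]
        -- triangle + integrate over S
        have hmeasS : AEMeasurable (fun y => (‖v y - v x‖₊ : ℝ≥0∞) ^ 2)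
            (volume.restrict S) := by
          have hvS : AEStronglyMeasurable v (volume.restrict S) :=
            hv.mono_measure (Measure.restrict_mono hSD le_rfl)
          exact ((hvS.sub aestronglyMeasurable_const).enorm.pow_const 2)
        have step1 : ω * (‖v x‖₊ : ℝ≥0∞) ^ 2
            ≤ ∫⁻ y in S, (2 * (‖v y - v x‖₊ : ℝ≥0∞) ^ 2 + 2 * (‖v y‖₊ : ℝ≥0∞) ^ 2) ∂volume := by
          rw [← hωS]
          have h0 : (‖v x‖₊ : ℝ≥0∞) ^ 2 * volume S
              = ∫⁻ _ in S, (‖v x‖₊ : ℝ≥0∞) ^ 2 ∂volume := (setLIntegral_const S _).symm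
          rw [mul_comm, h0]
          exact lintegral_mono fun y => nnorm_sq_triangle (v x) (v y)
        have step2 : (∫⁻ y in S, (2 * (‖v y - v x‖₊ : ℝ≥0∞) ^ 2
              + 2 * (‖v y‖₊ : ℝ≥0∞) ^ 2) ∂volume)
            = (∫⁻ y in S, 2 * (‖v y - v x‖₊ : ℝ≥0∞) ^ 2 ∂volume)
              + ∫⁻ y in S, 2 * (‖v y‖₊ : ℝ≥0∞) ^ 2 ∂volume :=
          lintegral_add_left' (hmeasS.const_mul 2) _
        have step3 : (∫⁻ y in S, 2 * (‖v y - v x‖₊ : ℝ≥0∞) ^ 2 ∂volume)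
            ≤ 2 * ce⁻¹ * g x := by
          have hptw : ∀ᵐ y ∂(volume.restrict S), 2 * (‖v y - v x‖₊ : ℝ≥0∞) ^ 2
              ≤ 2 * ce⁻¹ * (ENNReal.ofReal (NLker d γ₁ δ (dist y x))
                * (‖v y - v x‖₊ : ℝ≥0∞) ^ 2) := by
            rw [ae_restrict_iff' Metric.isOpen_ball.measurableSet]
            refine ae_of_all _ fun y hy => ?_
            have hdy : dist y x ≤ 2 * ρ := by
              have := hdistS y hy
              rw [hρ'_def] at this
              linarith
            have hker2 : ce ≤ ENNReal.ofReal (NLker d γ₁ δ (dist y x)) :=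
              ENNReal.ofReal_le_ofReal (hker _ dist_nonneg hdy)
            calc 2 * (‖v y - v x‖₊ : ℝ≥0∞) ^ 2
                = 2 * ((ce⁻¹ * ce) * (‖v y - v x‖₊ : ℝ≥0∞) ^ 2) := by
                  rw [ENNReal.inv_mul_cancel hce0 ENNReal.ofReal_ne_top, one_mul]
              _ ≤ 2 * ((ce⁻¹ * ENNReal.ofReal (NLker d γ₁ δ (dist y x)))
                  * (‖v y - v x‖₊ : ℝ≥0∞) ^ 2) := by
                  gcongr
              _ = 2 * ce⁻¹ * (ENNReal.ofReal (NLker d γ₁ δ (dist y x))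
                  * (‖v y - v x‖₊ : ℝ≥0∞) ^ 2) := by ring
          calc (∫⁻ y in S, 2 * (‖v y - v x‖₊ : ℝ≥0∞) ^ 2 ∂volume)
              ≤ ∫⁻ y in S, 2 * ce⁻¹ * (ENNReal.ofReal (NLker d γ₁ δ (dist y x))
                  * (‖v y - v x‖₊ : ℝ≥0∞) ^ 2) ∂volume := lintegral_mono_ae hptw
            _ = 2 * ce⁻¹ * ∫⁻ y in S, ENNReal.ofReal (NLker d γ₁ δ (dist y x))
                  * (‖v y - v x‖₊ : ℝ≥0∞) ^ 2 ∂volume := by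
                  rw [lintegral_const_mul' _ _
                    (ENNReal.mul_ne_top (by norm_num) (ENNReal.inv_ne_top.mpr hce0))]
            _ ≤ 2 * ce⁻¹ * g x := by
                  rw [hg_def]
                  exact mul_le_mul_right (lintegral_mono_set hSD) _
        have step4 : (∫⁻ y in S, 2 * (‖v y‖₊ : ℝ≥0∞) ^ 2 ∂volume) ≤ 2 * (C * EPT d Ω γ₁ δ v) := by
          have hsplit : S ⊆ (L k) ∪ Γ := by
            intro y hy
            rcases hSD hy with hyΩ | hyΓ
            · exact Or.inl (hSk y hy hyΩ)
            · exact Or.inr hyΓ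
          calc (∫⁻ y in S, 2 * (‖v y‖₊ : ℝ≥0∞) ^ 2 ∂volume)
              = 2 * ∫⁻ y in S, (‖v y‖₊ : ℝ≥0∞) ^ 2 ∂volume := by
                rw [lintegral_const_mul' _ _ (by norm_num)]
            _ ≤ 2 * ∫⁻ y in (L k) ∪ Γ, (‖v y‖₊ : ℝ≥0∞) ^ 2 ∂volume :=
                mul_le_mul_right (lintegral_mono_set hsplit) _
            _ ≤ 2 * ((∫⁻ y in L k, (‖v y‖₊ : ℝ≥0∞) ^ 2 ∂volume)
                + ∫⁻ y in Γ, (‖v y‖₊ : ℝ≥0∞) ^ 2 ∂volume) :=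
                mul_le_mul_right (lintegral_union_le _ _ _) _
            _ = 2 * ∫⁻ y in L k, (‖v y‖₊ : ℝ≥0∞) ^ 2 ∂volume := by rw [hΓ0, add_zero]
            _ ≤ 2 * (C * EPT d Ω γ₁ δ v) := mul_le_mul_right (hC v hv hvΓ) _
        calc ω * (‖v x‖₊ : ℝ≥0∞) ^ 2
            ≤ (∫⁻ y in S, 2 * (‖v y - v x‖₊ : ℝ≥0∞) ^ 2 ∂volume)
              + ∫⁻ y in S, 2 * (‖v y‖₊ : ℝ≥0∞) ^ 2 ∂volume := by
              rw [← step2]; exact step1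
          _ ≤ 2 * ce⁻¹ * g x + 2 * (C * EPT d Ω γ₁ δ v) := add_le_add step3 step4
      -- integrate the pointwise estimate
      have hint1 : ω * (∫⁻ x in L (k+1), (‖v x‖₊ : ℝ≥0∞) ^ 2 ∂volume)
          ≤ 2 * ce⁻¹ * EPT d Ω γ₁ δ v + 2 * C * VΩ * EPT d Ω γ₁ δ v := by
        calc ω * (∫⁻ x in L (k+1), (‖v x‖₊ : ℝ≥0∞) ^ 2 ∂volume)
            = ∫⁻ x in L (k+1), ω * (‖v x‖₊ : ℝ≥0∞) ^ 2 ∂volume := by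
              rw [lintegral_const_mul' _ _ hωt]
          _ ≤ ∫⁻ x in L (k+1), (2 * ce⁻¹ * g x + 2 * (C * EPT d Ω γ₁ δ v)) ∂volume := by
              refine lintegral_mono_ae ?_
              rw [ae_restrict_iff' (hLmeas (k+1))]
              exact ae_of_all _ hpoint
          _ = (∫⁻ x in L (k+1), 2 * ce⁻¹ * g x ∂volume)
              + (2 * (C * EPT d Ω γ₁ δ v)) * volume (L (k+1)) := by
              rw [lintegral_add_right' _ aemeasurable_const, setLIntegral_const]
          _ ≤ (∫⁻ x in L (k+1), 2 * ce⁻¹ * g x ∂volume) + (2 * (C * EPT d Ω γ₁ δ v)) * VΩ := by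
              refine add_le_add_right (mul_le_mul_right (measure_mono ?_) _) _
              exact Set.inter_subset_left
          _ ≤ 2 * ce⁻¹ * EPT d Ω γ₁ δ v + (2 * (C * EPT d Ω γ₁ δ v)) * VΩ := by
              refine add_le_add_left ?_ _
              rw [lintegral_const_mul' _ _
                (ENNReal.mul_ne_top (by norm_num) (ENNReal.inv_ne_top.mpr hce0))]
              refine mul_le_mul_right ?_ _
              have hsub : L (k+1) ⊆ D := fun x hx => Or.inl hx.1
              calc (∫⁻ x in L (k+1), g x ∂volume) ≤ ∫⁻ x in D, g x ∂volume :=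
                  lintegral_mono_set hsub
                _ = EPT d Ω γ₁ δ v := htonelli v hv
          _ = 2 * ce⁻¹ * EPT d Ω γ₁ δ v + 2 * C * VΩ * EPT d Ω γ₁ δ v := by ring
      calc (∫⁻ x in L (k+1), (‖v x‖₊ : ℝ≥0∞) ^ 2 ∂volume)
          = ω⁻¹ * (ω * ∫⁻ x in L (k+1), (‖v x‖₊ : ℝ≥0∞) ^ 2 ∂volume) := by
            rw [← mul_assoc, ENNReal.inv_mul_cancel hω0 hωt, one_mul]
        _ ≤ ω⁻¹ * (2 * ce⁻¹ * EPT d Ω γ₁ δ v + 2 * C * VΩ * EPT d Ω γ₁ δ v) := mul_le_mul_right hint1 _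
        _ = ω⁻¹ * (2 * ce⁻¹ + 2 * C * VΩ) * EPT d Ω γ₁ δ v := by ring
  -- choose the number of slabs
  obtain ⟨K, hK⟩ := exists_nat_gt ((R + R) / ρ')
  have hKρ : R + R < K * ρ' := by
    rw [div_lt_iff₀ hρ'0] at hK
    exact hK
  have hΩL : Ω ⊆ L K := by
    intro x hx
    refine ⟨hx, ?_⟩
    have h1 : -R ≤ x i₀ := by
      have := coord_abs_le_norm x i₀
      have h2 := hR x hx
      rcases abs_le.mp (this.trans h2) with ⟨h3, _⟩
      exact h3
    simp only [Set.mem_setOf_eq]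
    linarith
  obtain ⟨C, hCt, hC⟩ := hmain K
  refine ⟨C, hCt, fun v hv hvΓ => ?_⟩
  have hDsplit : D = Ω ∪ Γ := rfl
  have hΓ0 : (∫⁻ y in Γ, (‖v y‖₊ : ℝ≥0∞) ^ 2 ∂volume) = 0 := by
    have hae : ∀ᵐ y ∂(volume.restrict Γ), (‖v y‖₊ : ℝ≥0∞) ^ 2 = 0 := by
      filter_upwards [hvΓ] with y hy
      rw [hy]; simp
    rw [lintegral_congr_ae hae, lintegral_zero]
  calc (∫⁻ x in D, (‖v x‖₊ : ℝ≥0∞) ^ 2 ∂volume)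
      ≤ (∫⁻ x in Ω, (‖v x‖₊ : ℝ≥0∞) ^ 2 ∂volume)
        + ∫⁻ x in Γ, (‖v x‖₊ : ℝ≥0∞) ^ 2 ∂volume := by
        rw [hDsplit]; exact lintegral_union_le _ _ _
    _ = ∫⁻ x in Ω, (‖v x‖₊ : ℝ≥0∞) ^ 2 ∂volume := by rw [hΓ0, add_zero]
    _ ≤ ∫⁻ x in L K, (‖v x‖₊ : ℝ≥0∞) ^ 2 ∂volume := lintegral_mono_set hΩL
    _ ≤ C * EPT d Ω γ₁ δ v := hC v hv hvΓ

lemma eLpNorm_two_eq {α : Type*} [MeasurableSpace α] {μ : Measure α} (f : α → ℂ) :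
    eLpNorm f 2 μ = (∫⁻ a, (‖f a‖₊ : ℝ≥0∞) ^ 2 ∂μ) ^ (1/2 : ℝ) := by
  rw [eLpNorm_eq_lintegral_rpow_enorm_toReal (by norm_num) (by norm_num)]
  norm_num
  rfl

/-- Completeness: a Cauchy sequence in the energy seminorm with elements of `S_δ`
has a limit in `S_δ`. -/
lemma limit_exists (hΩopen : IsOpen Ω)
    (hγ0 : ∀ r, 0 ≤ γ₁ r) (hγmono : AntitoneOn γ₁ (Ici 0)) (hδ : 0 < δ)
    {CP : ℝ≥0∞} (hCPt : CP ≠ ⊤)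
    (hCP : ∀ v : Eu d → ℂ, AEStronglyMeasurable v (volume.restrict (NLdom d Ω δ)) →
      (∀ᵐ x ∂(volume.restrict (NLcollar d Ω δ)), v x = 0) →
      (∫⁻ x in NLdom d Ω δ, (‖v x‖₊ : ℝ≥0∞) ^ 2 ∂volume) ≤ CP * EPT d Ω γ₁ δ v)
    {v : ℕ → Eu d → ℂ} (hS : ∀ n, NLMemSC d Ω γ₁ δ (v n))
    {b : ℕ → ℝ} (hb : Tendsto b atTop (nhds 0))
    (hcau : ∀ N n m, N ≤ n → N ≤ m →
      Real.sqrt (en d Ω γ₁ δ (fun x => v n x - v m x)) ≤ b N) :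
    ∃ w : Eu d → ℂ, NLMemSC d Ω γ₁ δ w ∧
      Tendsto (fun n => Real.sqrt (en d Ω γ₁ δ (fun x => v n x - w x))) atTop (nhds 0) := by
  classical
  set D := NLdom d Ω δ with hD_def
  set Γ := NLcollar d Ω δ with hΓ_def
  set π := pi d Ω δ with hπ_def
  set μD := volume.restrict D with hμD_def
  have hΓD : Γ ⊆ D := fun x hx => Or.inr hx
  have hΓmeas : MeasurableSet Γ := by
    have hset : Γ = Ωᶜ ∩ (fun x => Metric.infDist x (frontier Ω)) ⁻¹' Iio δ := by
      ext x
      simp [hΓ_def, NLcollar]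
    rw [hset]
    exact hΩopen.measurableSet.compl.inter
      ((Metric.continuous_infDist_pt _).measurable measurableSet_Iio)
  have hDmem : ∀ n, MemLp (Dm d γ₁ δ (v n)) 2 π := fun n =>
    memS_memLp_Dm hγ0 hγmono hδ (hS n)
  -- the sequence of Dm's in L², with distance controlled by `b`
  set F : ℕ → Lp ℂ 2 π := fun n => (hDmem n).toLp _ with hF_def
  have hdistF : ∀ n m, dist (F n) (F m)
      = Real.sqrt (en d Ω γ₁ δ (fun x => v n x - v m x)) := by
    intro n m
    have hsubmem : MemLp (fun p => Dm d γ₁ δ (v n) p - Dm d γ₁ δ (v m) p) 2 π :=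
      (hDmem n).sub (hDmem m)
    have h1 : dist (F n) (F m) = ‖F n - F m‖ := dist_eq_norm _ _
    have h2 : F n - F m = ((hDmem n).sub (hDmem m)).toLp _ := ((hDmem n).toLp_sub (hDmem m)).symm
    rw [h1, h2, Lp.norm_toLp, toReal_eLpNorm_eq_sqrt ((hDmem n).sub (hDmem m))]
    congr 1
    rw [en, Dm_sub]
    simp only [Pi.sub_apply]
    rfl
  have hcauF : CauchySeq F := by
    refine cauchySeq_of_le_tendsto_0 b (fun n m N hn hm => ?_) hb
    rw [hdistF n m]
    exact hcau N n m hn hm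
  obtain ⟨G, hG⟩ := cauchySeq_tendsto_of_complete hcauF
  -- the sequence itself in L²(D), Cauchy by Poincaré
  set cp : ℝ := (CP ^ (1/2 : ℝ)).toReal with hcp_def
  have hLp2 : ∀ n m : ℕ, eLpNorm (fun x => v n x - v m x) 2 μD
      ≤ CP ^ (1/2 : ℝ) * eLpNorm (fun p => Dm d γ₁ δ (v n) p - Dm d γ₁ δ (v m) p) 2 π := by
    intro n m
    have haesm : AEStronglyMeasurable (fun x => v n x - v m x) μD :=
      (hS n).1.aestronglyMeasurable.sub (hS m).1.aestronglyMeasurable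
    have hzero : ∀ᵐ x ∂(volume.restrict Γ), v n x - v m x = 0 := by
      filter_upwards [(hS n).2.2, (hS m).2.2] with x h1 h2
      rw [h1, h2, sub_zero]
    have hP := hCP (fun x => v n x - v m x) haesm hzero
    have hEPT : EPT d Ω γ₁ δ (fun x => v n x - v m x)
        = ∫⁻ p, (‖Dm d γ₁ δ (v n) p - Dm d γ₁ δ (v m) p‖₊ : ℝ≥0∞) ^ 2 ∂π := by
      rw [EPT_eq hγ0 hδ, Dm_sub]
    rw [eLpNorm_two_eq, eLpNorm_two_eq]
    calc (∫⁻ x in D, (‖v n x - v m x‖₊ : ℝ≥0∞) ^ 2 ∂volume) ^ (1/2 : ℝ)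
        ≤ (CP * EPT d Ω γ₁ δ (fun x => v n x - v m x)) ^ (1/2 : ℝ) := by
          refine ENNReal.rpow_le_rpow ?_ (by norm_num)
          exact hP
      _ = CP ^ (1/2:ℝ) * (∫⁻ p, (‖Dm d γ₁ δ (v n) p - Dm d γ₁ δ (v m) p‖₊ : ℝ≥0∞) ^ 2 ∂π)
            ^ (1/2:ℝ) := by
          rw [ENNReal.mul_rpow_of_nonneg _ _ (by norm_num), hEPT]
  set vLp : ℕ → Lp ℂ 2 μD := fun n => (hS n).1.toLp _ with hvLp_def
  have hdistv : ∀ N n m, N ≤ n → N ≤ m → dist (vLp n) (vLp m) ≤ cp * b N := by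
    intro N n m hn hm
    have h1 : dist (vLp n) (vLp m) = (eLpNorm (fun x => v n x - v m x) 2 μD).toReal := by
      rw [dist_eq_norm, ← (hS n).1.toLp_sub (hS m).1, Lp.norm_toLp]
      rfl
    have hfin : CP ^ (1/2:ℝ) * eLpNorm (fun p => Dm d γ₁ δ (v n) p - Dm d γ₁ δ (v m) p) 2 π ≠ ⊤ :=
      ENNReal.mul_ne_top (ENNReal.rpow_ne_top_of_nonneg (by norm_num) hCPt)
        ((hDmem n).sub (hDmem m)).eLpNorm_ne_top
    have h2 := ENNReal.toReal_mono hfin (hLp2 n m)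
    rw [h1]
    refine h2.trans ?_
    rw [ENNReal.toReal_mul, ← hcp_def]
    refine mul_le_mul_of_nonneg_left ?_ ENNReal.toReal_nonneg
    have hsub : MemLp (fun p => Dm d γ₁ δ (v n) p - Dm d γ₁ δ (v m) p) 2 π :=
      (hDmem n).sub (hDmem m)
    rw [toReal_eLpNorm_eq_sqrt hsub]
    have h3 := hcau N n m hn hm
    rw [en, Dm_sub] at h3
    exact h3
  have hcauv : CauchySeq vLp :=
    cauchySeq_of_le_tendsto_0 (fun N => cp * b N)
      (fun n m N hn hm => hdistv N n m hn hm) (by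
      simpa using hb.const_mul cp)
  obtain ⟨W, hW⟩ := cauchySeq_tendsto_of_complete hcauv
  -- eLpNorm convergence statements
  have hWc : ∀ n, eLpNorm (fun x => v n x - W x) 2 μD = ENNReal.ofReal (dist (vLp n) W) := by
    intro n
    have hae : (fun x => v n x - W x) =ᵐ[μD] fun x => (vLp n - W : Lp ℂ 2 μD) x := by
      filter_upwards [Lp.coeFn_sub (vLp n) W, (hS n).1.coeFn_toLp] with x h1 h2
      rw [h1]
      simp only [Pi.sub_apply]
      rw [h2]
    rw [eLpNorm_congr_ae hae, dist_eq_norm, Lp.norm_def,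
      ENNReal.ofReal_toReal (Lp.eLpNorm_ne_top _)]
  have hGc : ∀ n, eLpNorm (fun p => Dm d γ₁ δ (v n) p - G p) 2 π
      = ENNReal.ofReal (dist (F n) G) := by
    intro n
    have hae : (fun p => Dm d γ₁ δ (v n) p - G p) =ᵐ[π] fun p => (F n - G : Lp ℂ 2 π) p := by
      filter_upwards [Lp.coeFn_sub (F n) G, (hDmem n).coeFn_toLp] with p h1 h2
      rw [h1]
      simp only [Pi.sub_apply]
      rw [h2]
    rw [eLpNorm_congr_ae hae, dist_eq_norm, Lp.norm_def,
      ENNReal.ofReal_toReal (Lp.eLpNorm_ne_top _)]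
  have htendW : Tendsto (fun n => eLpNorm (fun x => v n x - W x) 2 μD) atTop (nhds 0) := by
    have h1 : Tendsto (fun n => dist (vLp n) W) atTop (nhds 0) :=
      tendsto_iff_dist_tendsto_zero.mp hW
    have h2 := ENNReal.tendsto_ofReal h1
    rw [ENNReal.ofReal_zero] at h2
    exact Tendsto.congr (fun n => (hWc n).symm) h2
  have htendG : Tendsto (fun n => eLpNorm (fun p => Dm d γ₁ δ (v n) p - G p) 2 π)
      atTop (nhds 0) := by
    have h1 : Tendsto (fun n => dist (F n) G) atTop (nhds 0) :=
      tendsto_iff_dist_tendsto_zero.mp hG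
    have h2 := ENNReal.tendsto_ofReal h1
    rw [ENNReal.ofReal_zero] at h2
    exact Tendsto.congr (fun n => (hGc n).symm) h2
  -- a.e. convergent subsequences
  have hmeasv : ∀ n, AEStronglyMeasurable (v n) μD := fun n => (hS n).1.aestronglyMeasurable
  have him1 : TendstoInMeasure μD v atTop (W : Eu d → ℂ) := by
    refine tendstoInMeasure_of_tendsto_eLpNorm (p := 2) (by norm_num) hmeasv
      (Lp.aestronglyMeasurable W) ?_
    exact htendW
  obtain ⟨ns, hns_mono, hns_ae⟩ := him1.exists_seq_tendsto_ae
  have him2 : TendstoInMeasure π (fun k => Dm d γ₁ δ (v (ns k))) atTop (G : Eu d × Eu d → ℂ) := by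
    refine tendstoInMeasure_of_tendsto_eLpNorm (p := 2) (by norm_num)
      (fun k => (hDmem (ns k)).aestronglyMeasurable) (Lp.aestronglyMeasurable G) ?_
    exact htendG.comp hns_mono.tendsto_atTop
  obtain ⟨ms, hms_mono, hms_ae⟩ := him2.exists_seq_tendsto_ae
  set φ : ℕ → ℕ := fun k => ns (ms k) with hφ_def
  have hφ_ae : ∀ᵐ x ∂μD, Tendsto (fun k => v (φ k) x) atTop (nhds (W x)) := by
    filter_upwards [hns_ae] with x hx
    exact hx.comp hms_mono.tendsto_atTop
  -- transfer a.e. convergence to the product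
  have hq1 : ∀ᵐ p : Eu d × Eu d ∂π, Tendsto (fun k => v (φ k) p.1) atTop (nhds (W p.1)) :=
    (Measure.quasiMeasurePreserving_fst).ae hφ_ae
  have hq2 : ∀ᵐ p : Eu d × Eu d ∂π, Tendsto (fun k => v (φ k) p.2) atTop (nhds (W p.2)) :=
    (Measure.quasiMeasurePreserving_snd).ae hφ_ae
  -- identify G with Dm W a.e.
  have hGDm : (G : Eu d × Eu d → ℂ) =ᵐ[π] Dm d γ₁ δ (W : Eu d → ℂ) := by
    filter_upwards [hq1, hq2, hms_ae] with p h1 h2 h3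
    have h4 : Tendsto (fun k => Dm d γ₁ δ (v (φ k)) p) atTop (nhds (Dm d γ₁ δ (W : Eu d → ℂ) p)) := by
      simp only [Dm]
      exact (h2.sub h1).const_mul _
    exact tendsto_nhds_unique h3 h4
  -- W vanishes on the collar
  have hWΓ : ∀ᵐ x ∂(volume.restrict Γ), (W : Eu d → ℂ) x = 0 := by
    have hres : volume.restrict Γ = μD.restrict Γ := by
      rw [hμD_def, Measure.restrict_restrict hΓmeas, Set.inter_eq_left.mpr hΓD]
    have hconv : ∀ᵐ x ∂(volume.restrict Γ), Tendsto (fun k => v (φ k) x) atTop (nhds (W x)) := by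
      rw [hres]
      exact ae_restrict_of_ae hφ_ae
    have hzero : ∀ᵐ x ∂(volume.restrict Γ), ∀ k, v (φ k) x = 0 :=
      ae_all_iff.mpr fun k => (hS (φ k)).2.2
    filter_upwards [hconv, hzero] with x h1 h2
    have h3 : Tendsto (fun _ : ℕ => (0:ℂ)) atTop (nhds (W x)) := by
      simpa only [h2] using h1
    exact tendsto_nhds_unique h3 tendsto_const_nhds
  have hWDmem : MemLp (Dm d γ₁ δ (W : Eu d → ℂ)) 2 π :=
    MemLp.ae_eq hGDm (Lp.memLp G)
  have hWS : NLMemSC d Ω γ₁ δ (W : Eu d → ℂ) :=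
    memS_of hγ0 hγmono hδ (Lp.memLp W) hWDmem hWΓ
  refine ⟨(W : Eu d → ℂ), hWS, ?_⟩
  -- convergence of energies to the limit
  have hkey : ∀ n, Real.sqrt (en d Ω γ₁ δ (fun x => v n x - W x))
      = (eLpNorm (fun p => Dm d γ₁ δ (v n) p - G p) 2 π).toReal := by
    intro n
    have hsubmem : MemLp (fun p => Dm d γ₁ δ (v n) p - Dm d γ₁ δ (W : Eu d → ℂ) p) 2 π :=
      (hDmem n).sub hWDmem
    have h1 : Real.sqrt (en d Ω γ₁ δ (fun x => v n x - W x))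
        = (eLpNorm (fun p => Dm d γ₁ δ (v n) p - Dm d γ₁ δ (W : Eu d → ℂ) p) 2 π).toReal := by
      rw [toReal_eLpNorm_eq_sqrt hsubmem]
      congr 1
      rw [en, Dm_sub]
    rw [h1]
    refine congrArg _ ?_
    refine eLpNorm_congr_ae ?_
    filter_upwards [hGDm] with p hp
    rw [hp]
  have h2 : Tendsto (fun n => (eLpNorm (fun p => Dm d γ₁ δ (v n) p - G p) 2 π).toReal)
      atTop (nhds 0) := by
    have := tendsto_iff_dist_tendsto_zero.mp hG
    refine Tendsto.congr (fun n => ?_) this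
    rw [hGc n, ENNReal.toReal_ofReal dist_nonneg]
  exact Tendsto.congr (fun n => (hkey n).symm) h2

lemma J_div_left (Bt f g : Eu d × Eu d → ℂ) (c : ℂ) :
    J d Ω δ Bt (fun p => f p / c) g = c⁻¹ * J d Ω δ Bt f g := by
  unfold J
  rw [← integral_const_mul]
  refine integral_congr_ae (ae_of_all _ fun p => ?_)
  show Bt p * ((f p / c) * conj (g p)) = c⁻¹ * (Bt p * (f p * conj (g p)))
  rw [div_eq_mul_inv]
  ring

lemma J_sub_left {Bt : Eu d × Eu d → ℂ} (hB : AEStronglyMeasurable Bt (pi d Ω δ))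
    {K : ℝ} (hK : ∀ᵐ p ∂(pi d Ω δ), ‖Bt p‖ ≤ K) {f₁ f₂ g : Eu d × Eu d → ℂ}
    (hf₁ : MemLp f₁ 2 (pi d Ω δ)) (hf₂ : MemLp f₂ 2 (pi d Ω δ))
    (hg : MemLp g 2 (pi d Ω δ)) :
    J d Ω δ Bt (fun p => f₁ p - f₂ p) g = J d Ω δ Bt f₁ g - J d Ω δ Bt f₂ g := by
  unfold J
  rw [← integral_sub (integrable_BFG hB hK hf₁ hg) (integrable_BFG hB hK hf₂ hg)]
  refine integral_congr_ae (ae_of_all _ fun p => ?_)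
  show Bt p * ((f₁ p - f₂ p) * conj (g p))
    = Bt p * (f₁ p * conj (g p)) - Bt p * (f₂ p * conj (g p))
  ring

lemma J_add_coef {B₁ B₂ : Eu d × Eu d → ℂ}
    (hB₁ : AEStronglyMeasurable B₁ (pi d Ω δ)) (hB₂ : AEStronglyMeasurable B₂ (pi d Ω δ))
    {K₁ K₂ : ℝ} (hK₁ : ∀ᵐ p ∂(pi d Ω δ), ‖B₁ p‖ ≤ K₁) (hK₂ : ∀ᵐ p ∂(pi d Ω δ), ‖B₂ p‖ ≤ K₂)
    {f g : Eu d × Eu d → ℂ} (hf : MemLp f 2 (pi d Ω δ)) (hg : MemLp g 2 (pi d Ω δ)) (c : ℂ) :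
    J d Ω δ (fun p => B₁ p + c * B₂ p) f g
      = J d Ω δ B₁ f g + c * J d Ω δ B₂ f g := by
  unfold J
  rw [← integral_const_mul, ← integral_add (integrable_BFG hB₁ hK₁ hf hg)
    (((integrable_BFG hB₂ hK₂ hf hg)).const_mul c)]
  refine integral_congr_ae (ae_of_all _ fun p => ?_)
  show (B₁ p + c * B₂ p) * (f p * conj (g p))
    = B₁ p * (f p * conj (g p)) + c * (B₂ p * (f p * conj (g p)))
  ring

lemma sqrt_en_le {c s T : ℝ} (hc : 0 < c) (hs : 0 ≤ s) (hT : 0 ≤ T)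
    (h : c * s ^ 2 ≤ T * s) : s ≤ T / c := by
  rcases eq_or_lt_of_le hs with h0 | h0
  · rw [← h0]; positivity
  · rw [le_div_iff₀ hc]
    nlinarith

lemma sqrt_en_eq {a b : Eu d → ℂ}
    (hsub : MemLp (fun p => Dm d γ₁ δ a p - Dm d γ₁ δ b p) 2 (pi d Ω δ)) :
    Real.sqrt (en d Ω γ₁ δ (fun x => a x - b x))
      = (eLpNorm (fun p => Dm d γ₁ δ a p - Dm d γ₁ δ b p) 2 (pi d Ω δ)).toReal := by
  rw [toReal_eLpNorm_eq_sqrt hsub]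
  congr 1
  rw [en, Dm_sub]

lemma memS_sub (hγ0 : ∀ r, 0 ≤ γ₁ r) (hγmono : AntitoneOn γ₁ (Ici 0)) (hδ : 0 < δ)
    {v w : Eu d → ℂ} (hv : NLMemSC d Ω γ₁ δ v) (hw : NLMemSC d Ω γ₁ δ w) :
    NLMemSC d Ω γ₁ δ (fun x => v x - w x) := by
  refine memS_of hγ0 hγmono hδ (hv.1.sub hw.1) ?_ ?_
  · rw [Dm_sub]
    exact (memS_memLp_Dm hγ0 hγmono hδ hv).sub (memS_memLp_Dm hγ0 hγmono hδ hw)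
  · filter_upwards [hv.2.2, hw.2.2] with x h1 h2
    rw [h1, h2, sub_zero]

lemma memS_div (hγ0 : ∀ r, 0 ≤ γ₁ r) (hγmono : AntitoneOn γ₁ (Ici 0)) (hδ : 0 < δ)
    {v : Eu d → ℂ} (hv : NLMemSC d Ω γ₁ δ v) (c : ℂ) :
    NLMemSC d Ω γ₁ δ (fun x => v x / c) := by
  have hdiv : ∀ z : ℂ, z / c = c⁻¹ * z := fun z => by rw [div_eq_mul_inv]; ring
  refine memS_of hγ0 hγmono hδ ?_ ?_ ?_
  · have h1 := hv.1.const_mul c⁻¹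
    exact MemLp.ae_eq (ae_of_all _ fun x => (hdiv (v x)).symm) h1
  · rw [Dm_div]
    have h2 := (memS_memLp_Dm hγ0 hγmono hδ hv).const_mul c⁻¹
    refine MemLp.ae_eq (ae_of_all _ fun p => (hdiv _).symm) h2
  · filter_upwards [hv.2.2] with x h1
    rw [h1, zero_div]

lemma sqrt_en_triangle (hγ0 : ∀ r, 0 ≤ γ₁ r) (hγmono : AntitoneOn γ₁ (Ici 0)) (hδ : 0 < δ)
    {a b c : Eu d → ℂ} (ha : MemLp (Dm d γ₁ δ a) 2 (pi d Ω δ))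
    (hb : MemLp (Dm d γ₁ δ b) 2 (pi d Ω δ)) (hc : MemLp (Dm d γ₁ δ c) 2 (pi d Ω δ)) :
    Real.sqrt (en d Ω γ₁ δ (fun x => a x - c x))
      ≤ Real.sqrt (en d Ω γ₁ δ (fun x => a x - b x))
        + Real.sqrt (en d Ω γ₁ δ (fun x => b x - c x)) := by
  have hac : MemLp (fun p => Dm d γ₁ δ a p - Dm d γ₁ δ c p) 2 (pi d Ω δ) := ha.sub hc
  have hab : MemLp (fun p => Dm d γ₁ δ a p - Dm d γ₁ δ b p) 2 (pi d Ω δ) := ha.sub hb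
  have hbc : MemLp (fun p => Dm d γ₁ δ b p - Dm d γ₁ δ c p) 2 (pi d Ω δ) := hb.sub hc
  rw [sqrt_en_eq hac, sqrt_en_eq hab, sqrt_en_eq hbc]
  have hsum : eLpNorm (fun p => Dm d γ₁ δ a p - Dm d γ₁ δ c p) 2 (pi d Ω δ)
      ≤ eLpNorm (fun p => Dm d γ₁ δ a p - Dm d γ₁ δ b p) 2 (pi d Ω δ)
        + eLpNorm (fun p => Dm d γ₁ δ b p - Dm d γ₁ δ c p) 2 (pi d Ω δ) := by
    have heq : (fun p => Dm d γ₁ δ a p - Dm d γ₁ δ c p)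
        = (fun p => (Dm d γ₁ δ a p - Dm d γ₁ δ b p) + (Dm d γ₁ δ b p - Dm d γ₁ δ c p)) := by
      funext p; ring
    rw [heq]
    exact eLpNorm_add_le hab.aestronglyMeasurable hbc.aestronglyMeasurable one_le_two
  calc (eLpNorm (fun p => Dm d γ₁ δ a p - Dm d γ₁ δ c p) 2 (pi d Ω δ)).toReal
      ≤ (eLpNorm (fun p => Dm d γ₁ δ a p - Dm d γ₁ δ b p) 2 (pi d Ω δ)
        + eLpNorm (fun p => Dm d γ₁ δ b p - Dm d γ₁ δ c p) 2 (pi d Ω δ)).toReal := by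
        refine ENNReal.toReal_mono ?_ hsum
        exact ENNReal.add_ne_top.mpr ⟨hab.eLpNorm_ne_top, hbc.eLpNorm_ne_top⟩
    _ = _ := ENNReal.toReal_add hab.eLpNorm_ne_top hbc.eLpNorm_ne_top
end NLaux
/-- Analytic regularity (holomorphic parameter dependence) of the solution of the
parametric nonlocal diffusion problem: on the open set 𝒜 where the complex uniform
ellipticity r_c/2 < Re A, |A| < 2R_c holds, the solution map ξ̂ ↦ u(ξ̂) admits complex
partial derivatives in each coordinate direction, in the S_δ(Ω;ℂ) seminorm; in
particular it is holomorphic on 𝒜. -/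
theorem solution_holomorphic_in_parameters
    (d : ℕ) (hd : 1 ≤ d) (Ω : Set (Eu d))
    (hΩopen : IsOpen Ω) (hΩbdd : Bornology.IsBounded Ω) (hΩne : Ω.Nonempty)
    (γ₁ : ℝ → ℝ) (hγ0 : ∀ r, 0 ≤ γ₁ r) (hγmono : AntitoneOn γ₁ (Ici 0))
    (hγsupp : ∀ r, 1 < r → γ₁ r = 0)
    (hγnorm : (∫ z in ball (0 : Eu d) 1, γ₁ ‖z‖ * ‖z‖ ^ 2) = (d : ℝ))
    (δ : ℝ) (hδ : 0 < δ)
    (N : ℕ) (Abar : Eu d → Eu d → ℝ) (ψ : Fin N → Eu d → Eu d → ℝ)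
    (hAbarMeas : Measurable fun p : Eu d × Eu d => Abar p.1 p.2)
    (hψMeas : ∀ i, Measurable fun p : Eu d × Eu d => ψ i p.1 p.2)
    (hAbarBdd : ∃ K : ℝ, ∀ᵐ p ∂(volume.restrict (NLdom d Ω δ ×ˢ NLdom d Ω δ)),
      |Abar p.1 p.2| ≤ K)
    (hψBdd : ∀ i, ∃ K : ℝ, ∀ᵐ p ∂(volume.restrict (NLdom d Ω δ ×ˢ NLdom d Ω δ)),
      |ψ i p.1 p.2| ≤ K)
    (𝒜 : Set (Fin N → ℂ)) (h𝒜open : IsOpen 𝒜)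
    (rc Rc : ℝ) (hrc : 0 < rc) (hrcRc : rc ≤ Rc)
    (hell : ∀ ξ ∈ 𝒜, ∀ᵐ p ∂(volume.restrict (NLdom d Ω δ ×ˢ NLdom d Ω δ)),
      rc / 2 < (Acoef N Abar ψ ξ p.1 p.2).re ∧ ‖Acoef N Abar ψ ξ p.1 p.2‖ < 2 * Rc)
    (F : (Eu d → ℂ) → ℂ)
    (hFadd : ∀ v w : Eu d → ℂ, F (v + w) = F v + F w)
    (hFsmul : ∀ (c : ℂ) (v : Eu d → ℂ), F (c • v) = c * F v)
    (M : ℝ) (hM0 : 0 ≤ M)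
    (hFbd : ∀ v : Eu d → ℂ, NLMemSC d Ω γ₁ δ v →
      ‖F v‖ ≤ M * Real.sqrt (NLenergySqC d Ω γ₁ δ v))
    (u : (Fin N → ℂ) → Eu d → ℂ)
    (hu : ∀ ξ ∈ 𝒜, NLMemSC d Ω γ₁ δ (u ξ) ∧
      ∀ v : Eu d → ℂ, NLMemSC d Ω γ₁ δ v →
        NLTformC d Ω γ₁ δ (Acoef N Abar ψ ξ) (u ξ) v = F v) :
    ∀ ξ ∈ 𝒜, ∀ i : Fin N, ∃ w : Eu d → ℂ, NLMemSC d Ω γ₁ δ w ∧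
      Tendsto (fun hz : ℂ => Real.sqrt (NLenergySqC d Ω γ₁ δ
          (fun x => (u (ξ + hz • (Pi.single i 1 : Fin N → ℂ)) x - u ξ x) / hz - w x)))
        (nhdsWithin 0 {(0 : ℂ)}ᶜ) (nhds 0) := by
  intro ξ hξ i
  classical
  -- kernel constants for the Poincaré inequality
  obtain ⟨r₀, hr₀0, hr₀1, hr₀pos⟩ := NLaux.exists_r0 hd hγ0 hγnorm
  have hρ0 : 0 < r₀ * δ / 4 := by positivity
  have hρδ : 2 * (r₀ * δ / 4) < δ := by nlinarith
  have hc₀ : 0 < (δ ^ (d + 2))⁻¹ * γ₁ r₀ :=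
    mul_pos (inv_pos.mpr (pow_pos hδ _)) hr₀pos
  have hker : ∀ rr : ℝ, 0 ≤ rr → rr ≤ 2 * (r₀ * δ / 4) →
      (δ ^ (d + 2))⁻¹ * γ₁ r₀ ≤ NLker d γ₁ δ rr := by
    intro rr h0 h2
    rw [NLker]
    refine mul_le_mul_of_nonneg_left ?_ (inv_nonneg.mpr (pow_nonneg hδ.le _))
    refine hγmono (Set.mem_Ici.mpr (div_nonneg h0 hδ.le)) (Set.mem_Ici.mpr hr₀0.le) ?_
    rw [div_le_iff₀ hδ]
    nlinarith
  obtain ⟨CP, hCPt, hCP⟩ := NLaux.poincare hd hΩopen hΩbdd hγmono hδ hρ0 hρδ hc₀ hker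
  -- coefficient data
  set At : (Fin N → ℂ) → Eu d × Eu d → ℂ := fun ζ p => Acoef N Abar ψ ζ p.1 p.2 with hAt_def
  have hAt_meas : ∀ ζ, AEStronglyMeasurable (At ζ) (NLaux.pi d Ω δ) := by
    intro ζ
    refine Measurable.aestronglyMeasurable ?_
    rw [hAt_def]
    simp only [Acoef]
    refine (Complex.measurable_ofReal.comp hAbarMeas).add ?_
    refine Finset.measurable_sum _ fun j _ => ?_
    exact measurable_const.mul (Complex.measurable_ofReal.comp (hψMeas j))
  set Pt : Eu d × Eu d → ℂ := fun p => ((ψ i p.1 p.2 : ℝ) : ℂ) with hPt_def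
  have hPt_meas : AEStronglyMeasurable Pt (NLaux.pi d Ω δ) :=
    (Complex.measurable_ofReal.comp (hψMeas i)).aestronglyMeasurable
  obtain ⟨K₀, hK₀⟩ := hψBdd i
  set Kp : ℝ := max K₀ 0 with hKp_def
  have hKψ0 : (0:ℝ) ≤ Kp := le_max_right _ _
  have hPt_bd : ∀ᵐ p ∂(NLaux.pi d Ω δ), ‖Pt p‖ ≤ Kp := by
    rw [NLaux.pi_eq]
    filter_upwards [hK₀] with p hp
    rw [hPt_def]
    simp only [Complex.norm_real, Real.norm_eq_abs]
    exact hp.trans (le_max_left _ _)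
  have hA_bd : ∀ ζ ∈ 𝒜, ∀ᵐ p ∂(NLaux.pi d Ω δ), ‖At ζ p‖ ≤ 2 * Rc := by
    intro ζ hζ
    rw [NLaux.pi_eq]
    filter_upwards [hell ζ hζ] with p hp
    exact (hp.2).le
  have hA_re : ∀ ζ ∈ 𝒜, ∀ᵐ p ∂(NLaux.pi d Ω δ), rc / 2 ≤ (At ζ p).re := by
    intro ζ hζ
    rw [NLaux.pi_eq]
    filter_upwards [hell ζ hζ] with p hp
    exact (hp.1).le
  have hc2 : (0:ℝ) < rc / 2 := by linarith
  -- the weak formulation in terms of J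
  have hJeq : ∀ ζ, ζ ∈ 𝒜 → ∀ v, NLMemSC d Ω γ₁ δ v →
      NLaux.J d Ω δ (At ζ) (NLaux.Dm d γ₁ δ (u ζ)) (NLaux.Dm d γ₁ δ v) = F v := by
    intro ζ hζ v hv
    rw [← NLaux.Tform_eq hγ0 hγmono hδ (hAt_meas ζ) (hA_bd ζ hζ) (hu ζ hζ).1 hv]
    exact (hu ζ hζ).2 v hv
  -- uniform energy bound on solutions
  set CU : ℝ := M / (rc/2) with hCU_def
  have hCU0 : (0:ℝ) ≤ CU := div_nonneg hM0 hc2.le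
  have hu_en : ∀ ζ, ζ ∈ 𝒜 → Real.sqrt (NLaux.en d Ω γ₁ δ (u ζ)) ≤ CU := by
    intro ζ hζ
    have hDuζ := NLaux.memS_memLp_Dm hγ0 hγmono hδ (hu ζ hζ).1
    have hco := NLaux.J_coercive (hAt_meas ζ) (hA_bd ζ hζ) (hA_re ζ hζ) hDuζ
    rw [hJeq ζ hζ (u ζ) (hu ζ hζ).1] at hco
    have h3 := hFbd (u ζ) (hu ζ hζ).1
    rw [NLaux.energy_eq hγ0 hγmono hδ (hu ζ hζ).1] at h3
    refine NLaux.sqrt_en_le hc2 (Real.sqrt_nonneg _) hM0 ?_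
    have hsq : Real.sqrt (NLaux.en d Ω γ₁ δ (u ζ)) ^ 2 = NLaux.en d Ω γ₁ δ (u ζ) :=
      Real.sq_sqrt (NLaux.en_nonneg _)
    rw [hsq]
    calc rc / 2 * NLaux.en d Ω γ₁ δ (u ζ) ≤ (F (u ζ)).re := hco
      _ ≤ ‖F (u ζ)‖ := Complex.re_le_norm _
      _ ≤ M * Real.sqrt (NLaux.en d Ω γ₁ δ (u ζ)) := h3
  -- admissible radius
  obtain ⟨r, hr, hrball⟩ := Metric.isOpen_iff.mp h𝒜open ξ hξ
  have hadm : ∀ h : ℂ, ‖h‖ < r → (ξ + h • (Pi.single i 1 : Fin N → ℂ)) ∈ 𝒜 := by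
    intro h hh
    apply hrball
    rw [Metric.mem_ball, dist_eq_norm, add_sub_cancel_left, norm_smul]
    calc ‖h‖ * ‖(Pi.single i 1 : Fin N → ℂ)‖ = ‖h‖ * 1 := by
          rw [Pi.norm_single]; norm_num
      _ < r := by rw [mul_one]; exact hh
  -- the difference quotients
  set E : ℂ → Eu d → ℂ :=
    fun h x => (u (ξ + h • (Pi.single i 1 : Fin N → ℂ)) x - u ξ x) / h with hE_def
  have hE_mem : ∀ h : ℂ, (ξ + h • (Pi.single i 1 : Fin N → ℂ)) ∈ 𝒜 →
      NLMemSC d Ω γ₁ δ (E h) := by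
    intro h hζ
    exact NLaux.memS_div hγ0 hγmono hδ
      (NLaux.memS_sub hγ0 hγmono hδ (hu _ hζ).1 (hu ξ hξ).1) h
  -- the affine dependence of the coefficient
  have hAline : ∀ (c : ℂ) (p : Eu d × Eu d),
      At (ξ + c • (Pi.single i 1 : Fin N → ℂ)) p = At ξ p + c * Pt p := by
    intro c p
    simp only [hAt_def, hPt_def, Acoef, Pi.add_apply, Pi.smul_apply, smul_eq_mul]
    have hsum : ∀ j : Fin N,
        (ξ j + c * (Pi.single i 1 : Fin N → ℂ) j) * (ψ j p.1 p.2 : ℂ)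
        = ξ j * (ψ j p.1 p.2 : ℂ) + (if j = i then c * (ψ j p.1 p.2 : ℂ) else 0) := by
      intro j
      rw [Pi.single_apply]
      by_cases hji : j = i
      · simp only [hji, if_true]
        ring
      · simp only [hji, if_false]
        ring
    rw [Finset.sum_congr rfl fun j _ => hsum j, Finset.sum_add_distrib,
      Finset.sum_ite_eq' Finset.univ i (fun j => c * (ψ j p.1 p.2 : ℂ))]
    simp only [Finset.mem_univ, if_true]
    ring
  -- first-order identity for difference quotients
  have hiden : ∀ h : ℂ, h ≠ 0 → ∀ hζ : (ξ + h • (Pi.single i 1 : Fin N → ℂ)) ∈ 𝒜,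
      ∀ v, NLMemSC d Ω γ₁ δ v →
      NLaux.J d Ω δ (At (ξ + h • (Pi.single i 1 : Fin N → ℂ)))
        (NLaux.Dm d γ₁ δ (E h)) (NLaux.Dm d γ₁ δ v)
        = -(NLaux.J d Ω δ Pt (NLaux.Dm d γ₁ δ (u ξ)) (NLaux.Dm d γ₁ δ v)) := by
    intro h hh hζ v hv
    have hDg := NLaux.memS_memLp_Dm hγ0 hγmono hδ hv
    have hDuζ := NLaux.memS_memLp_Dm hγ0 hγmono hδ (hu _ hζ).1
    have hDuξ := NLaux.memS_memLp_Dm hγ0 hγmono hδ (hu ξ hξ).1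
    have hDmE : NLaux.Dm d γ₁ δ (E h) = fun p =>
        (NLaux.Dm d γ₁ δ (u (ξ + h • (Pi.single i 1 : Fin N → ℂ))) p
          - NLaux.Dm d γ₁ δ (u ξ) p) / h := by
      funext p
      simp only [hE_def, NLaux.Dm]
      ring
    rw [hDmE, NLaux.J_div_left,
      NLaux.J_sub_left (hAt_meas _) (hA_bd _ hζ) hDuζ hDuξ hDg, hJeq _ hζ v hv]
    have hfn : At (ξ + h • (Pi.single i 1 : Fin N → ℂ)) = fun p => At ξ p + h * Pt p := by
      funext p
      exact hAline h p
    rw [hfn, NLaux.J_add_coef (hAt_meas ξ) hPt_meas (hA_bd ξ hξ) hPt_bd hDuξ hDg h,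
      hJeq ξ hξ v hv]
    set X := NLaux.J d Ω δ Pt (NLaux.Dm d γ₁ δ (u ξ)) (NLaux.Dm d γ₁ δ v)
    calc h⁻¹ * (F v - (F v + h * X)) = (h⁻¹ * h) * (-X) := by ring
      _ = -X := by rw [inv_mul_cancel₀ hh, one_mul]
  -- second-order identity
  have hiden2 : ∀ h h' : ℂ, h ≠ 0 → h' ≠ 0 →
      ∀ hζ : (ξ + h • (Pi.single i 1 : Fin N → ℂ)) ∈ 𝒜,
      ∀ hζ' : (ξ + h' • (Pi.single i 1 : Fin N → ℂ)) ∈ 𝒜,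
      ∀ v, NLMemSC d Ω γ₁ δ v →
      NLaux.J d Ω δ (At (ξ + h • (Pi.single i 1 : Fin N → ℂ)))
        (fun p => NLaux.Dm d γ₁ δ (E h) p - NLaux.Dm d γ₁ δ (E h') p) (NLaux.Dm d γ₁ δ v)
        = -((h - h') * NLaux.J d Ω δ Pt (NLaux.Dm d γ₁ δ (E h')) (NLaux.Dm d γ₁ δ v)) := by
    intro h h' hh hh' hζ hζ' v hv
    have hDg := NLaux.memS_memLp_Dm hγ0 hγmono hδ hv
    have hDE := NLaux.memS_memLp_Dm hγ0 hγmono hδ (hE_mem h hζ)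
    have hDE' := NLaux.memS_memLp_Dm hγ0 hγmono hδ (hE_mem h' hζ')
    rw [NLaux.J_sub_left (hAt_meas _) (hA_bd _ hζ) hDE hDE' hDg, hiden h hh hζ v hv]
    have hfn : At (ξ + h • (Pi.single i 1 : Fin N → ℂ))
        = fun p => At (ξ + h' • (Pi.single i 1 : Fin N → ℂ)) p + (h - h') * Pt p := by
      funext p
      rw [hAline h p, hAline h' p]
      ring
    rw [hfn, NLaux.J_add_coef (hAt_meas _) hPt_meas (hA_bd _ hζ') hPt_bd hDE' hDg,
      hiden h' hh' hζ' v hv]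
    ring
  -- uniform bound for the difference quotients
  set C₁ : ℝ := Kp * CU / (rc/2) with hC₁_def
  have hC₁0 : (0:ℝ) ≤ C₁ := by positivity
  have hE_bd : ∀ h : ℂ, h ≠ 0 → ∀ hζ : (ξ + h • (Pi.single i 1 : Fin N → ℂ)) ∈ 𝒜,
      Real.sqrt (NLaux.en d Ω γ₁ δ (E h)) ≤ C₁ := by
    intro h hh hζ
    have hSE := hE_mem h hζ
    have hDE := NLaux.memS_memLp_Dm hγ0 hγmono hδ hSE
    have hco := NLaux.J_coercive (hAt_meas _) (hA_bd _ hζ) (hA_re _ hζ) hDE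
    rw [hiden h hh hζ (E h) hSE] at hco
    have hnorm := NLaux.J_norm_le hPt_meas hKψ0 hPt_bd
      (NLaux.memS_memLp_Dm hγ0 hγmono hδ (hu ξ hξ).1) hDE
    refine NLaux.sqrt_en_le hc2 (Real.sqrt_nonneg _) (by positivity) ?_
    have hsq : Real.sqrt (NLaux.en d Ω γ₁ δ (E h)) ^ 2 = NLaux.en d Ω γ₁ δ (E h) :=
      Real.sq_sqrt (NLaux.en_nonneg _)
    rw [hsq]
    set X := NLaux.J d Ω δ Pt (NLaux.Dm d γ₁ δ (u ξ)) (NLaux.Dm d γ₁ δ (E h))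
    calc rc / 2 * NLaux.en d Ω γ₁ δ (E h) ≤ (-X).re := hco
      _ ≤ ‖X‖ := by
          rw [Complex.neg_re]
          calc -X.re ≤ |X.re| := neg_le_abs _
            _ ≤ ‖X‖ := Complex.abs_re_le_norm _
            _ = ‖X‖ := rfl
      _ ≤ Kp * (Real.sqrt (NLaux.en d Ω γ₁ δ (u ξ))
          * Real.sqrt (NLaux.en d Ω γ₁ δ (E h))) := hnorm
      _ ≤ Kp * (CU * Real.sqrt (NLaux.en d Ω γ₁ δ (E h))) := by
          refine mul_le_mul_of_nonneg_left ?_ hKψ0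
          exact mul_le_mul_of_nonneg_right (hu_en ξ hξ) (Real.sqrt_nonneg _)
      _ = Kp * CU * Real.sqrt (NLaux.en d Ω γ₁ δ (E h)) := by ring
  -- Lipschitz estimate for the difference quotients
  set C₂ : ℝ := Kp * C₁ / (rc/2) with hC₂_def
  have hC₂0 : (0:ℝ) ≤ C₂ := by positivity
  have hlip : ∀ h h' : ℂ, h ≠ 0 → h' ≠ 0 →
      (ξ + h • (Pi.single i 1 : Fin N → ℂ)) ∈ 𝒜 →
      (ξ + h' • (Pi.single i 1 : Fin N → ℂ)) ∈ 𝒜 →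
      Real.sqrt (NLaux.en d Ω γ₁ δ (fun x => E h x - E h' x)) ≤ C₂ * ‖h - h'‖ := by
    intro h h' hh hh' hζ hζ'
    have hSE := hE_mem h hζ
    have hSE' := hE_mem h' hζ'
    have hSd : NLMemSC d Ω γ₁ δ (fun x => E h x - E h' x) :=
      NLaux.memS_sub hγ0 hγmono hδ hSE hSE'
    have hDE := NLaux.memS_memLp_Dm hγ0 hγmono hδ hSE
    have hDE' := NLaux.memS_memLp_Dm hγ0 hγmono hδ hSE'
    have hDd : MemLp (fun p => NLaux.Dm d γ₁ δ (E h) p - NLaux.Dm d γ₁ δ (E h') p) 2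
        (NLaux.pi d Ω δ) := hDE.sub hDE'
    have hco := NLaux.J_coercive (hAt_meas _) (hA_bd _ hζ) (hA_re _ hζ) hDd
    have hDmd : NLaux.Dm d γ₁ δ (fun x => E h x - E h' x)
        = fun p => NLaux.Dm d γ₁ δ (E h) p - NLaux.Dm d γ₁ δ (E h') p := NLaux.Dm_sub _ _
    have hid := hiden2 h h' hh hh' hζ hζ' (fun x => E h x - E h' x) hSd
    rw [hDmd] at hid
    rw [hid] at hco
    have hsd : (∫ p, ‖NLaux.Dm d γ₁ δ (E h) p - NLaux.Dm d γ₁ δ (E h') p‖ ^ 2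
        ∂(NLaux.pi d Ω δ)) = NLaux.en d Ω γ₁ δ (fun x => E h x - E h' x) := by
      rw [NLaux.en, hDmd]
    rw [hsd] at hco
    have hnorm := NLaux.J_norm_le hPt_meas hKψ0 hPt_bd hDE' hDd
    rw [hsd] at hnorm
    have hmain : rc / 2 * Real.sqrt (NLaux.en d Ω γ₁ δ (fun x => E h x - E h' x)) ^ 2
        ≤ (‖h - h'‖ * (Kp * C₁)) * Real.sqrt (NLaux.en d Ω γ₁ δ (fun x => E h x - E h' x)) := by
      rw [Real.sq_sqrt (NLaux.en_nonneg _)]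
      set X := NLaux.J d Ω δ Pt (NLaux.Dm d γ₁ δ (E h'))
        (fun p => NLaux.Dm d γ₁ δ (E h) p - NLaux.Dm d γ₁ δ (E h') p) with hX_def
      calc rc / 2 * NLaux.en d Ω γ₁ δ (fun x => E h x - E h' x)
          ≤ (-((h - h') * X)).re := hco
        _ ≤ ‖(h - h') * X‖ := by
            rw [Complex.neg_re]
            calc -((h - h') * X).re ≤ |((h - h') * X).re| := neg_le_abs _
              _ ≤ ‖(h - h') * X‖ := Complex.abs_re_le_norm _
              _ = ‖(h - h') * X‖ := rfl
        _ = ‖h - h'‖ * ‖X‖ := norm_mul _ _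
        _ ≤ ‖h - h'‖ * (Kp * (Real.sqrt (NLaux.en d Ω γ₁ δ (E h'))
            * Real.sqrt (NLaux.en d Ω γ₁ δ (fun x => E h x - E h' x)))) :=
            mul_le_mul_of_nonneg_left hnorm (norm_nonneg _)
        _ ≤ ‖h - h'‖ * (Kp * (C₁
            * Real.sqrt (NLaux.en d Ω γ₁ δ (fun x => E h x - E h' x)))) := by
            refine mul_le_mul_of_nonneg_left (mul_le_mul_of_nonneg_left
              (mul_le_mul_of_nonneg_right (hE_bd h' hh' hζ') (Real.sqrt_nonneg _)) hKψ0)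
              (norm_nonneg _)
        _ = (‖h - h'‖ * (Kp * C₁))
            * Real.sqrt (NLaux.en d Ω γ₁ δ (fun x => E h x - E h' x)) := by ring
    have := NLaux.sqrt_en_le hc2 (Real.sqrt_nonneg _) (by positivity) hmain
    refine this.trans_eq ?_
    rw [hC₂_def]
    ring
  -- the approximating sequence
  have hrhalf : ∀ n : ℕ, (0:ℝ) < r/2 * (1/2)^n := fun n => by positivity
  have hhs_lt : ∀ n : ℕ, ‖((r/2 * (1/2)^n : ℝ) : ℂ)‖ < r := by
    intro n
    rw [Complex.norm_real, Real.norm_eq_abs, abs_of_pos (hrhalf n)]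
    have h1 : (1/2:ℝ)^n ≤ 1 := pow_le_one₀ (by norm_num) (by norm_num)
    nlinarith
  have hhs_ne : ∀ n : ℕ, ((r/2 * (1/2)^n : ℝ) : ℂ) ≠ 0 := fun n =>
    Complex.ofReal_ne_zero.mpr (hrhalf n).ne'
  have hhs_mem : ∀ n : ℕ, (ξ + ((r/2 * (1/2)^n : ℝ) : ℂ)
      • (Pi.single i 1 : Fin N → ℂ)) ∈ 𝒜 := fun n => hadm _ (hhs_lt n)
  have hb_tend : Tendsto (fun n : ℕ => C₂ * (r * (1/2)^n)) atTop (nhds 0) := by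
    have h1 : Tendsto (fun n : ℕ => (1/2:ℝ)^n) atTop (nhds 0) :=
      tendsto_pow_atTop_nhds_zero_of_lt_one (by norm_num) (by norm_num)
    have h2 := h1.const_mul (C₂ * r)
    rw [mul_zero] at h2
    refine h2.congr fun n => ?_
    ring
  have hcau : ∀ N' n m : ℕ, N' ≤ n → N' ≤ m →
      Real.sqrt (NLaux.en d Ω γ₁ δ
        (fun x => E ((r/2 * (1/2)^n : ℝ) : ℂ) x - E ((r/2 * (1/2)^m : ℝ) : ℂ) x))
        ≤ C₂ * (r * (1/2)^N') := by
    intro N' n m hn hm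
    refine (hlip _ _ (hhs_ne n) (hhs_ne m) (hhs_mem n) (hhs_mem m)).trans ?_
    refine mul_le_mul_of_nonneg_left ?_ hC₂0
    have hmono : ∀ k : ℕ, N' ≤ k → (1/2:ℝ)^k ≤ (1/2)^N' := fun k hk =>
      pow_le_pow_of_le_one (by norm_num) (by norm_num) hk
    calc ‖((r/2 * (1/2)^n : ℝ) : ℂ) - ((r/2 * (1/2)^m : ℝ) : ℂ)‖
        ≤ ‖((r/2 * (1/2)^n : ℝ) : ℂ)‖ + ‖((r/2 * (1/2)^m : ℝ) : ℂ)‖ := norm_sub_le _ _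
      _ = r/2 * (1/2)^n + r/2 * (1/2)^m := by
          rw [Complex.norm_real, Complex.norm_real, Real.norm_eq_abs, Real.norm_eq_abs,
            abs_of_pos (hrhalf n), abs_of_pos (hrhalf m)]
      _ ≤ r/2 * (1/2)^N' + r/2 * (1/2)^N' := by
          have hr2 : (0:ℝ) ≤ r/2 := by positivity
          exact add_le_add (mul_le_mul_of_nonneg_left (hmono n hn) hr2)
            (mul_le_mul_of_nonneg_left (hmono m hm) hr2)
      _ = r * (1/2)^N' := by ring
  obtain ⟨w, hwS, hwt⟩ := NLaux.limit_exists hΩopen hγ0 hγmono hδ hCPt hCP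
    (fun n => hE_mem ((r/2 * (1/2)^n : ℝ) : ℂ) (hhs_mem n)) hb_tend hcau
  refine ⟨w, hwS, ?_⟩
  -- eventual facts on the punctured filter
  have hev1 : ∀ᶠ hz : ℂ in nhdsWithin 0 {(0:ℂ)}ᶜ, hz ≠ 0 := by
    have := eventually_mem_nhdsWithin (a := (0:ℂ)) (s := ({(0:ℂ)}ᶜ : Set ℂ))
    exact this.mono fun hz hm => by simpa using hm
  have hev2 : ∀ᶠ hz : ℂ in nhdsWithin 0 {(0:ℂ)}ᶜ, ‖hz‖ < r := by
    refine Filter.Eventually.filter_mono nhdsWithin_le_nhds ?_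
    refine Filter.eventually_of_mem (Metric.ball_mem_nhds (0:ℂ) hr) fun y hy => ?_
    simpa [dist_eq_norm] using hy
  -- the pointwise bound
  have hbound : ∀ hz : ℂ, hz ≠ 0 → ‖hz‖ < r →
      Real.sqrt (NLenergySqC d Ω γ₁ δ (fun x => E hz x - w x)) ≤ C₂ * ‖hz‖ := by
    intro hz hne hlt
    have hζz := hadm hz hlt
    have hmemdiff : NLMemSC d Ω γ₁ δ (fun x => E hz x - w x) :=
      NLaux.memS_sub hγ0 hγmono hδ (hE_mem hz hζz) hwS
    rw [NLaux.energy_eq hγ0 hγmono hδ hmemdiff]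
    have hstep : ∀ n : ℕ, Real.sqrt (NLaux.en d Ω γ₁ δ (fun x => E hz x - w x))
        ≤ C₂ * (‖hz‖ + r/2 * (1/2)^n)
          + Real.sqrt (NLaux.en d Ω γ₁ δ
              (fun x => E ((r/2 * (1/2)^n : ℝ) : ℂ) x - w x)) := by
      intro n
      have htri := NLaux.sqrt_en_triangle hγ0 hγmono hδ
        (NLaux.memS_memLp_Dm hγ0 hγmono hδ (hE_mem hz hζz))
        (NLaux.memS_memLp_Dm hγ0 hγmono hδ (hE_mem _ (hhs_mem n)))
        (NLaux.memS_memLp_Dm hγ0 hγmono hδ hwS)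
      refine htri.trans (add_le_add ?_ le_rfl)
      refine (hlip hz _ hne (hhs_ne n) hζz (hhs_mem n)).trans ?_
      refine mul_le_mul_of_nonneg_left ?_ hC₂0
      calc ‖hz - ((r/2 * (1/2)^n : ℝ) : ℂ)‖
          ≤ ‖hz‖ + ‖((r/2 * (1/2)^n : ℝ) : ℂ)‖ := norm_sub_le _ _
        _ = ‖hz‖ + r/2 * (1/2)^n := by
            rw [Complex.norm_real, Real.norm_eq_abs, abs_of_pos (hrhalf n)]
    have hrhs : Tendsto (fun n : ℕ => C₂ * (‖hz‖ + r/2 * (1/2)^n)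
        + Real.sqrt (NLaux.en d Ω γ₁ δ
            (fun x => E ((r/2 * (1/2)^n : ℝ) : ℂ) x - w x)))
        atTop (nhds (C₂ * ‖hz‖)) := by
      have h1 : Tendsto (fun n : ℕ => (1/2:ℝ)^n) atTop (nhds 0) :=
        tendsto_pow_atTop_nhds_zero_of_lt_one (by norm_num) (by norm_num)
      have h2 : Tendsto (fun n : ℕ => ‖hz‖ + r/2 * (1/2)^n) atTop (nhds (‖hz‖ + 0)) := by
        refine tendsto_const_nhds.add ?_
        have := h1.const_mul (r/2)
        rw [mul_zero] at this
        exact this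
      rw [add_zero] at h2
      have h3 := (h2.const_mul C₂).add hwt
      rw [add_zero] at h3
      exact h3
    exact ge_of_tendsto hrhs (Filter.Eventually.of_forall hstep)
  -- squeeze
  refine squeeze_zero' (g := fun hz : ℂ => C₂ * ‖hz‖) ?_ ?_ ?_
  · exact Filter.Eventually.of_forall fun hz => Real.sqrt_nonneg _
  · filter_upwards [hev1, hev2] with hz h1 h2
    exact hbound hz h1 h2
  · have hcont : Tendsto (fun hz : ℂ => C₂ * ‖hz‖) (nhds 0) (nhds (C₂ * ‖(0:ℂ)‖)) :=
      (continuous_const.mul continuous_norm).tendsto 0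
    rw [norm_zero, mul_zero] at hcont
    exact hcont.mono_left nhdsWithin_le_nhds
end
end
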